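/- arXiv:1904.10602 — 2 statements merged into one kernel-verified Lean document; each statement's English description precedes it below -/
import Mathlib

section
/- Let μ ⊆ λ be partitions with ℓ = ℓ(λ) ≤ n. Then the number of semistandard n-content tableaux of shape λ/μ satisfies |SSCT_n(λ/μ)| = det( binom(λ_i + n − i, μ_j + n − j) )_{1 ≤ i,j ≤ ℓ}. -/
open Finset MvPolynomial

/-- The cells `(i,j)` (1-indexed) of the skew shape `λ/μ`, where `l i = λ_i`, `m i = μ_i`,
and all rows with cells have index at most `L`. -/
def skewCells (l m : ℕ → ℕ) (L : ℕ) : Finset (ℕ × ℕ) :=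
  (Finset.Icc 1 L ×ˢ Finset.Icc 1 (l 1)).filter fun c => m c.1 < c.2 ∧ c.2 ≤ l c.1

/-- Bounded lecture hall tableaux `LHT_{n,m}` on a given cell set (tableaux are normalized
to be `0` outside the cells).  The lecture hall inequalities
`T(i,j)/(n+j-i) ≥ T(i,j+1)/(n+j+1-i)` and `T(i,j)/(n+j-i) > T(i+1,j)/(n+j-i-1)`
are written in cross-multiplied form. -/
def LHTb (n m : ℕ) (cells : Finset (ℕ × ℕ)) : Set ((ℕ × ℕ) → ℕ) :=
  {T | (∀ c, c ∉ cells → T c = 0) ∧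
    (∀ i j, (i, j) ∈ cells → (i, j + 1) ∈ cells →
      T (i, j + 1) * (n + j - i) ≤ T (i, j) * (n + j + 1 - i)) ∧
    (∀ i j, (i, j) ∈ cells → (i + 1, j) ∈ cells →
      T (i + 1, j) * (n + j - i) < T (i, j) * (n + j - i - 1)) ∧
    (∀ c ∈ cells, T c / (n + c.2 - c.1) < m)}

/-- Semistandard `n`-content tableaux on a given cell set: entries weakly decrease along
rows, strictly decrease down columns, and satisfy `T(i,j) < n + j - i`. -/
def SSCTset (n : ℕ) (cells : Finset (ℕ × ℕ)) : Set ((ℕ × ℕ) → ℕ) :=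
  {T | (∀ c, c ∉ cells → T c = 0) ∧
    (∀ i j, (i, j) ∈ cells → (i, j + 1) ∈ cells → T (i, j + 1) ≤ T (i, j)) ∧
    (∀ i j, (i, j) ∈ cells → (i + 1, j) ∈ cells → T (i + 1, j) < T (i, j)) ∧
    (∀ c ∈ cells, T c < n + c.2 - c.1)}

/-- Semistandard Young tableaux with entries in `{0,…,n-1}` on a given cell set. -/
def SSYTset (n : ℕ) (cells : Finset (ℕ × ℕ)) : Set ((ℕ × ℕ) → ℕ) :=
  {T | (∀ c, c ∉ cells → T c = 0) ∧
    (∀ i j, (i, j) ∈ cells → (i, j + 1) ∈ cells → T (i, j + 1) ≤ T (i, j)) ∧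
    (∀ i j, (i, j) ∈ cells → (i + 1, j) ∈ cells → T (i + 1, j) < T (i, j)) ∧
    (∀ c ∈ cells, T c < n)}

/-- Standard Young tableaux on a given cell set: each of `1,…,N` (where `N` is the number
of cells) appears exactly once, and entries decrease along rows and down columns. -/
def SYTset (cells : Finset (ℕ × ℕ)) : Set ((ℕ × ℕ) → ℕ) :=
  {T | (∀ c, c ∉ cells → T c = 0) ∧
    (∀ k, 1 ≤ k → k ≤ cells.card → ∃! c, c ∈ cells ∧ T c = k) ∧
    (∀ i j, (i, j) ∈ cells → (i, j + 1) ∈ cells → T (i, j + 1) < T (i, j)) ∧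
    (∀ i j, (i, j) ∈ cells → (i + 1, j) ∈ cells → T (i + 1, j) < T (i, j))}

/-- The generating polynomial `L^n(x) = Σ_L Π x_{⌊L(i,j)/(n+j-i)⌋}` of bounded
lecture hall tableaux. -/
noncomputable def lhtGF {R : Type*} [CommSemiring R] (n m : ℕ) (cells : Finset (ℕ × ℕ))
    (x : ℕ → R) : R :=
  ∑ᶠ T ∈ LHTb n m cells, ∏ c ∈ cells, x (T c / (n + c.2 - c.1))

/-- The generating polynomial `S^n(y) = Σ_S Π y_{S(i,j)}` of semistandard `n`-content
tableaux. -/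
noncomputable def ssctGF {R : Type*} [CommSemiring R] (n : ℕ) (cells : Finset (ℕ × ℕ))
    (y : ℕ → R) : R :=
  ∑ᶠ T ∈ SSCTset n cells, ∏ c ∈ cells, y (T c)

/-- The Schur polynomial `s_λ(z_1,…,z_n) = Σ_{T ∈ SSYT_n(λ)} Π z_{T(i,j)+1}`. -/
noncomputable def schurGF {R : Type*} [CommSemiring R] (n L : ℕ) (l : ℕ → ℕ) (z : ℕ → R) : R :=
  ∑ᶠ T ∈ SSYTset n (skewCells l (fun _ => 0) L),
    ∏ c ∈ skewCells l (fun _ => 0) L, z (T c + 1)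

/-- The one-row partition `(k)`. -/
def rowShape (k : ℕ) : ℕ → ℕ := fun i => if i = 1 then k else 0

/-- `L^N_{(k)}(x)` for an integer `k`, equal to `0` when `k < 0`. -/
noncomputable def lhtRowGF {R : Type*} [CommSemiring R] (N m : ℕ) (k : ℤ) (x : ℕ → R) : R :=
  if k < 0 then 0 else lhtGF N m (skewCells (rowShape k.toNat) (fun _ => 0) 1) x

/-- `S^N_{(k)}(y)` for an integer `k`, equal to `0` when `k < 0`. -/
noncomputable def ssctRowGF {R : Type*} [CommSemiring R] (N : ℕ) (k : ℤ) (y : ℕ → R) : R :=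
  if k < 0 then 0 else ssctGF N (skewCells (rowShape k.toNat) (fun _ => 0) 1) y

/-- The complete homogeneous polynomial `h_k(z_0,…,z_a)`. -/
noncomputable def hpoly {R : Type*} [CommSemiring R] (k a : ℕ) (z : ℕ → R) : R :=
  ∑ s ∈ (Finset.range (a + 1)).sym k, (Multiset.map z s.1).prod

/-- `h_k(z_0,…,z_a)` for an integer `k`, equal to `0` when `k < 0`. -/
noncomputable def hpolyZ {R : Type*} [CommSemiring R] (k : ℤ) (a : ℕ) (z : ℕ → R) : R :=
  if k < 0 then 0 else hpoly k.toNat a z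

/-- Partitions `p` with `lo ⊆ p ⊆ hi`, of length at most `L`, normalized so that
`p 0 = 0` (indices `≥ 1` carry the parts). -/
def PartitionsBetween (lo hi : ℕ → ℕ) (L : ℕ) : Set (ℕ → ℕ) :=
  {p | p 0 = 0 ∧ (∀ i j, 1 ≤ i → i ≤ j → p j ≤ p i) ∧ (∀ i, L < i → p i = 0) ∧
    ∀ i, 1 ≤ i → lo i ≤ p i ∧ p i ≤ hi i}

/-- Extended `n`-lecture hall tableaux with marks in `{0,…,m-1} ∪ {∞}`; a cell carries a
pair (value, mark), where the mark `m` encodes `∞`. -/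
def LHTstar (n m : ℕ) (cells : Finset (ℕ × ℕ)) : Set ((ℕ × ℕ) → ℕ × ℕ) :=
  {T | (∀ c, c ∉ cells → T c = (0, 0)) ∧
    (∀ c ∈ cells, (T c).1 < n + c.2 - c.1 ∧ (T c).2 ≤ m) ∧
    (∀ i j, (i, j) ∈ cells → (i, j + 1) ∈ cells →
      (T (i, j + 1)).2 < (T (i, j)).2 ∨
        ((T (i, j + 1)).2 = (T (i, j)).2 ∧ (T (i, j + 1)).1 ≤ (T (i, j)).1)) ∧
    (∀ i j, (i, j) ∈ cells → (i + 1, j) ∈ cells →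
      (T (i + 1, j)).2 < (T (i, j)).2 ∨
        ((T (i + 1, j)).2 = (T (i, j)).2 ∧ (T (i + 1, j)).1 < (T (i, j)).1))}

/-- Marked semistandard `n`-content tableaux with marks in `{0,…,m-1} ∪ {∞}` (the mark `m`
encodes `∞`): the values form a semistandard `n`-content tableau and marks are arbitrary. -/
def SSCTstar (n m : ℕ) (cells : Finset (ℕ × ℕ)) : Set ((ℕ × ℕ) → ℕ × ℕ) :=
  {T | (∀ c, c ∉ cells → T c = (0, 0)) ∧
    (∀ c ∈ cells, (T c).1 < n + c.2 - c.1 ∧ (T c).2 ≤ m) ∧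
    (∀ i j, (i, j) ∈ cells → (i, j + 1) ∈ cells → (T (i, j + 1)).1 ≤ (T (i, j)).1) ∧
    (∀ i j, (i, j) ∈ cells → (i + 1, j) ∈ cells → (T (i + 1, j)).1 < (T (i, j)).1)}

/-- `r^{(n)}_μ`: the number of fillings of `μ` with positive integers, strictly decreasing
along rows, weakly decreasing down columns, entries in row `i` lying in `{1,…,n-i}`. -/
noncomputable def rcount (n L : ℕ) (mu : ℕ → ℕ) : ℕ :=
  Nat.card {T : (ℕ × ℕ) → ℕ |
    (∀ c, c ∉ skewCells mu (fun _ => 0) L → T c = 0) ∧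
    (∀ c ∈ skewCells mu (fun _ => 0) L, 1 ≤ T c ∧ T c ≤ n - c.1) ∧
    (∀ i j, (i, j) ∈ skewCells mu (fun _ => 0) L →
      (i, j + 1) ∈ skewCells mu (fun _ => 0) L → T (i, j + 1) < T (i, j)) ∧
    (∀ i j, (i, j) ∈ skewCells mu (fun _ => 0) L →
      (i + 1, j) ∈ skewCells mu (fun _ => 0) L → T (i + 1, j) ≤ T (i, j))}

namespace SSCTaux

/-- The `k`-th smallest element of a finite set of naturals (0 if out of range). -/
noncomputable def nth (D : Finset ℕ) (k : ℕ) : ℕ :=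
  if h : k < D.card then D.orderEmbOfFin rfl ⟨k, h⟩ else 0

lemma nth_mem {D : Finset ℕ} {k : ℕ} (h : k < D.card) : nth D k ∈ D := by
  rw [nth, dif_pos h]; exact Finset.orderEmbOfFin_mem D rfl _

lemma nth_lt_nth {D : Finset ℕ} {k k' : ℕ} (h : k < k') (h' : k' < D.card) :
    nth D k < nth D k' := by
  rw [nth, nth, dif_pos h', dif_pos (h.trans h')]
  exact (D.orderEmbOfFin rfl).strictMono (show (⟨k, h.trans h'⟩ : Fin D.card) < ⟨k', h'⟩ from h)

lemma nth_le_nth {D : Finset ℕ} {k k' : ℕ} (h : k ≤ k') (h' : k' < D.card) :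
    nth D k ≤ nth D k' := by
  rcases eq_or_lt_of_le h with rfl | h
  · exact le_rfl
  · exact (nth_lt_nth h h').le

lemma exists_nth_eq {D : Finset ℕ} {d : ℕ} (hd : d ∈ D) : ∃ k < D.card, nth D k = d := by
  have : d ∈ Set.range (D.orderEmbOfFin rfl) := by
    rw [Finset.range_orderEmbOfFin]; exact hd
  obtain ⟨k, hk⟩ := this
  exact ⟨k.1, k.2, by rw [nth, dif_pos k.2]; simpa using hk⟩

lemma nth_lt_iff {D : Finset ℕ} {k x : ℕ} (h : k < D.card) :
    nth D k < x ↔ k < (D ∩ range x).card := by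
  constructor
  · intro hx
    have : (range (k + 1)).card ≤ (D ∩ range x).card := by
      apply Finset.card_le_card_of_injOn (fun t => nth D t)
      · intro t ht
        rw [mem_coe, mem_range] at ht
        have htc : t < D.card := by omega
        rw [mem_coe, mem_inter, mem_range]
        exact ⟨nth_mem htc, lt_of_le_of_lt (nth_le_nth (by omega) h) hx⟩
      · intro a ha b hb hab
        rw [mem_coe, mem_range] at ha hb
        by_contra hne
        rcases Nat.lt_or_ge a b with hlt | hge
        · exact absurd hab (nth_lt_nth hlt (by omega)).ne
        · exact absurd hab.symm (nth_lt_nth (by omega) (by omega)).ne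
    simpa using this
  · intro hcard
    by_contra hx
    push_neg at hx
    have hsub : D ∩ range x ⊆ (range k).image (nth D) := by
      intro d hd
      rw [mem_inter, mem_range] at hd
      obtain ⟨k', hk', hke⟩ := exists_nth_eq hd.1
      rcases Nat.lt_or_ge k' k with hlt | hge
      · exact mem_image.2 ⟨k', mem_range.2 hlt, hke⟩
      · exact absurd (hke ▸ lt_of_lt_of_le hd.2 hx) (not_lt.2 (nth_le_nth hge hk'))
    have := (Finset.card_le_card hsub).trans (Finset.card_image_le)
    simp only [card_range] at this
    omega

lemma le_nth {D : Finset ℕ} {k : ℕ} (h : k < D.card) : k ≤ nth D k := by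
  induction k with
  | zero => exact Nat.zero_le _
  | succ m ih =>
    have h1 : nth D m < nth D (m + 1) := nth_lt_nth (by omega) (by omega)
    have h2 := ih (by omega)
    omega

lemma nth_add_le {D : Finset ℕ} {k t : ℕ} (h : k + t < D.card) :
    nth D k + t ≤ nth D (k + t) := by
  induction t with
  | zero => simp
  | succ m ih =>
    have h1 := ih (by omega)
    have h2 : nth D (k + m) < nth D (k + (m+1)) := nth_lt_nth (by omega) (by omega)
    omega

lemma nth_upper {D : Finset ℕ} {a k : ℕ} (hD : D ⊆ range a) (h : k < D.card) :
    nth D k + D.card ≤ a + k := by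
  have hc := Finset.card_le_card hD
  rw [card_range] at hc
  have h1 : nth D k + (D.card - 1 - k) ≤ nth D (k + (D.card - 1 - k)) :=
    nth_add_le (by omega)
  have h2 : nth D (k + (D.card - 1 - k)) < a := by
    have := nth_mem (show k + (D.card - 1 - k) < D.card by omega)
    have := hD this
    simpa using this
  omega

lemma nth_image {m : ℕ} {w : ℕ → ℕ}
    (hw : ∀ k1 k2, k1 < k2 → k2 < m → w k1 < w k2) {k : ℕ} (hk : k < m) :
    nth ((range m).image w) k = w k := by
  have hinj : Set.InjOn w (range m) := by
    intro a ha b hb hab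
    rw [mem_coe, mem_range] at ha hb
    by_contra hne
    rcases Nat.lt_or_ge a b with hlt | hge
    · exact absurd hab (hw a b hlt hb).ne
    · exact absurd hab.symm (hw b a (by omega) ha).ne
  have hcard : ((range m).image w).card = m := by
    rw [Finset.card_image_of_injOn hinj, card_range]
  have hkc : k < ((range m).image w).card := by rw [hcard]; exact hk
  have hle : nth ((range m).image w) k ≤ w k := by
    have : nth ((range m).image w) k < w k + 1 := by
      rw [nth_lt_iff hkc]
      have : (range (k+1)).card ≤ (((range m).image w) ∩ range (w k + 1)).card := by
        apply Finset.card_le_card_of_injOn w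
        · intro t ht
          rw [mem_coe, mem_range] at ht
          rw [mem_coe, mem_inter, mem_range]
          constructor
          · exact mem_image.2 ⟨t, mem_range.2 (by omega), rfl⟩
          · rcases Nat.lt_or_ge t k with hlt | hge
            · exact lt_of_lt_of_le (hw t k hlt hk) (by omega)
            · have ht' : t = k := by omega
              rw [ht']
              omega
        · intro a ha b hb hab
          rw [mem_coe, mem_range] at ha hb
          exact hinj (Finset.mem_coe.mpr (mem_range.mpr (by omega)))
            (Finset.mem_coe.mpr (mem_range.mpr (by omega))) hab
      simpa using this
    omega
  have hge : w k ≤ nth ((range m).image w) k := by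
    by_contra hx
    push_neg at hx
    have := (nth_lt_iff hkc).1 hx
    have hsub : ((range m).image w) ∩ range (w k) ⊆ (range k).image w := by
      intro d hd
      rw [mem_inter, mem_range] at hd
      obtain ⟨t, ht, rfl⟩ := mem_image.1 hd.1
      rw [mem_range] at ht
      rcases Nat.lt_or_ge t k with hlt | hge'
      · exact mem_image.2 ⟨t, mem_range.2 hlt, rfl⟩
      · rcases Nat.eq_or_lt_of_le hge' with rfl | h'
        · omega
        · exact absurd hd.2 (not_lt.2 (hw k t h' ht).le)
    have := (Finset.card_le_card hsub).trans Finset.card_image_le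
    simp only [card_range] at this
    omega
  omega

/-- Discrete intermediate value: if an integer sequence starts positive, ends nonpositive,
and decreases by at most 1 each step, it hits 0. -/
lemma discrete_ivt (f : ℕ → ℤ) (N : ℕ) (h0 : 0 < f 0) (hN : f N ≤ 0)
    (hstep : ∀ x, f x ≤ f (x + 1) + 1) : ∃ x ≤ N, f x = 0 := by
  classical
  have hex : ∃ x, f x ≤ 0 := ⟨N, hN⟩
  have hk0 : f (Nat.find hex) ≤ 0 := Nat.find_spec hex
  have hkN : Nat.find hex ≤ N := Nat.find_min' hex hN
  have hkpos : Nat.find hex ≠ 0 := by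
    intro h; rw [h] at hk0; omega
  have hprev : ¬ f (Nat.find hex - 1) ≤ 0 := Nat.find_min hex (by omega)
  have hs := hstep (Nat.find hex - 1)
  rw [show Nat.find hex - 1 + 1 = Nat.find hex by omega] at hs
  exact ⟨Nat.find hex, hkN, by omega⟩



lemma cnt_le_card (S : Finset ℕ) (x : ℕ) : (S ∩ range x).card ≤ S.card :=
  Finset.card_le_card (inter_subset_left)

lemma cnt_mono (S : Finset ℕ) {x y : ℕ} (h : x ≤ y) :
    (S ∩ range x).card ≤ (S ∩ range y).card :=
  Finset.card_le_card (inter_subset_inter le_rfl (Finset.range_subset_range.2 h))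

lemma cnt_succ_le (S : Finset ℕ) (x : ℕ) :
    (S ∩ range (x + 1)).card ≤ (S ∩ range x).card + 1 := by
  have : S ∩ range (x + 1) ⊆ insert x (S ∩ range x) := by
    intro d hd
    rw [mem_inter, mem_range] at hd
    rcases Nat.lt_or_ge d x with h | h
    · exact mem_insert_of_mem (mem_inter.2 ⟨hd.1, mem_range.2 h⟩)
    · have : d = x := by omega
      exact this ▸ mem_insert_self _ _
  exact (Finset.card_le_card this).trans (Finset.card_insert_le _ _)

lemma cnt_eq_card {S : Finset ℕ} {a x : ℕ} (hS : S ⊆ range a) (h : a ≤ x) :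
    (S ∩ range x).card = S.card := by
  congr 1
  rw [inter_eq_left]
  exact hS.trans (Finset.range_subset_range.2 h)

lemma cnt_compl {S : Finset ℕ} {a x : ℕ} (hS : S ⊆ range a) (hx : x ≤ a) :
    ((range a \ S) ∩ range x).card + (S ∩ range x).card = x := by
  have h1 : (range a \ S) ∩ range x = range x \ (S ∩ range x) := by
    ext d
    simp only [mem_inter, mem_sdiff, mem_range]
    constructor
    · rintro ⟨⟨hda, hdS⟩, hdx⟩; exact ⟨hdx, fun h => hdS h.1⟩
    · rintro ⟨hdx, hdS⟩
      exact ⟨⟨by omega, fun h => hdS ⟨h, hdx⟩⟩, hdx⟩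
  rw [h1, Finset.card_sdiff_of_subset (inter_subset_right), card_range]
  have := cnt_le_card (S := S ∩ range x) x
  have h2 : (S ∩ range x).card ≤ x := by
    have : S ∩ range x ⊆ range x := inter_subset_right
    have := Finset.card_le_card this
    simpa using this
  omega

lemma count_iff_elem {X Y : Finset ℕ} {a c : ℕ} (hY : Y ⊆ range a) :
    (∀ x ≤ a, (Y ∩ range x).card ≤ (X ∩ range x).card + c) ↔
    (∀ k, k + c < Y.card → k < X.card ∧ nth X k ≤ nth Y (k + c)) := by
  constructor
  · intro hc k hk
    have hmem := nth_mem hk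
    have hxa : nth Y (k + c) + 1 ≤ a := by
      have := hY hmem; rw [mem_range] at this; omega
    have h1 : k + c < (Y ∩ range (nth Y (k + c) + 1)).card :=
      (nth_lt_iff hk).1 (by omega)
    have h2 := hc _ hxa
    have h3 : k < (X ∩ range (nth Y (k + c) + 1)).card := by omega
    have h4 : k < X.card := lt_of_lt_of_le h3 (cnt_le_card _ _)
    exact ⟨h4, by have := (nth_lt_iff h4).2 h3; omega⟩
  · intro he x _
    set t := (Y ∩ range x).card with ht
    rcases Nat.lt_or_ge t (c + 1) with h | h
    · omega
    · have htY : t ≤ Y.card := cnt_le_card _ _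
      have hk : (t - 1 - c) + c < Y.card := by omega
      obtain ⟨hX, hle⟩ := he _ hk
      have h5 : nth Y ((t - 1 - c) + c) < x := by
        rw [nth_lt_iff (by omega)]; omega
      have h6 : nth X (t - 1 - c) < x := by omega
      have := (nth_lt_iff hX).1 h6
      omega



open scoped Classical

variable {L : ℕ}

/-- Path height: the height at abscissa `x` of the lattice path encoded by `S p`. -/
noncomputable def hgt (S : Fin L → Finset ℕ) (p : Fin L) (x : ℕ) : ℤ :=
  ((S p ∩ range x).card : ℤ) - ((S p).card : ℤ)

lemma hgt_zero (S : Fin L → Finset ℕ) (p : Fin L) : hgt S p 0 = -((S p).card : ℤ) := by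
  simp [hgt]

lemma hgt_step_le (S : Fin L → Finset ℕ) (p : Fin L) (x : ℕ) :
    hgt S p x ≤ hgt S p (x + 1) := by
  have := cnt_mono (S p) (show x ≤ x + 1 by omega)
  simp only [hgt]
  omega

lemma hgt_step_ge (S : Fin L → Finset ℕ) (p : Fin L) (x : ℕ) :
    hgt S p (x + 1) ≤ hgt S p x + 1 := by
  have := cnt_succ_le (S p) x
  simp only [hgt]
  omega

lemma hgt_full {S : Fin L → Finset ℕ} {p : Fin L} {a : ℕ} (h : S p ⊆ range a) {x : ℕ}
    (hx : a ≤ x) : hgt S p x = 0 := by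
  simp [hgt, cnt_eq_card h hx]

lemma hgt_nonpos (S : Fin L → Finset ℕ) (p : Fin L) (x : ℕ) : hgt S p x ≤ 0 := by
  have := cnt_le_card (S p) x
  simp only [hgt]
  omega

/-- Two of the paths meet at abscissa `x`. -/
def Meets (A : Fin L → ℕ) (S : Fin L → Finset ℕ) (x : ℕ) : Prop :=
  ∃ p q : Fin L, p < q ∧ x ≤ A q ∧ hgt S p x = hgt S q x

def Cross (A : Fin L → ℕ) (S : Fin L → Finset ℕ) : Prop := ∃ x, Meets A S x

/-- If two paths start strictly ordered and never meet up to `N`, they stay strictly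
ordered. -/
lemma lt_of_ne_hgt {S : Fin L → Finset ℕ} {p q : Fin L} {N : ℕ}
    (h0 : hgt S p 0 < hgt S q 0)
    (hne : ∀ x ≤ N, hgt S p x ≠ hgt S q x) :
    ∀ x ≤ N, hgt S p x < hgt S q x := by
  intro x hx
  by_contra hcon
  push_neg at hcon
  obtain ⟨y, hy, hzero⟩ := discrete_ivt (fun t => hgt S q t - hgt S p t) x
    (show (0:ℤ) < hgt S q 0 - hgt S p 0 by omega)
    (show hgt S q x - hgt S p x ≤ 0 by omega)
    (fun t => show hgt S q t - hgt S p t ≤ hgt S q (t+1) - hgt S p (t+1) + 1 by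
      have h1 := hgt_step_le S q t; have h2 := hgt_step_ge S p t; omega)
  have hz : hgt S q y - hgt S p y = 0 := hzero
  exact hne y (hy.trans hx) (by omega)

/-- A strictly monotone self-map of `Fin L` is bounded below by the identity. -/
lemma le_of_strictMono (f : Fin L → Fin L) (hf : StrictMono f) (p : Fin L) :
    p.1 ≤ (f p).1 := by
  suffices h : ∀ m, ∀ p : Fin L, p.1 = m → p.1 ≤ (f p).1 from h p.1 p rfl
  intro m
  induction m with
  | zero => intro p hp; omega
  | succ k ih =>
    intro p hp
    have hk : k < L := by omega
    have h1 : (⟨k, hk⟩ : Fin L) < p := by rw [Fin.lt_def]; simp; omega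
    have h2 := hf h1
    have h3 := ih ⟨k, hk⟩ rfl
    rw [Fin.lt_def] at h2
    simp at h3
    omega

/-- A strictly monotone permutation of `Fin L` is the identity. -/
lemma strictMono_perm_eq_one (σ : Equiv.Perm (Fin L)) (hσ : StrictMono σ) : σ = 1 := by
  have hinv : StrictMono (⇑σ.symm) := by
    intro a b hab
    rcases lt_trichotomy (σ.symm a) (σ.symm b) with h | h | h
    · exact h
    · exfalso
      apply hab.ne
      rw [← σ.apply_symm_apply a, ← σ.apply_symm_apply b, h]
    · exfalso
      have h2 := hσ h
      rw [σ.apply_symm_apply, σ.apply_symm_apply] at h2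
      exact absurd hab (not_lt.2 h2.le)
  ext p
  have h1 := le_of_strictMono σ hσ p
  have h2 := le_of_strictMono σ.symm hinv (σ p)
  simp only [Equiv.symm_apply_apply] at h2
  simp only [Equiv.Perm.coe_one, id_eq]
  omega


/-- Swap the heads (up to abscissa `x0`) of the paths `p0` and `q0`. -/
noncomputable def swapS (S : Fin L → Finset ℕ) (p0 q0 : Fin L) (x0 : ℕ) :
    Fin L → Finset ℕ :=
  fun k => if k = p0 then (S q0 ∩ range x0) ∪ (S p0 \ range x0)
    else if k = q0 then (S p0 ∩ range x0) ∪ (S q0 \ range x0) else S k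

lemma swapS_other {S : Fin L → Finset ℕ} {p0 q0 k : Fin L} (x0 : ℕ) (h1 : k ≠ p0)
    (h2 : k ≠ q0) : swapS S p0 q0 x0 k = S k := by simp [swapS, h1, h2]

lemma swapS_p0 (S : Fin L → Finset ℕ) (p0 q0 : Fin L) (x0 : ℕ) :
    swapS S p0 q0 x0 p0 = (S q0 ∩ range x0) ∪ (S p0 \ range x0) := by simp [swapS]

lemma swapS_q0 (S : Fin L → Finset ℕ) {p0 q0 : Fin L} (hne : p0 ≠ q0) (x0 : ℕ) :
    swapS S p0 q0 x0 q0 = (S p0 ∩ range x0) ∪ (S q0 \ range x0) := by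
  simp [swapS, hne.symm]

lemma headSwap_inter_range (Aset Bset : Finset ℕ) {x0 x : ℕ} (hx : x ≤ x0) :
    ((Aset ∩ range x0) ∪ (Bset \ range x0)) ∩ range x = Aset ∩ range x := by
  ext d
  simp only [mem_inter, mem_union, mem_sdiff, mem_range]
  constructor
  · rintro ⟨h | h, hdx⟩
    · exact ⟨h.1, hdx⟩
    · exact absurd (by omega : d < x0) h.2
  · rintro ⟨hd, hdx⟩
    exact ⟨Or.inl ⟨hd, by omega⟩, hdx⟩

lemma headSwap_sdiff_range (Aset Bset : Finset ℕ) (x0 : ℕ) :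
    ((Aset ∩ range x0) ∪ (Bset \ range x0)) \ range x0 = Bset \ range x0 := by
  ext d
  simp only [mem_sdiff, mem_union, mem_inter, mem_range]
  constructor
  · rintro ⟨h | h, hdx⟩
    · exact absurd h.2 hdx
    · exact ⟨h.1, hdx⟩
  · rintro ⟨hd, hdx⟩
    exact ⟨Or.inr ⟨hd, hdx⟩, hdx⟩

lemma headSwap_card (Aset Bset : Finset ℕ) (x0 : ℕ) :
    ((Aset ∩ range x0) ∪ (Bset \ range x0)).card
      = (Aset ∩ range x0).card + Bset.card - (Bset ∩ range x0).card := by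
  have hdis : Disjoint (Aset ∩ range x0) (Bset \ range x0) := by
    rw [Finset.disjoint_left]
    intro d hd hd'
    rw [mem_inter] at hd
    rw [mem_sdiff] at hd'
    exact hd'.2 hd.2
  rw [Finset.card_union_of_disjoint hdis]
  have := Finset.card_sdiff_add_card_inter Bset (range x0)
  omega

lemma hgt_eq_nat {S : Fin L → Finset ℕ} {p0 q0 : Fin L} {x0 : ℕ}
    (hmeet : hgt S p0 x0 = hgt S q0 x0) :
    (S p0 ∩ range x0).card + (S q0).card = (S q0 ∩ range x0).card + (S p0).card := by
  simp only [hgt] at hmeet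
  omega

lemma card_swapS_p0 {S : Fin L → Finset ℕ} {p0 q0 : Fin L} {x0 : ℕ}
    (hmeet : hgt S p0 x0 = hgt S q0 x0) :
    (swapS S p0 q0 x0 p0).card = (S q0).card := by
  rw [swapS_p0, headSwap_card]
  have h1 := hgt_eq_nat hmeet
  have h2 := cnt_le_card (S p0) x0
  have h3 := cnt_le_card (S q0) x0
  omega

lemma card_swapS_q0 {S : Fin L → Finset ℕ} {p0 q0 : Fin L} (hne : p0 ≠ q0) {x0 : ℕ}
    (hmeet : hgt S p0 x0 = hgt S q0 x0) :
    (swapS S p0 q0 x0 q0).card = (S p0).card := by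
  rw [swapS_q0 S hne, headSwap_card]
  have h1 := hgt_eq_nat hmeet
  have h2 := cnt_le_card (S p0) x0
  have h3 := cnt_le_card (S q0) x0
  omega

lemma hgt_swapS_p0 {S : Fin L → Finset ℕ} {p0 q0 : Fin L} {x0 : ℕ}
    (hmeet : hgt S p0 x0 = hgt S q0 x0) {x : ℕ} (hx : x ≤ x0) :
    hgt (swapS S p0 q0 x0) p0 x = hgt S q0 x := by
  have hc := card_swapS_p0 (q0 := q0) hmeet
  rw [swapS_p0] at hc
  simp only [hgt, swapS_p0, headSwap_inter_range _ _ hx, hc]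

lemma hgt_swapS_q0 {S : Fin L → Finset ℕ} {p0 q0 : Fin L} (hne : p0 ≠ q0) {x0 : ℕ}
    (hmeet : hgt S p0 x0 = hgt S q0 x0) {x : ℕ} (hx : x ≤ x0) :
    hgt (swapS S p0 q0 x0) q0 x = hgt S p0 x := by
  have hc := card_swapS_q0 hne hmeet
  rw [swapS_q0 S hne] at hc
  simp only [hgt, swapS_q0 S hne, headSwap_inter_range _ _ hx, hc]

lemma hgt_swapS_other {S : Fin L → Finset ℕ} {p0 q0 k : Fin L} (x0 : ℕ) (h1 : k ≠ p0)
    (h2 : k ≠ q0) (x : ℕ) : hgt (swapS S p0 q0 x0) k x = hgt S k x := by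
  simp only [hgt, swapS_other x0 h1 h2]

lemma hgt_swapS_at_x0 {S : Fin L → Finset ℕ} {p0 q0 : Fin L} (hne : p0 ≠ q0) {x0 : ℕ}
    (hmeet : hgt S p0 x0 = hgt S q0 x0) (k : Fin L) :
    hgt (swapS S p0 q0 x0) k x0 = hgt S k x0 := by
  by_cases h1 : k = p0
  · subst h1; rw [hgt_swapS_p0 hmeet le_rfl, hmeet]
  · by_cases h2 : k = q0
    · subst h2; rw [hgt_swapS_q0 hne hmeet le_rfl, hmeet]
    · exact hgt_swapS_other x0 h1 h2 x0

lemma inter_union_sdiff_self (s t : Finset ℕ) : (s ∩ t) ∪ (s \ t) = s := by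
  ext d
  simp only [mem_union, mem_inter, mem_sdiff]
  tauto

lemma swapS_involutive {S : Fin L → Finset ℕ} {p0 q0 : Fin L} (hne : p0 ≠ q0) (x0 : ℕ) :
    swapS (swapS S p0 q0 x0) p0 q0 x0 = S := by
  funext k
  by_cases h1 : k = p0
  · subst h1
    rw [swapS_p0, swapS_q0 _ hne, swapS_p0, headSwap_inter_range _ _ le_rfl,
      headSwap_sdiff_range, inter_union_sdiff_self]
  · by_cases h2 : k = q0
    · subst h2
      rw [swapS_q0 _ hne, swapS_p0, swapS_q0 _ hne, headSwap_inter_range _ _ le_rfl,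
        headSwap_sdiff_range, inter_union_sdiff_self]
    · rw [swapS_other x0 h1 h2, swapS_other x0 h1 h2]

lemma swapS_subset_p0 {S : Fin L → Finset ℕ} {p0 q0 : Fin L} {x0 : ℕ} {ap aq : ℕ}
    (hp : S p0 ⊆ range ap) (hq : S q0 ⊆ range aq) (haq : aq ≤ ap) :
    swapS S p0 q0 x0 p0 ⊆ range ap := by
  rw [swapS_p0]
  apply Finset.union_subset
  · exact (inter_subset_left).trans (hq.trans (Finset.range_subset_range.2 haq))
  · exact (sdiff_subset).trans hp

lemma swapS_subset_q0 {S : Fin L → Finset ℕ} {p0 q0 : Fin L} (hne : p0 ≠ q0) {x0 : ℕ}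
    {aq : ℕ} (hq : S q0 ⊆ range aq) (hx0 : x0 ≤ aq) :
    swapS S p0 q0 x0 q0 ⊆ range aq := by
  rw [swapS_q0 _ hne]
  apply Finset.union_subset
  · exact (inter_subset_right).trans (Finset.range_subset_range.2 hx0)
  · exact (sdiff_subset).trans hq


lemma min'_eq_of_eq {α : Type*} [LinearOrder α] {s t : Finset α} (h : s = t)
    {hs : s.Nonempty} {ht : t.Nonempty} : s.min' hs = t.min' ht := by subst h; rfl

variable (A : Fin L → ℕ)

noncomputable def pSet (S : Fin L → Finset ℕ) (x : ℕ) : Finset (Fin L) :=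
  univ.filter (fun p => ∃ q, p < q ∧ x ≤ A q ∧ hgt S p x = hgt S q x)

noncomputable def qSet (S : Fin L → Finset ℕ) (x : ℕ) (p : Fin L) : Finset (Fin L) :=
  univ.filter (fun q => p < q ∧ x ≤ A q ∧ hgt S p x = hgt S q x)

/-- First meeting abscissa of a crossing system. -/
noncomputable def fx {A : Fin L → ℕ} {S : Fin L → Finset ℕ} (hc : Cross A S) : ℕ :=
  Nat.find hc

lemma pSet_nonempty {S : Fin L → Finset ℕ} (hc : Cross A S) :
    (pSet A S (fx hc)).Nonempty := by
  obtain ⟨p, q, h1, h2, h3⟩ := Nat.find_spec hc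
  exact ⟨p, by simp only [pSet, mem_filter, mem_univ, true_and]; exact ⟨q, h1, h2, h3⟩⟩

/-- First path involved in the first crossing. -/
noncomputable def fp {A : Fin L → ℕ} {S : Fin L → Finset ℕ} (hc : Cross A S) : Fin L :=
  (pSet A S (fx hc)).min' (pSet_nonempty A hc)

lemma qSet_nonempty {S : Fin L → Finset ℕ} (hc : Cross A S) :
    (qSet A S (fx hc) (fp hc)).Nonempty := by
  have := Finset.min'_mem (pSet A S (fx hc)) (pSet_nonempty A hc)
  simp only [pSet, mem_filter, mem_univ, true_and] at this
  obtain ⟨q, h1, h2, h3⟩ := this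
  exact ⟨q, by simp only [qSet, mem_filter, mem_univ, true_and]; exact ⟨h1, h2, h3⟩⟩

/-- Second path involved in the first crossing. -/
noncomputable def fq {A : Fin L → ℕ} {S : Fin L → Finset ℕ} (hc : Cross A S) : Fin L :=
  (qSet A S (fx hc) (fp hc)).min' (qSet_nonempty A hc)

lemma fq_spec {S : Fin L → Finset ℕ} (hc : Cross A S) :
    fp hc < fq hc ∧ fx hc ≤ A (fq hc) ∧ hgt S (fp hc) (fx hc) = hgt S (fq hc) (fx hc) := by
  have := Finset.min'_mem (qSet A S (fx hc) (fp hc)) (qSet_nonempty A hc)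
  exact (Finset.mem_filter.1 this).2

lemma fx_min {S : Fin L → Finset ℕ} (hc : Cross A S) {x : ℕ} (hx : x < fx hc) :
    ¬ Meets A S x := Nat.find_min hc hx

/-- The head-swapped system of a crossing system. -/
noncomputable def fS {A : Fin L → ℕ} {S : Fin L → Finset ℕ} (hc : Cross A S) :
    Fin L → Finset ℕ :=
  swapS S (fp hc) (fq hc) (fx hc)

lemma hgt_fS {S : Fin L → Finset ℕ} (hc : Cross A S) {x : ℕ} (hx : x ≤ fx hc) (k : Fin L) :
    hgt (fS hc) k x = hgt S (Equiv.swap (fp hc) (fq hc) k) x := by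
  obtain ⟨h1, h2, h3⟩ := fq_spec A hc
  by_cases hp : k = fp hc
  · subst hp
    rw [Equiv.swap_apply_left]
    exact hgt_swapS_p0 h3 hx
  · by_cases hq : k = fq hc
    · subst hq
      rw [Equiv.swap_apply_right]
      exact hgt_swapS_q0 h1.ne h3 hx
    · rw [Equiv.swap_apply_of_ne_of_ne hp hq]
      exact hgt_swapS_other _ hp hq x

lemma hgt_fS_at_fx {S : Fin L → Finset ℕ} (hc : Cross A S) (k : Fin L) :
    hgt (fS hc) k (fx hc) = hgt S k (fx hc) := by
  obtain ⟨h1, h2, h3⟩ := fq_spec A hc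
  exact hgt_swapS_at_x0 h1.ne h3 k

lemma cross_fS {S : Fin L → Finset ℕ} (hc : Cross A S) : Cross A (fS hc) := by
  obtain ⟨h1, h2, h3⟩ := fq_spec A hc
  exact ⟨fx hc, fp hc, fq hc, h1, h2, by
    rw [hgt_fS_at_fx A hc, hgt_fS_at_fx A hc]; exact h3⟩

lemma meets_fS_rev {S : Fin L → Finset ℕ} (hA : ∀ p q : Fin L, p < q → A q < A p)
    (hc : Cross A S) {x : ℕ} (hx : x ≤ fx hc) (h : Meets A (fS hc) x) : Meets A S x := by
  obtain ⟨hpq0, hx0q, hme⟩ := fq_spec A hc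
  obtain ⟨p, q, hpq, hxq, heq⟩ := h
  rw [hgt_fS A hc hx, hgt_fS A hc hx] at heq
  set τ := Equiv.swap (fp hc) (fq hc) with hτ
  have hxp : x ≤ A p := (hxq.trans (hA p q hpq).le)
  have hkey : ∀ k : Fin L, x ≤ A k → x ≤ A (τ k) := by
    intro k hk
    by_cases h1 : k = fp hc
    · subst h1; rw [hτ, Equiv.swap_apply_left]; omega
    · by_cases h2 : k = fq hc
      · subst h2
        rw [hτ, Equiv.swap_apply_right]
        have := hA _ _ hpq0
        omega
      · rw [hτ, Equiv.swap_apply_of_ne_of_ne h1 h2]; exact hk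
  have hne : τ p ≠ τ q := fun h => hpq.ne (τ.injective h)
  rcases lt_or_gt_of_ne hne with h | h
  · exact ⟨τ p, τ q, h, hkey q hxq, heq⟩
  · exact ⟨τ q, τ p, h, hkey p hxp, heq.symm⟩

lemma fx_fS {S : Fin L → Finset ℕ} (hA : ∀ p q : Fin L, p < q → A q < A p)
    (hc : Cross A S) (hc' : Cross A (fS hc)) : fx hc' = fx hc := by
  apply le_antisymm
  · apply Nat.find_min' hc'
    obtain ⟨h1, h2, h3⟩ := fq_spec A hc
    exact ⟨fp hc, fq hc, h1, h2, by
      rw [hgt_fS_at_fx A hc, hgt_fS_at_fx A hc]; exact h3⟩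
  · by_contra hlt
    push_neg at hlt
    exact fx_min A hc hlt (meets_fS_rev A hA hc (by omega) (Nat.find_spec hc'))

lemma pSet_fS {S : Fin L → Finset ℕ} (hc : Cross A S) :
    pSet A (fS hc) (fx hc) = pSet A S (fx hc) := by
  unfold pSet
  apply Finset.filter_congr
  intro p _
  simp only [hgt_fS_at_fx A hc]

lemma fp_fS {S : Fin L → Finset ℕ} (hA : ∀ p q : Fin L, p < q → A q < A p)
    (hc : Cross A S) (hc' : Cross A (fS hc)) : fp hc' = fp hc := by
  unfold fp
  have h1 : fx hc' = fx hc := fx_fS A hA hc hc'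
  have h2 : pSet A (fS hc) (fx hc') = pSet A S (fx hc) := by
    rw [h1, pSet_fS A hc]
  exact min'_eq_of_eq h2

lemma fq_fS {S : Fin L → Finset ℕ} (hA : ∀ p q : Fin L, p < q → A q < A p)
    (hc : Cross A S) (hc' : Cross A (fS hc)) : fq hc' = fq hc := by
  unfold fq
  have h1 : fx hc' = fx hc := fx_fS A hA hc hc'
  have h2 : fp hc' = fp hc := fp_fS A hA hc hc'
  have h3 : qSet A (fS hc) (fx hc') (fp hc') = qSet A S (fx hc) (fp hc) := by
    rw [h1, h2]
    unfold qSet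
    apply Finset.filter_congr
    intro q _
    simp only [hgt_fS_at_fx A hc]
  exact min'_eq_of_eq h3

lemma fS_fS {S : Fin L → Finset ℕ} (hA : ∀ p q : Fin L, p < q → A q < A p)
    (hc : Cross A S) (hc' : Cross A (fS hc)) : fS hc' = S := by
  show swapS (fS hc) (fp hc') (fq hc') (fx hc') = S
  rw [fx_fS A hA hc hc', fp_fS A hA hc hc', fq_fS A hA hc hc']
  exact swapS_involutive (fq_spec A hc).1.ne _


/-- The Lindström–Gessel–Viennot lemma for binomial determinants. -/
lemma lgv (L : ℕ) (A B : Fin L → ℕ)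
    (hA : ∀ p q : Fin L, p < q → A q < A p)
    (hB : ∀ p q : Fin L, p < q → B q < B p) :
    (∑ σ : Equiv.Perm (Fin L), ((Equiv.Perm.sign σ : ℤˣ) : ℤ) *
        ∏ i : Fin L, ((A i).choose (B (σ i)) : ℤ))
      = (((Fintype.piFinset (fun i : Fin L => (range (A i)).powersetCard (B i))).filter
          (fun S => ∀ p q : Fin L, p < q → ∀ x ≤ A q, hgt S p x < hgt S q x)).card : ℤ) := by
  classical
  set T : Finset ((_ : Equiv.Perm (Fin L)) × (Fin L → Finset ℕ)) :=
    Finset.univ.sigma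
      (fun σ => Fintype.piFinset (fun i => (range (A i)).powersetCard (B (σ i)))) with hT
  have hstep1 : (∑ σ : Equiv.Perm (Fin L), ((Equiv.Perm.sign σ : ℤˣ) : ℤ) *
        ∏ i : Fin L, ((A i).choose (B (σ i)) : ℤ))
      = ∑ z ∈ T, ((Equiv.Perm.sign z.1 : ℤˣ) : ℤ) := by
    rw [hT, Finset.sum_sigma]
    refine Finset.sum_congr rfl fun σ _ => ?_
    show _ = ∑ _s ∈ Fintype.piFinset (fun i => (range (A i)).powersetCard (B (σ i))),
      ((Equiv.Perm.sign σ : ℤˣ) : ℤ)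
    rw [Finset.sum_const, nsmul_eq_mul, Fintype.card_piFinset,
      mul_comm ((Equiv.Perm.sign σ : ℤˣ) : ℤ)]
    congr 1
    push_cast
    refine Finset.prod_congr rfl fun i _ => ?_
    rw [Finset.card_powersetCard, card_range]
  rw [hstep1,
    ← Finset.sum_filter_add_sum_filter_not T (fun z => Cross A z.2)
      (fun z => ((Equiv.Perm.sign z.1 : ℤˣ) : ℤ))]
  -- crossing part vanishes
  have hzero : (∑ z ∈ T.filter (fun z => Cross A z.2), ((Equiv.Perm.sign z.1 : ℤˣ) : ℤ)) = 0 := by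
    refine Finset.sum_involution
      (fun z hz => ⟨z.1 * Equiv.swap (fp (Finset.mem_filter.1 hz).2)
          (fq (Finset.mem_filter.1 hz).2), fS (Finset.mem_filter.1 hz).2⟩)
      ?_ ?_ ?_ ?_
    · intro z hz
      have hc := (Finset.mem_filter.1 hz).2
      have hne : fp hc ≠ fq hc := (fq_spec A hc).1.ne
      simp only [Equiv.Perm.sign_mul, Equiv.Perm.sign_swap hne]
      push_cast
      ring
    · intro z hz _
      intro h
      have hc := (Finset.mem_filter.1 hz).2
      have hfst : z.1 * Equiv.swap (fp hc) (fq hc) = z.1 := congrArg Sigma.fst h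
      have h2 : Equiv.swap (fp hc) (fq hc) = 1 := by
        have h3 : z.1 * Equiv.swap (fp hc) (fq hc) = z.1 * 1 := by rw [mul_one]; exact hfst
        exact mul_left_cancel h3
      exact (fq_spec A hc).1.ne (Equiv.swap_eq_one_iff.1 h2)
    · intro z hz
      have hmem := (Finset.mem_filter.1 hz).1
      have hc := (Finset.mem_filter.1 hz).2
      show (⟨z.1 * Equiv.swap (fp hc) (fq hc), fS hc⟩ :
        (_ : Equiv.Perm (Fin L)) × (Fin L → Finset ℕ)) ∈ _
      rw [Finset.mem_filter]
      constructor
      · rw [hT, Finset.mem_sigma] at hmem ⊢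
        refine ⟨Finset.mem_univ _, ?_⟩
        rw [Fintype.mem_piFinset] at hmem ⊢
        obtain ⟨hpq, hxq, hme⟩ := fq_spec A hc
        intro i
        have hsub : ∀ j, z.2 j ⊆ range (A j) ∧ (z.2 j).card = B (z.1 j) := by
          intro j
          have := hmem.2 j
          rwa [Finset.mem_powersetCard] at this
        show (fS hc) i ∈ (range (A i)).powersetCard
          (B ((z.1 * Equiv.swap (fp hc) (fq hc)) i))
        rw [Finset.mem_powersetCard]
        have hfS : ∀ k, (fS hc) k = swapS z.2 (fp hc) (fq hc) (fx hc) k := fun k => rfl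
        by_cases h1 : i = fp hc
        · subst h1
          constructor
          · rw [hfS]
            exact swapS_subset_p0 (hsub _).1 (hsub _).1 (hA _ _ hpq).le
          · rw [hfS, card_swapS_p0 hme, (hsub _).2]
            congr 1
            rw [Equiv.Perm.mul_apply, Equiv.swap_apply_left]
        · by_cases h2 : i = fq hc
          · subst h2
            constructor
            · rw [hfS]
              exact swapS_subset_q0 hpq.ne (hsub _).1 hxq
            · rw [hfS, card_swapS_q0 hpq.ne hme, (hsub _).2]
              congr 1
              rw [Equiv.Perm.mul_apply, Equiv.swap_apply_right]
          · constructor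
            · rw [hfS, swapS_other _ h1 h2]
              exact (hsub i).1
            · rw [hfS, swapS_other _ h1 h2, (hsub i).2]
              congr 1
              rw [Equiv.Perm.mul_apply, Equiv.swap_apply_of_ne_of_ne h1 h2]
      · exact cross_fS A hc
    · intro z hz
      have hc := (Finset.mem_filter.1 hz).2
      apply Sigma.ext
      · simp only
        rw [fp_fS A hA hc, fq_fS A hA hc, mul_assoc, Equiv.swap_mul_self, mul_one]
      · simp only
        exact heq_of_eq (fS_fS A hA hc _)
  rw [hzero, zero_add]
  -- non-crossing part
  have hid : ∀ z ∈ T.filter (fun z => ¬ Cross A z.2), z.1 = 1 := by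
    intro z hz
    rw [Finset.mem_filter] at hz
    obtain ⟨hmem, hnc⟩ := hz
    rw [hT, Finset.mem_sigma, Fintype.mem_piFinset] at hmem
    have hsub : ∀ j, z.2 j ⊆ range (A j) ∧ (z.2 j).card = B (z.1 j) := by
      intro j
      have := hmem.2 j
      rwa [Finset.mem_powersetCard] at this
    apply strictMono_perm_eq_one
    intro p q hpq
    by_contra hle
    push_neg at hle
    have hne : z.1 q ≠ z.1 p := fun h => hpq.ne (z.1.injective h).symm
    have hlt : z.1 q < z.1 p := lt_of_le_of_ne hle hne
    have hBlt : B (z.1 p) < B (z.1 q) := hB _ _ hlt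
    have h0p : hgt z.2 p 0 = -(B (z.1 p) : ℤ) := by rw [hgt_zero, (hsub p).2]
    have h0q : hgt z.2 q 0 = -(B (z.1 q) : ℤ) := by rw [hgt_zero, (hsub q).2]
    have hfullq : hgt z.2 q (A q) = 0 := hgt_full (hsub q).1 le_rfl
    have hnpp : hgt z.2 p (A q) ≤ 0 := hgt_nonpos _ _ _
    obtain ⟨x, hx, h0⟩ := discrete_ivt (fun t => hgt z.2 p t - hgt z.2 q t) (A q)
      (show (0:ℤ) < hgt z.2 p 0 - hgt z.2 q 0 by omega)
      (show hgt z.2 p (A q) - hgt z.2 q (A q) ≤ 0 by omega)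
      (fun t => show hgt z.2 p t - hgt z.2 q t ≤ hgt z.2 p (t+1) - hgt z.2 q (t+1) + 1 by
        have h1 := hgt_step_ge z.2 q t; have h2 := hgt_step_le z.2 p t; omega)
    have h0' : hgt z.2 p x - hgt z.2 q x = 0 := h0
    exact hnc ⟨x, p, q, hpq, hx, by omega⟩
  rw [Finset.sum_congr rfl (fun z hz => by rw [hid z hz] : ∀ z ∈ T.filter (fun z => ¬ Cross A z.2),
    ((Equiv.Perm.sign z.1 : ℤˣ) : ℤ) = ((Equiv.Perm.sign (1 : Equiv.Perm (Fin L)) : ℤˣ) : ℤ))]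
  simp only [Equiv.Perm.sign_one, Units.val_one, Finset.sum_const, nsmul_eq_mul, mul_one]
  congr 1
  apply Finset.card_bij (fun z _ => z.2)
  · intro z hz
    have h1 := hid z hz
    rw [Finset.mem_filter] at hz ⊢
    obtain ⟨hmem, hnc⟩ := hz
    rw [hT, Finset.mem_sigma, Fintype.mem_piFinset] at hmem
    have hsub : ∀ j, z.2 j ⊆ range (A j) ∧ (z.2 j).card = B (z.1 j) := by
      intro j
      have := hmem.2 j
      rwa [Finset.mem_powersetCard] at this
    constructor
    · rw [Fintype.mem_piFinset]
      intro i
      rw [Finset.mem_powersetCard]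
      refine ⟨(hsub i).1, ?_⟩
      rw [(hsub i).2, h1]
      rfl
    · intro p q hpq x hx
      have h0 : hgt z.2 p 0 < hgt z.2 q 0 := by
        rw [hgt_zero, hgt_zero, (hsub p).2, (hsub q).2, h1]
        simp only [Equiv.Perm.coe_one, id_eq]
        have := hB p q hpq
        omega
      refine lt_of_ne_hgt h0 ?_ x hx
      intro y hy hmeet
      exact hnc ⟨y, p, q, hpq, hy, hmeet⟩
  · intro z hz z' hz' h
    have h1 := hid z hz
    have h2 := hid z' hz'
    apply Sigma.ext
    · rw [h1, h2]
    · exact heq_of_eq h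
  · intro S hS
    rw [Finset.mem_filter] at hS
    obtain ⟨hmem, hNC⟩ := hS
    refine ⟨⟨1, S⟩, ?_, rfl⟩
    rw [Finset.mem_filter]
    constructor
    · rw [hT, Finset.mem_sigma]
      refine ⟨Finset.mem_univ _, ?_⟩
      rw [Fintype.mem_piFinset] at hmem ⊢
      intro i
      simpa using hmem i
    · rintro ⟨x, p, q, hpq, hx, hmeet⟩
      exact absurd hmeet (hNC p q hpq x hx).ne


lemma Icc_succ_image (a b : ℕ) :
    Finset.Icc (a + 1) b = (range (b - a)).image (fun k => a + 1 + k) := by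
  ext d
  simp only [mem_Icc, mem_image, mem_range]
  constructor
  · intro h; exact ⟨d - a - 1, by omega, by omega⟩
  · rintro ⟨k, hk, rfl⟩; omega

/-- The set of `s`-values (complement positions) of row `r` of a tableau. -/
def Dset (n : ℕ) (l mu : ℕ → ℕ) (T : (ℕ × ℕ) → ℕ) (r : ℕ) : Finset ℕ :=
  (Finset.Icc (mu r + 1) (l r)).image (fun j => n + j - r - 1 - T (r, j))

section Rows

variable {n r : ℕ} {l mu : ℕ → ℕ} {T : (ℕ × ℕ) → ℕ}

/-- Strict increase of `s`-values along a row. -/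
lemma sval_strict (hrn : r ≤ n) (hr1 : 1 ≤ r)
    (hrow : ∀ j, mu r < j → j + 1 ≤ l r → T (r, j + 1) ≤ T (r, j))
    (hbd : ∀ j, mu r < j → j ≤ l r → T (r, j) < n + j - r) :
    ∀ j j', mu r < j → j < j' → j' ≤ l r →
      n + j - r - 1 - T (r, j) < n + j' - r - 1 - T (r, j') := by
  have hstep : ∀ jj, mu r < jj → jj + 1 ≤ l r →
      n + jj - r - 1 - T (r, jj) < n + (jj + 1) - r - 1 - T (r, jj + 1) := by
    intro jj h1 h2
    have h3 := hrow jj h1 h2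
    have h4 := hbd jj h1 (by omega)
    omega
  intro j j' hj hjj' hj'
  induction j' with
  | zero => omega
  | succ jj ih =>
    rcases Nat.lt_or_ge j jj with h | h
    · have hs := hstep jj (by omega) (by omega)
      have := ih h (by omega)
      omega
    · have hje : j = jj := by omega
      subst hje
      exact hstep j hj hj'

lemma Dset_eq_image (hrn : r ≤ n) (hr1 : 1 ≤ r) :
    Dset n l mu T r = (range (l r - mu r)).image
      (fun k => n + (mu r + 1 + k) - r - 1 - T (r, mu r + 1 + k)) := by
  rw [Dset, Icc_succ_image, Finset.image_image]
  rfl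

lemma nth_Dset (hrn : r ≤ n) (hr1 : 1 ≤ r)
    (hrow : ∀ j, mu r < j → j + 1 ≤ l r → T (r, j + 1) ≤ T (r, j))
    (hbd : ∀ j, mu r < j → j ≤ l r → T (r, j) < n + j - r)
    {k : ℕ} (hk : k < l r - mu r) :
    nth (Dset n l mu T r) k = n + (mu r + 1 + k) - r - 1 - T (r, mu r + 1 + k) := by
  rw [Dset_eq_image hrn hr1]
  exact nth_image (fun k1 k2 h12 h2 =>
    sval_strict hrn hr1 hrow hbd _ _ (by omega) (by omega) (by omega)) hk

lemma card_Dset (hrn : r ≤ n) (hr1 : 1 ≤ r)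
    (hrow : ∀ j, mu r < j → j + 1 ≤ l r → T (r, j + 1) ≤ T (r, j))
    (hbd : ∀ j, mu r < j → j ≤ l r → T (r, j) < n + j - r) :
    (Dset n l mu T r).card = l r - mu r := by
  rw [Dset_eq_image hrn hr1, Finset.card_image_of_injOn, card_range]
  intro k1 hk1 k2 hk2 he
  rw [mem_coe, mem_range] at hk1 hk2
  by_contra hne
  rcases Nat.lt_or_ge k1 k2 with h | h
  · exact absurd he (sval_strict hrn hr1 hrow hbd _ _ (by omega) (by omega) (by omega)).ne
  · exact absurd he.symm
      (sval_strict hrn hr1 hrow hbd _ _ (by omega) (by omega) (by omega)).ne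

lemma Dset_subset (hrn : r ≤ n) (hr1 : 1 ≤ r) :
    Dset n l mu T r ⊆ range (l r + n - r) := by
  intro d hd
  rw [Dset, Finset.mem_image] at hd
  obtain ⟨j, hj, rfl⟩ := hd
  rw [mem_Icc] at hj
  rw [mem_range]
  omega

end Rows

noncomputable def psi (n ℓ : ℕ) (l mu : ℕ → ℕ) (T : (ℕ × ℕ) → ℕ) : Fin ℓ → Finset ℕ :=
  fun p => range (l (p.1 + 1) + n - (p.1 + 1)) \ Dset n l mu T (p.1 + 1)

noncomputable def phi (n ℓ : ℕ) (l mu : ℕ → ℕ) (S : Fin ℓ → Finset ℕ) : (ℕ × ℕ) → ℕ :=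
  fun c =>
    if h : 1 ≤ c.1 ∧ c.1 ≤ ℓ ∧ mu c.1 < c.2 ∧ c.2 ≤ l c.1 then
      n + c.2 - c.1 - 1 -
        nth (range (l c.1 + n - c.1) \ S ⟨c.1 - 1, by omega⟩) (c.2 - mu c.1 - 1)
    else 0

lemma mem_skewCells {l mu : ℕ → ℕ} {L : ℕ} (hl : ∀ i j, 1 ≤ i → i ≤ j → l j ≤ l i)
    {i j : ℕ} : (i, j) ∈ skewCells l mu L ↔ 1 ≤ i ∧ i ≤ L ∧ mu i < j ∧ j ≤ l i := by
  simp only [skewCells, mem_filter, mem_product, mem_Icc]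
  constructor
  · rintro ⟨⟨⟨h1, h2⟩, _, _⟩, h5, h6⟩; exact ⟨h1, h2, h5, h6⟩
  · rintro ⟨h1, h2, h3, h4⟩
    exact ⟨⟨⟨h1, h2⟩, by omega, h4.trans (hl 1 i le_rfl h1)⟩, h3, h4⟩


lemma sdiff_sdiff_range {a : ℕ} {s : Finset ℕ} (h : s ⊆ range a) :
    range a \ (range a \ s) = s := by
  ext d
  simp only [mem_sdiff, mem_range]
  constructor
  · rintro ⟨h1, h2⟩
    by_contra h3
    exact h2 ⟨h1, h3⟩
  · intro hd
    have := h hd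
    rw [mem_range] at this
    exact ⟨this, fun h4 => h4.2 hd⟩

lemma NC_of_adjacent {A : Fin L → ℕ} (hA : ∀ p q : Fin L, p < q → A q < A p)
    {S : Fin L → Finset ℕ}
    (h : ∀ p q : Fin L, q.1 = p.1 + 1 → ∀ x ≤ A q, hgt S p x < hgt S q x) :
    ∀ p q : Fin L, p < q → ∀ x ≤ A q, hgt S p x < hgt S q x := by
  have key : ∀ d (p q : Fin L), p.1 + d + 1 = q.1 → ∀ x ≤ A q, hgt S p x < hgt S q x := by
    intro d
    induction d with
    | zero =>
      intro p q hq x hx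
      exact h p q (by omega) x hx
    | succ d ih =>
      intro p q hq x hx
      have hm : p.1 + d + 1 < L := by have := q.2; omega
      have hmq : (⟨p.1 + d + 1, hm⟩ : Fin L) < q := by
        rw [Fin.lt_def]; simp; omega
      have hxm : x ≤ A ⟨p.1 + d + 1, hm⟩ := le_of_lt (lt_of_le_of_lt hx (hA _ _ hmq))
      have h1 : hgt S p x < hgt S ⟨p.1 + d + 1, hm⟩ x := ih p _ rfl x hxm
      have h2 := h ⟨p.1 + d + 1, hm⟩ q (by simp; omega) x hx
      exact h1.trans h2
  intro p q hpq x hx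
  have hpq' : p.1 < q.1 := hpq
  exact key (q.1 - p.1 - 1) p q (by omega) x hx

lemma phi_pos {n ℓ : ℕ} {l mu : ℕ → ℕ} (S : Fin ℓ → Finset ℕ) {r j : ℕ}
    (h1 : 1 ≤ r) (h2 : r ≤ ℓ) (h3 : mu r < j) (h4 : j ≤ l r) (hr : r - 1 < ℓ) :
    phi n ℓ l mu S (r, j)
      = n + j - r - 1 - nth (range (l r + n - r) \ S ⟨r - 1, hr⟩) (j - mu r - 1) := by
  unfold phi
  rw [dif_pos (show 1 ≤ (r, j).1 ∧ (r, j).1 ≤ ℓ ∧ mu (r, j).1 < (r, j).2 ∧ (r, j).2 ≤ l (r, j).1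
    from ⟨h1, h2, h3, h4⟩)]

lemma phi_neg {n ℓ : ℕ} {l mu : ℕ → ℕ} (S : Fin ℓ → Finset ℕ) {i j : ℕ}
    (hc : ¬(1 ≤ i ∧ i ≤ ℓ ∧ mu i < j ∧ j ≤ l i)) : phi n ℓ l mu S (i, j) = 0 := by
  unfold phi
  exact dif_neg hc

lemma ssct_card (n ℓ : ℕ) (l mu : ℕ → ℕ)
    (hl : ∀ i j, 1 ≤ i → i ≤ j → l j ≤ l i)
    (hmu : ∀ i j, 1 ≤ i → i ≤ j → mu j ≤ mu i)
    (hsub : ∀ i, 1 ≤ i → mu i ≤ l i)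
    (hn : ℓ ≤ n) :
    Nat.card (SSCTset n (skewCells l mu ℓ)) =
      ((Fintype.piFinset (fun i : Fin ℓ =>
          (range (l (i.1 + 1) + n - (i.1 + 1))).powersetCard
            (mu (i.1 + 1) + n - (i.1 + 1)))).filter
        (fun S => ∀ p q : Fin ℓ, p < q → ∀ x ≤ l (q.1 + 1) + n - (q.1 + 1),
          hgt S p x < hgt S q x)).card := by
  classical
  rw [← Nat.card_eq_finsetCard]
  apply Nat.card_congr
  have hA : ∀ p q : Fin ℓ, p < q → l (q.1 + 1) + n - (q.1 + 1) < l (p.1 + 1) + n - (p.1 + 1) := by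
    intro p q hpq
    have hpq' : p.1 < q.1 := hpq
    have h1 := hl (p.1 + 1) (q.1 + 1) (by omega) (by omega)
    have h2 := q.2
    omega
  have rowFacts : ∀ (T : (ℕ × ℕ) → ℕ), T ∈ SSCTset n (skewCells l mu ℓ) →
      ∀ r, 1 ≤ r → r ≤ ℓ →
      (∀ j, mu r < j → j + 1 ≤ l r → T (r, j + 1) ≤ T (r, j)) ∧
      (∀ j, mu r < j → j ≤ l r → T (r, j) < n + j - r) := by
    intro T hT r h1 h2
    obtain ⟨hT0, hTrow, hTcol, hTbd⟩ := hT
    constructor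
    · intro j hj hj1
      exact hTrow r j ((mem_skewCells hl).2 ⟨h1, h2, hj, by omega⟩)
        ((mem_skewCells hl).2 ⟨h1, h2, by omega, hj1⟩)
    · intro j hj hjl
      exact hTbd (r, j) ((mem_skewCells hl).2 ⟨h1, h2, hj, hjl⟩)
  have memPsi : ∀ (T : (ℕ × ℕ) → ℕ), T ∈ SSCTset n (skewCells l mu ℓ) →
      psi n ℓ l mu T ∈ (Fintype.piFinset (fun i : Fin ℓ =>
          (range (l (i.1 + 1) + n - (i.1 + 1))).powersetCard
            (mu (i.1 + 1) + n - (i.1 + 1)))).filter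
        (fun S => ∀ p q : Fin ℓ, p < q → ∀ x ≤ l (q.1 + 1) + n - (q.1 + 1),
          hgt S p x < hgt S q x) := by
    intro T hT
    have hrf := rowFacts T hT
    have hcardpsi : ∀ p : Fin ℓ, (psi n ℓ l mu T p).card = mu (p.1 + 1) + n - (p.1 + 1) := by
      intro p
      have hp2 := p.2
      have hD : Dset n l mu T (p.1 + 1) ⊆ range (l (p.1 + 1) + n - (p.1 + 1)) :=
        Dset_subset (by omega) (by omega)
      have hcD : (Dset n l mu T (p.1 + 1)).card = l (p.1 + 1) - mu (p.1 + 1) :=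
        card_Dset (by omega) (by omega) (hrf _ (by omega) (by omega)).1
          (hrf _ (by omega) (by omega)).2
      have hs := hsub (p.1 + 1) (by omega)
      show (range (l (p.1 + 1) + n - (p.1 + 1)) \ Dset n l mu T (p.1 + 1)).card = _
      rw [Finset.card_sdiff_of_subset hD, card_range, hcD]
      omega
    have hgt_eq : ∀ (p : Fin ℓ) (x : ℕ), x ≤ l (p.1 + 1) + n - (p.1 + 1) →
        hgt (psi n ℓ l mu T) p x
          = (x : ℤ) - ((Dset n l mu T (p.1 + 1) ∩ range x).card : ℤ)
            - ((mu (p.1 + 1) + n - (p.1 + 1) : ℕ) : ℤ) := by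
      intro p x hx
      have hp2 := p.2
      have hD : Dset n l mu T (p.1 + 1) ⊆ range (l (p.1 + 1) + n - (p.1 + 1)) :=
        Dset_subset (by omega) (by omega)
      have h1 := cnt_compl hD hx
      have h2 := hcardpsi p
      show ((psi n ℓ l mu T p ∩ range x).card : ℤ) - ((psi n ℓ l mu T p).card : ℤ) = _
      rw [h2]
      show (((range (l (p.1 + 1) + n - (p.1 + 1)) \ Dset n l mu T (p.1 + 1)) ∩ range x).card : ℤ)
        - _ = _
      omega
    rw [Finset.mem_filter]
    refine ⟨?_, ?_⟩
    · rw [Fintype.mem_piFinset]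
      intro p
      rw [Finset.mem_powersetCard]
      exact ⟨sdiff_subset, hcardpsi p⟩
    · apply NC_of_adjacent hA
      intro p q hq1 x hx
      have hp2 := p.2
      have hq2' := q.2
      have hql : q.1 < ℓ := q.2
      rw [hq1] at hx
      have hgtq := hgt_eq q x (by rw [hq1]; exact hx)
      rw [hq1] at hgtq
      have hxr : x ≤ l (p.1 + 1) + n - (p.1 + 1) := by
        have h1 := hl (p.1 + 1) (p.1 + 1 + 1) (by omega) (by omega)
        have h2 : q.1 < ℓ := q.2
        omega
      have hgtp := hgt_eq p x hxr
      have hqlℓ : p.1 + 1 + 1 ≤ ℓ := by omega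
      have hmur := hmu (p.1 + 1) (p.1 + 1 + 1) (by omega) (by omega)
      have hlr := hl (p.1 + 1) (p.1 + 1 + 1) (by omega) (by omega)
      have hcD' : (Dset n l mu T (p.1 + 1 + 1)).card = l (p.1 + 1 + 1) - mu (p.1 + 1 + 1) :=
        card_Dset (by omega) (by omega) (hrf _ (by omega) (by omega)).1
          (hrf _ (by omega) (by omega)).2
      have hcD : (Dset n l mu T (p.1 + 1)).card = l (p.1 + 1) - mu (p.1 + 1) :=
        card_Dset (by omega) (by omega) (hrf _ (by omega) (by omega)).1
          (hrf _ (by omega) (by omega)).2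
      have hEL : ∀ kk, kk + (mu (p.1 + 1) - mu (p.1 + 1 + 1)) < (Dset n l mu T (p.1 + 1 + 1)).card →
          kk < (Dset n l mu T (p.1 + 1)).card ∧
          nth (Dset n l mu T (p.1 + 1)) kk
            ≤ nth (Dset n l mu T (p.1 + 1 + 1)) (kk + (mu (p.1 + 1) - mu (p.1 + 1 + 1))) := by
        intro kk hkk
        rw [hcD'] at hkk
        have hjl' : mu (p.1 + 1) + 1 + kk ≤ l (p.1 + 1 + 1) := by omega
        have hkX : kk < l (p.1 + 1) - mu (p.1 + 1) := by omega
        have h1 := nth_Dset (n := n) (l := l) (mu := mu) (T := T) (r := p.1 + 1)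
          (by omega) (by omega) (hrf _ (by omega) (by omega)).1
          (hrf _ (by omega) (by omega)).2 hkX
        have h2 := nth_Dset (n := n) (l := l) (mu := mu) (T := T) (r := p.1 + 1 + 1)
          (by omega) (by omega) (hrf _ (by omega) (by omega)).1
          (hrf _ (by omega) (by omega)).2
          (k := kk + (mu (p.1 + 1) - mu (p.1 + 1 + 1))) (by omega)
        rw [show mu (p.1 + 1 + 1) + 1 + (kk + (mu (p.1 + 1) - mu (p.1 + 1 + 1)))
          = mu (p.1 + 1) + 1 + kk from by omega] at h2
        have hcol := hT.2.2.1 (p.1 + 1) (mu (p.1 + 1) + 1 + kk)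
          ((mem_skewCells hl).2 ⟨by omega, by omega, by omega, by omega⟩)
          ((mem_skewCells hl).2 ⟨by omega, by omega, by omega, by omega⟩)
        have hbd1 := (hrf (p.1 + 1) (by omega) (by omega)).2 (mu (p.1 + 1) + 1 + kk)
          (by omega) (by omega)
        rw [hcD]
        refine ⟨hkX, ?_⟩
        rw [h1, h2]
        omega
      have hCF := (count_iff_elem (X := Dset n l mu T (p.1 + 1))
        (Y := Dset n l mu T (p.1 + 1 + 1)) (a := l (p.1 + 1 + 1) + n - (p.1 + 1 + 1))
        (c := mu (p.1 + 1) - mu (p.1 + 1 + 1))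
        (Dset_subset (by omega) (by omega))).2 hEL
      have hc := hCF x hx
      rw [hgtp, hgtq]
      omega
  have memPhi : ∀ (S : Fin ℓ → Finset ℕ), S ∈ (Fintype.piFinset (fun i : Fin ℓ =>
          (range (l (i.1 + 1) + n - (i.1 + 1))).powersetCard
            (mu (i.1 + 1) + n - (i.1 + 1)))).filter
        (fun S => ∀ p q : Fin ℓ, p < q → ∀ x ≤ l (q.1 + 1) + n - (q.1 + 1),
          hgt S p x < hgt S q x) →
      phi n ℓ l mu S ∈ SSCTset n (skewCells l mu ℓ) := by
    intro S hS
    rw [Finset.mem_filter] at hS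
    obtain ⟨hSmem, hNC⟩ := hS
    rw [Fintype.mem_piFinset] at hSmem
    have hS1 : ∀ p : Fin ℓ, S p ⊆ range (l (p.1 + 1) + n - (p.1 + 1)) ∧
        (S p).card = mu (p.1 + 1) + n - (p.1 + 1) := by
      intro p
      have := hSmem p
      rwa [Finset.mem_powersetCard] at this
    have hS1' : ∀ r (hr : r - 1 < ℓ), 1 ≤ r →
        S ⟨r - 1, hr⟩ ⊆ range (l r + n - r) ∧ (S ⟨r - 1, hr⟩).card = mu r + n - r := by
      intro r hr h1
      have h := hS1 ⟨r - 1, hr⟩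
      rw [show ((⟨r - 1, hr⟩ : Fin ℓ) : ℕ) = r - 1 from rfl,
        show r - 1 + 1 = r from by omega] at h
      exact h
    have hDp : ∀ r (hr : r - 1 < ℓ), 1 ≤ r →
        (range (l r + n - r) \ S ⟨r - 1, hr⟩).card = l r - mu r := by
      intro r hr h1
      rw [Finset.card_sdiff_of_subset (hS1' r hr h1).1, card_range, (hS1' r hr h1).2]
      have := hsub r h1
      omega
    have hnthup : ∀ r (hr : r - 1 < ℓ), 1 ≤ r → ∀ k, k < l r - mu r →
        nth (range (l r + n - r) \ S ⟨r - 1, hr⟩) k + (l r - mu r) ≤ (l r + n - r) + k := by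
      intro r hr h1 k hk
      have h2 := nth_upper (a := l r + n - r)
        (sdiff_subset (s := range (l r + n - r)) (t := S ⟨r - 1, hr⟩))
        (by rw [hDp r hr h1]; exact hk)
      rwa [hDp r hr h1] at h2
    refine ⟨?_, ?_, ?_, ?_⟩
    · rintro ⟨i, j⟩ hc
      rw [mem_skewCells hl] at hc
      exact phi_neg S hc
    · intro i j h1 h2
      rw [mem_skewCells hl] at h1 h2
      obtain ⟨hi1, hi2, hj1, hj2⟩ := h1
      have hj3 := h2.2.2.2
      have hr : i - 1 < ℓ := by omega
      rw [phi_pos S hi1 hi2 hj1 hj2 hr, phi_pos S hi1 hi2 (by omega) hj3 hr]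
      have hcard := hDp i hr hi1
      have hlt : nth (range (l i + n - i) \ S ⟨i - 1, hr⟩) (j - mu i - 1)
          < nth (range (l i + n - i) \ S ⟨i - 1, hr⟩) (j + 1 - mu i - 1) := by
        apply nth_lt_nth (by omega)
        rw [hcard]; omega
      have hup2 := hnthup i hr hi1 (j + 1 - mu i - 1) (by omega)
      omega
    · intro i j h1 h2
      rw [mem_skewCells hl] at h1 h2
      obtain ⟨hi1, hi2, hj1, hj2⟩ := h1
      obtain ⟨hi1', hi2', hj1', hj2'⟩ := h2
      have hr : i - 1 < ℓ := by omega
      have hr' : i + 1 - 1 < ℓ := by omega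
      rw [phi_pos S hi1 hi2 hj1 hj2 hr, phi_pos S (by omega) hi2' hj1' hj2' hr']
      have hppqq : (⟨i - 1, hr⟩ : Fin ℓ) < (⟨i + 1 - 1, hr'⟩ : Fin ℓ) := by
        rw [Fin.lt_def]; simp; omega
      have hgt_eq' : ∀ (p : Fin ℓ) (x : ℕ), x ≤ l (p.1 + 1) + n - (p.1 + 1) →
          hgt S p x = (x : ℤ)
            - (((range (l (p.1 + 1) + n - (p.1 + 1)) \ S p) ∩ range x).card : ℤ)
            - ((mu (p.1 + 1) + n - (p.1 + 1) : ℕ) : ℤ) := by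
        intro p x hx
        have hc1 := cnt_compl (hS1 p).1 hx
        have hc2 := (hS1 p).2
        show ((S p ∩ range x).card : ℤ) - ((S p).card : ℤ) = _
        rw [hc2]
        omega
      have hmui := hmu i (i + 1) (by omega) (by omega)
      have hli := hl i (i + 1) (by omega) (by omega)
      have hCF : ∀ x ≤ l (i + 1) + n - (i + 1),
          ((range (l (i + 1) + n - (i + 1)) \ S ⟨i + 1 - 1, hr'⟩) ∩ range x).card
            ≤ ((range (l i + n - i) \ S ⟨i - 1, hr⟩) ∩ range x).card + (mu i - mu (i + 1)) := by
        intro x hx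
        have hHF := hNC ⟨i - 1, hr⟩ ⟨i + 1 - 1, hr'⟩ hppqq x hx
        have e1 := hgt_eq' ⟨i - 1, hr⟩ x (by
          rw [show ((⟨i - 1, hr⟩ : Fin ℓ)).1 = i - 1 from rfl,
            show i - 1 + 1 = i from by omega]
          omega)
        have e2 := hgt_eq' ⟨i + 1 - 1, hr'⟩ x hx
        rw [show ((⟨i - 1, hr⟩ : Fin ℓ)).1 = i - 1 from rfl,
          show i - 1 + 1 = i from by omega] at e1
        rw [show ((⟨i + 1 - 1, hr'⟩ : Fin ℓ)).1 = i + 1 - 1 from rfl,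
          show i + 1 - 1 + 1 = i + 1 from by omega] at e2
        rw [e1, e2] at hHF
        omega
      have hEL := (count_iff_elem (X := range (l i + n - i) \ S ⟨i - 1, hr⟩)
        (Y := range (l (i + 1) + n - (i + 1)) \ S ⟨i + 1 - 1, hr'⟩)
        (a := l (i + 1) + n - (i + 1)) (c := mu i - mu (i + 1))
        (sdiff_subset)).1 hCF (j - mu i - 1)
        (by rw [hDp (i + 1) hr' (by omega)]; omega)
      obtain ⟨hkP, hle⟩ := hEL
      rw [show j - mu i - 1 + (mu i - mu (i + 1)) = j - mu (i + 1) - 1 from by omega] at hle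
      rw [hDp i hr hi1] at hkP
      have hupP := hnthup i hr hi1 (j - mu i - 1) hkP
      have hupQ := hnthup (i + 1) hr' (by omega) (j - mu (i + 1) - 1) (by omega)
      omega
    · rintro ⟨i, j⟩ hc
      rw [mem_skewCells hl] at hc
      obtain ⟨hi1, hi2, hj1, hj2⟩ := hc
      have hr : i - 1 < ℓ := by omega
      show phi n ℓ l mu S (i, j) < n + j - i
      rw [phi_pos S hi1 hi2 hj1 hj2 hr]
      omega
  have phipsi : ∀ (T : (ℕ × ℕ) → ℕ), T ∈ SSCTset n (skewCells l mu ℓ) →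
      phi n ℓ l mu (psi n ℓ l mu T) = T := by
    intro T hT
    have hrf := rowFacts T hT
    funext c
    obtain ⟨i, j⟩ := c
    by_cases hc : (i, j) ∈ skewCells l mu ℓ
    · rw [mem_skewCells hl] at hc
      obtain ⟨hi1, hi2, hj1, hj2⟩ := hc
      have hr : i - 1 < ℓ := by omega
      rw [phi_pos _ hi1 hi2 hj1 hj2 hr]
      have hpsiT : psi n ℓ l mu T ⟨i - 1, hr⟩ = range (l i + n - i) \ Dset n l mu T i := by
        show range (l ((⟨i - 1, hr⟩ : Fin ℓ).1 + 1) + n - ((⟨i - 1, hr⟩ : Fin ℓ).1 + 1))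
          \ Dset n l mu T ((⟨i - 1, hr⟩ : Fin ℓ).1 + 1) = _
        rw [show ((⟨i - 1, hr⟩ : Fin ℓ)).1 = i - 1 from rfl,
          show i - 1 + 1 = i from by omega]
      rw [hpsiT, sdiff_sdiff_range (Dset_subset (by omega) (by omega))]
      rw [nth_Dset (by omega) (by omega) (hrf i (by omega) (by omega)).1
        (hrf i (by omega) (by omega)).2 (k := j - mu i - 1) (by omega)]
      rw [show mu i + 1 + (j - mu i - 1) = j from by omega]
      have hbd := (hrf i (by omega) (by omega)).2 j hj1 hj2
      omega
    · have h0 := hT.1 (i, j) hc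
      rw [mem_skewCells hl] at hc
      rw [phi_neg _ hc, h0]
  have psiphi : ∀ (S : Fin ℓ → Finset ℕ), S ∈ (Fintype.piFinset (fun i : Fin ℓ =>
          (range (l (i.1 + 1) + n - (i.1 + 1))).powersetCard
            (mu (i.1 + 1) + n - (i.1 + 1)))).filter
        (fun S => ∀ p q : Fin ℓ, p < q → ∀ x ≤ l (q.1 + 1) + n - (q.1 + 1),
          hgt S p x < hgt S q x) →
      psi n ℓ l mu (phi n ℓ l mu S) = S := by
    intro S hS
    rw [Finset.mem_filter] at hS
    obtain ⟨hSmem, hNC⟩ := hS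
    rw [Fintype.mem_piFinset] at hSmem
    have hS1 : ∀ p : Fin ℓ, S p ⊆ range (l (p.1 + 1) + n - (p.1 + 1)) ∧
        (S p).card = mu (p.1 + 1) + n - (p.1 + 1) := by
      intro p
      have := hSmem p
      rwa [Finset.mem_powersetCard] at this
    have hDp : ∀ p : Fin ℓ, (range (l (p.1 + 1) + n - (p.1 + 1)) \ S p).card
        = l (p.1 + 1) - mu (p.1 + 1) := by
      intro p
      have hp2 := p.2
      rw [Finset.card_sdiff_of_subset (hS1 p).1, card_range, (hS1 p).2]
      have := hsub (p.1 + 1) (by omega)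
      omega
    have hnthup : ∀ (p : Fin ℓ) k, k < l (p.1 + 1) - mu (p.1 + 1) →
        nth (range (l (p.1 + 1) + n - (p.1 + 1)) \ S p) k + (l (p.1 + 1) - mu (p.1 + 1))
          ≤ (l (p.1 + 1) + n - (p.1 + 1)) + k := by
      intro p k hk
      have h2 := nth_upper (a := l (p.1 + 1) + n - (p.1 + 1))
        (sdiff_subset (s := range (l (p.1 + 1) + n - (p.1 + 1))) (t := S p))
        (by rw [hDp p]; exact hk)
      rwa [hDp p] at h2
    funext p
    have hp2 := p.2
    have hfin : (⟨p.1 + 1 - 1, by omega⟩ : Fin ℓ) = p := Fin.ext rfl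
    show range (l (p.1 + 1) + n - (p.1 + 1))
      \ Dset n l mu (phi n ℓ l mu S) (p.1 + 1) = S p
    have hDeq : Dset n l mu (phi n ℓ l mu S) (p.1 + 1)
        = range (l (p.1 + 1) + n - (p.1 + 1)) \ S p := by
      ext d
      unfold Dset
      rw [Finset.mem_image]
      constructor
      · rintro ⟨j, hj, rfl⟩
        rw [mem_Icc] at hj
        rw [phi_pos S (by omega) (by omega) (by omega) (by omega) (by omega)]
        rw [hfin]
        have hk : j - mu (p.1 + 1) - 1 < l (p.1 + 1) - mu (p.1 + 1) := by omega
        have hup := hnthup p (j - mu (p.1 + 1) - 1) hk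
        rw [show n + j - (p.1 + 1) - 1 - (n + j - (p.1 + 1) - 1 -
          nth (range (l (p.1 + 1) + n - (p.1 + 1)) \ S p) (j - mu (p.1 + 1) - 1))
          = nth (range (l (p.1 + 1) + n - (p.1 + 1)) \ S p) (j - mu (p.1 + 1) - 1)
          from by omega]
        exact nth_mem (by rw [hDp p]; exact hk)
      · intro hd
        obtain ⟨k, hk, hke⟩ := exists_nth_eq hd
        rw [hDp p] at hk
        have := hsub (p.1 + 1) (by omega)
        refine ⟨mu (p.1 + 1) + 1 + k, mem_Icc.2 ⟨by omega, by omega⟩, ?_⟩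
        rw [phi_pos S (by omega) (by omega) (by omega) (by omega) (by omega)]
        rw [hfin]
        rw [show mu (p.1 + 1) + 1 + k - mu (p.1 + 1) - 1 = k from by omega]
        have hup := hnthup p k hk
        rw [hke]
        omega
    rw [hDeq, sdiff_sdiff_range (hS1 p).1]
  exact {
    toFun := fun T => ⟨psi n ℓ l mu T.1, memPsi T.1 T.2⟩
    invFun := fun S => ⟨phi n ℓ l mu S.1, memPhi S.1 S.2⟩
    left_inv := fun T => Subtype.ext (phipsi T.1 T.2)
    right_inv := fun S => Subtype.ext (psiphi S.1 S.2) }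

end SSCTaux

set_option maxHeartbeats 1000000

/-- **Proposition (first equality).** `|SSCT_n(λ/μ)| = det(binom(λ_i+n-i, μ_j+n-j))_{1≤i,j≤ℓ}`. -/
theorem ssct_count_eq_det (n ℓ : ℕ) (l mu : ℕ → ℕ)
    (hl : ∀ i j, 1 ≤ i → i ≤ j → l j ≤ l i)
    (hl0 : ∀ i, ℓ < i → l i = 0)
    (hlpos : ∀ i, 1 ≤ i → i ≤ ℓ → 0 < l i)
    (hmu : ∀ i j, 1 ≤ i → i ≤ j → mu j ≤ mu i)
    (hsub : ∀ i, 1 ≤ i → mu i ≤ l i)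
    (hn : ℓ ≤ n) :
    (Nat.card (SSCTset n (skewCells l mu ℓ)) : ℤ) =
      Matrix.det (Matrix.of fun i j : Fin ℓ =>
        ((l (i.1 + 1) + n - (i.1 + 1)).choose (mu (j.1 + 1) + n - (j.1 + 1)) : ℤ)) := by
  classical
  have hA : ∀ p q : Fin ℓ, p < q →
      l (q.1 + 1) + n - (q.1 + 1) < l (p.1 + 1) + n - (p.1 + 1) := by
    intro p q hpq
    have hpq' : p.1 < q.1 := hpq
    have h1 := hl (p.1 + 1) (q.1 + 1) (by omega) (by omega)
    have h2 := q.2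
    omega
  have hB : ∀ p q : Fin ℓ, p < q →
      mu (q.1 + 1) + n - (q.1 + 1) < mu (p.1 + 1) + n - (p.1 + 1) := by
    intro p q hpq
    have hpq' : p.1 < q.1 := hpq
    have h1 := hmu (p.1 + 1) (q.1 + 1) (by omega) (by omega)
    have h2 := q.2
    omega
  have key : (∑ σ : Equiv.Perm (Fin ℓ), ((Equiv.Perm.sign σ : ℤˣ) : ℤ) *
        ∏ i : Fin ℓ, ((l (i.1 + 1) + n - (i.1 + 1)).choose
          (mu ((σ i).1 + 1) + n - ((σ i).1 + 1)) : ℤ))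
      = (((Fintype.piFinset (fun i : Fin ℓ =>
            (Finset.range (l (i.1 + 1) + n - (i.1 + 1))).powersetCard
              (mu (i.1 + 1) + n - (i.1 + 1)))).filter
          (fun S => ∀ p q : Fin ℓ, p < q → ∀ x ≤ l (q.1 + 1) + n - (q.1 + 1),
            SSCTaux.hgt S p x < SSCTaux.hgt S q x)).card : ℤ) :=
    SSCTaux.lgv ℓ _ _ hA hB
  have hcard := SSCTaux.ssct_card n ℓ l mu hl hmu hsub hn
  rw [hcard, ← key, ← Matrix.det_transpose, Matrix.det_apply]
  refine Finset.sum_congr rfl fun σ _ => ?_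
  rw [Units.smul_def]
  congr 1
end

section
/- (Jacobi–Trudi identity for lecture hall tableaux.) Let n, m be nonnegative integers and let μ ⊆ λ be partitions with ℓ = ℓ(λ) ≤ n. Then, as polynomials in x_0,…,x_{m−1}, L^n_{λ/μ}(x_0,…,x_{m−1}) = det( L^{μ_j+n−j+1}_{(λ_i−μ_j−i+j)}(x_0,…,x_{m−1}) )_{1 ≤ i,j ≤ ℓ}, where for a one-row shape (k) one sets L^N_{(k)} = 1 if k = 0 and L^N_{(k)} = 0 if k < 0. -/
open Finset MvPolynomial

noncomputable section
namespace JTLGV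
open Finset MvPolynomial
open scoped Classical

/-- normalizing constant for sentinel values -/
def Kq (e Λ : ℕ) : ℚ := e + Λ + 2

lemma Kq_pos (e Λ : ℕ) : (0:ℚ) < Kq e Λ := by unfold Kq; positivity

/-- head sentinel value -/
def hd (m e Λ : ℕ) (A : ℤ) : ℚ := m + ((e:ℚ) + 1 + A) / Kq e Λ
/-- tail sentinel value -/
def tl (e Λ : ℕ) (B : ℤ) : ℚ := -1 + ((e:ℚ) + 1 + B) / Kq e Λ

lemma hd_lt_hd (m e Λ : ℕ) {A A' : ℤ} (h : A < A') : hd m e Λ A < hd m e Λ A' := by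
  have h2 : ((e:ℚ) + 1 + A) < ((e:ℚ) + 1 + A') := by
    have : (A:ℚ) < A' := by exact_mod_cast h
    linarith
  have h3 := (div_lt_div_iff_of_pos_right (Kq_pos e Λ)).2 h2
  unfold hd; linarith

lemma tl_lt_tl (e Λ : ℕ) {B B' : ℤ} (h : B < B') : tl e Λ B < tl e Λ B' := by
  have h2 : ((e:ℚ) + 1 + B) < ((e:ℚ) + 1 + B') := by
    have : (B:ℚ) < B' := by exact_mod_cast h
    linarith
  have h3 := (div_lt_div_iff_of_pos_right (Kq_pos e Λ)).2 h2
  unfold tl; linarith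

lemma m_lt_hd (m e Λ : ℕ) {A : ℤ} (hA : -(e:ℤ) ≤ A) : (m:ℚ) < hd m e Λ A := by
  have hA' : (-(e:ℚ)) ≤ (A:ℚ) := by exact_mod_cast hA
  have h1 : (0:ℚ) < ((e:ℚ) + 1 + A) := by linarith
  have h2 := div_pos h1 (Kq_pos e Λ)
  unfold hd; linarith

lemma tl_neg (e Λ : ℕ) {B : ℤ} (hB : B ≤ (Λ:ℤ)) : tl e Λ B < 0 := by
  have hB' : (B:ℚ) ≤ (Λ:ℚ) := by exact_mod_cast hB
  have h1 : ((e:ℚ) + 1 + B) < Kq e Λ := by unfold Kq; linarith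
  have h2 : ((e:ℚ) + 1 + B) / Kq e Λ < 1 := (div_lt_one (Kq_pos e Λ)).2 h1
  unfold tl; linarith

/-- Validity of a strand with source `A` and sink `B`. -/
structure SValid (n m e Λ : ℕ) (A B : ℤ) (F : ℤ → ℚ) : Prop where
  hAlow : -(e:ℤ) ≤ A
  hAB : A ≤ B
  hBhigh : B ≤ (Λ:ℤ)
  hhead : ∀ d : ℤ, d ≤ A → F d = hd m e Λ A
  htail : ∀ d : ℤ, B < d → F d = tl e Λ B
  hreal : ∀ d : ℤ, A < d → d ≤ B → ∃ w : ℕ, w < m * (n + d).toNat ∧ F d = (w : ℚ) / ((n:ℚ) + d)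
  hmono : ∀ d : ℤ, F d ≤ F (d - 1)

variable {n m e Λ : ℕ} {A B : ℤ} {F : ℤ → ℚ}

lemma den_pos (hn : e ≤ n) (hA : -(e:ℤ) ≤ A) {d : ℤ} (hAd : A < d) : (0:ℚ) < (n:ℚ) + d := by
  have h : (0:ℤ) < (n:ℤ) + d := by omega
  exact_mod_cast h

lemma toNat_den_cast (hn : e ≤ n) (hA : -(e:ℤ) ≤ A) {d : ℤ} (hAd : A < d) :
    (((n + d).toNat : ℕ) : ℚ) = (n:ℚ) + d := by
  have h : (0:ℤ) ≤ (n:ℤ) + d := by omega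
  have h2 := Int.toNat_of_nonneg h
  exact_mod_cast congrArg (fun z : ℤ => (z : ℚ)) h2

lemma SValid.nonneg (hn : e ≤ n) (sv : SValid n m e Λ A B F) {d : ℤ} (h1 : A < d) (h2 : d ≤ B) :
    0 ≤ F d := by
  obtain ⟨w, _, hF⟩ := sv.hreal d h1 h2
  rw [hF]
  exact div_nonneg (by positivity) (le_of_lt (den_pos hn sv.hAlow h1))

lemma SValid.real_lt_m (hn : e ≤ n) (sv : SValid n m e Λ A B F) {d : ℤ} (h1 : A < d) (h2 : d ≤ B) :
    F d < (m:ℚ) := by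
  obtain ⟨w, hw, hF⟩ := sv.hreal d h1 h2
  have hden := den_pos hn sv.hAlow h1
  rw [hF, div_lt_iff₀ hden]
  calc (w:ℚ) < ((m * (n + d).toNat : ℕ) : ℚ) := by exact_mod_cast hw
    _ = (m:ℚ) * (((n + d).toNat : ℕ) : ℚ) := by push_cast; ring
    _ = (m:ℚ) * ((n:ℚ) + d) := by rw [toNat_den_cast hn sv.hAlow h1]

lemma SValid.le_hd (hn : e ≤ n) (sv : SValid n m e Λ A B F) (d : ℤ) : F d ≤ hd m e Λ A := by
  rcases le_or_gt d A with h | h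
  · rw [sv.hhead d h]
  · rcases le_or_gt d B with h2 | h2
    · exact le_of_lt (lt_trans (sv.real_lt_m hn h h2) (m_lt_hd m e Λ sv.hAlow))
    · rw [sv.htail d h2]
      have h3 : tl e Λ B < 0 := tl_neg e Λ sv.hBhigh
      have h4 : (0:ℚ) ≤ (m:ℚ) := by positivity
      exact le_of_lt (lt_of_lt_of_le h3 (le_of_lt (lt_of_le_of_lt h4 (m_lt_hd m e Λ sv.hAlow))))

lemma SValid.tl_lt_val (hn : e ≤ n) (sv : SValid n m e Λ A B F) {B' : ℤ} (h : B' < B) (d : ℤ) :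
    tl e Λ B' < F d := by
  have hB' : B' ≤ (Λ:ℤ) := le_trans (le_of_lt h) sv.hBhigh
  have htn : tl e Λ B' < 0 := tl_neg e Λ hB'
  rcases le_or_gt d A with h1 | h1
  · rw [sv.hhead d h1]
    have h4 : (0:ℚ) ≤ (m:ℚ) := by positivity
    exact lt_of_lt_of_le htn (le_trans h4 (le_of_lt (m_lt_hd m e Λ sv.hAlow)))
  · rcases le_or_gt d B with h2 | h2
    · exact lt_of_lt_of_le htn (sv.nonneg hn h1 h2)
    · rw [sv.htail d h2]; exact tl_lt_tl e Λ h

lemma floor_real (hn : e ≤ n) (hA : -(e:ℤ) ≤ A) {d : ℤ} (hAd : A < d) (w : ℕ) :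
    ⌊(w:ℚ) / ((n:ℚ) + d)⌋₊ = w / (n + d).toNat := by
  rw [← toNat_den_cast hn hA hAd, Nat.floor_div_natCast, Nat.floor_natCast]

/-- The finite set of valid strands with source `A` and sink `B`. -/
def strandFinset (n m e Λ : ℕ) (A B : ℤ) : Finset (ℤ → ℚ) :=
  (((Finset.Icc A B).pi fun _ => Finset.range (m * (n + Λ) + 1)).image
    fun f d => if d ≤ A then hd m e Λ A
      else if hmem : d ∈ Finset.Icc A B then ((f d hmem : ℕ) : ℚ) / ((n:ℚ) + d)
      else tl e Λ B).filter fun F => SValid n m e Λ A B F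

lemma mem_strandFinset (hn : e ≤ n) :
    F ∈ strandFinset n m e Λ A B ↔ SValid n m e Λ A B F := by
  unfold strandFinset
  constructor
  · exact fun h => (Finset.mem_filter.1 h).2
  · intro sv
    refine Finset.mem_filter.2 ⟨?_, sv⟩
    refine Finset.mem_image.2 ⟨fun d _ => if hAd : A < d then ⌊F d * ((n:ℚ) + d)⌋₊ else 0, ?_, ?_⟩
    · refine Finset.mem_pi.2 fun d hdm => ?_
      by_cases hAd : A < d
      · have hdB : d ≤ B := (Finset.mem_Icc.1 hdm).2
        obtain ⟨w, hw, hF⟩ := sv.hreal d hAd hdB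
        have hden := den_pos hn sv.hAlow hAd
        have hfl : ⌊F d * ((n:ℚ) + d)⌋₊ = w := by
          rw [hF, div_mul_cancel₀ _ (ne_of_gt hden), Nat.floor_natCast]
        simp only [dif_pos hAd, hfl]
        refine Finset.mem_range.2 (lt_of_lt_of_le hw ?_)
        have h1 : ((n:ℤ) + d).toNat ≤ n + Λ := by
          have : d ≤ (Λ:ℤ) := le_trans hdB sv.hBhigh
          omega
        exact le_trans (Nat.mul_le_mul_left m h1) (Nat.le_succ _)
      · simp only [dif_neg hAd]
        exact Finset.mem_range.2 (Nat.succ_le_succ (Nat.zero_le _))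
    · funext d
      rcases le_or_gt d A with h1 | h1
      · rw [if_pos h1, sv.hhead d h1]
      · rw [if_neg (not_le.2 h1)]
        rcases le_or_gt d B with h2 | h2
        · have hdm : d ∈ Finset.Icc A B := Finset.mem_Icc.2 ⟨le_of_lt h1, h2⟩
          rw [dif_pos hdm]
          obtain ⟨w, hw, hF⟩ := sv.hreal d h1 h2
          have hden := den_pos hn sv.hAlow h1
          have hfl : ⌊F d * ((n:ℚ) + d)⌋₊ = w := by
            rw [hF, div_mul_cancel₀ _ (ne_of_gt hden), Nat.floor_natCast]
          simp only [dif_pos h1, hfl]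
          rw [← hF]
        · have hdm : d ∉ Finset.Icc A B := by
            simp only [Finset.mem_Icc, not_and, not_le]
            exact fun _ => h2
          rw [dif_neg hdm, sv.htail d h2]

/-- weight of a strand -/
def wtS (n : ℕ) (A B : ℤ) (F : ℤ → ℚ) : MvPolynomial ℕ ℤ :=
  ∏ d ∈ Finset.Icc (A+1) B, X (⌊F d⌋₊)

end JTLGV
end
namespace JTLGV
open Finset MvPolynomial
open scoped Classical

variable {n m e Λ : ℕ} {A B : ℤ} {F : ℤ → ℚ}

lemma cast_helper (x : ℕ) (z : ℤ) (h : (x:ℤ) = z) : (x:ℚ) = (z:ℚ) := by exact_mod_cast h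

lemma mem_rowCells {k : ℕ} {c : ℕ × ℕ} :
    c ∈ skewCells (rowShape k) (fun _ => 0) 1 ↔ c.1 = 1 ∧ 1 ≤ c.2 ∧ c.2 ≤ k := by
  unfold skewCells rowShape
  simp only [Finset.mem_filter, Finset.mem_product, Finset.mem_Icc, if_pos rfl]
  constructor
  · rintro ⟨⟨⟨h1, h2⟩, ⟨h3, h4⟩⟩, h5, h6⟩
    have hc1 : c.1 = 1 := le_antisymm h2 h1
    rw [hc1] at h6
    simp only [if_pos rfl] at h6
    exact ⟨hc1, h3, h6⟩
  · rintro ⟨h1, h2, h3⟩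
    rw [h1]
    simp only [if_pos rfl]
    exact ⟨⟨⟨le_refl 1, le_refl 1⟩, ⟨h2, h3⟩⟩, h2, h3⟩

/-- extract the row tableau from a strand -/
def rowTab (n : ℕ) (A B : ℤ) (F : ℤ → ℚ) : ℕ × ℕ → ℕ := fun c =>
  if c.1 = 1 ∧ 1 ≤ c.2 ∧ (c.2 : ℤ) ≤ B - A then
    ⌊F (A + c.2) * ((n:ℚ) + (((A + c.2 : ℤ)) : ℚ))⌋₊ else 0

/-- reconstruct the strand from a row tableau -/
def stOf (n m e Λ : ℕ) (A B : ℤ) (T : ℕ × ℕ → ℕ) : ℤ → ℚ := fun d =>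
  if d ≤ A then hd m e Λ A
  else if d ≤ B then (T (1, (d - A).toNat) : ℚ) / ((n:ℚ) + d) else tl e Λ B

lemma SValid.num_spec (hn : e ≤ n) (sv : SValid n m e Λ A B F) {d : ℤ} (h1 : A < d) (h2 : d ≤ B) :
    ∃ w : ℕ, w < m * (n + d).toNat ∧ F d = (w : ℚ) / ((n:ℚ) + d) ∧
      ⌊F d * ((n:ℚ) + d)⌋₊ = w := by
  obtain ⟨w, hw, hF⟩ := sv.hreal d h1 h2
  have hden := den_pos hn sv.hAlow h1
  exact ⟨w, hw, hF, by rw [hF, div_mul_cancel₀ _ (ne_of_gt hden), Nat.floor_natCast]⟩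

lemma rowTab_real (hn : e ≤ n) (sv : SValid n m e Λ A B F) {t : ℕ} (h1 : 1 ≤ t)
    (h2 : (t : ℤ) ≤ B - A) :
    F (A + t) = ((rowTab n A B F (1, t) : ℕ) : ℚ) / ((n:ℚ) + (((A + t : ℤ)) : ℚ)) ∧
      rowTab n A B F (1, t) < m * (n + (A + t)).toNat := by
  have hd1 : A < A + t := by omega
  have hd2 : A + (t:ℤ) ≤ B := by omega
  obtain ⟨w, hw, hF, hfl⟩ := sv.num_spec hn hd1 hd2
  have hg : rowTab n A B F (1, t) = w := by
    unfold rowTab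
    rw [if_pos (show ((1:ℕ), t).1 = 1 ∧ 1 ≤ ((1:ℕ), t).2 ∧ (((1:ℕ), t).2 : ℤ) ≤ B - A from
      ⟨rfl, h1, h2⟩)]
    exact hfl
  rw [hg]
  exact ⟨hF, hw⟩

lemma rowTab_mem_LHTb (hn : e ≤ n) (hsv : SValid n m e Λ A B F) :
    rowTab n A B F ∈ LHTb ((n + 1 + A).toNat) m (skewCells (rowShape (B - A).toNat) (fun _ => 0) 1) := by
  have hA := hsv.hAlow
  have hABv := hsv.hAB
  have hBh := hsv.hBhigh
  have hN : (((n + 1 + A).toNat : ℕ) : ℤ) = (n:ℤ) + 1 + A := by omega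
  set N := (n + 1 + A).toNat with hNdef
  refine ⟨?_, ?_, ?_, ?_⟩
  · -- support
    intro c hc
    rw [mem_rowCells] at hc
    unfold rowTab
    rw [if_neg]
    intro ⟨g1, g2, g3⟩
    exact hc ⟨g1, g2, by omega⟩
  · -- horizontal
    intro i j hc1 hc2
    rw [mem_rowCells] at hc1 hc2
    obtain ⟨hi, hj1, hj2⟩ := hc1
    obtain ⟨_, _, hj3⟩ := hc2
    dsimp only at hi hj1 hj2 hj3
    subst hi
    have hjB : ((j:ℤ) + 1) ≤ B - A := by omega
    have h1 := rowTab_real hn hsv (t := j) hj1 (by omega)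
    have h2 := rowTab_real hn hsv (t := j + 1) (by omega) (by push_cast; omega)
    obtain ⟨hF1, _⟩ := h1
    obtain ⟨hF2, _⟩ := h2
    have hmono := hsv.hmono (A + j + 1)
    push_cast at hF1 hF2
    rw [show A + ((j:ℤ) + 1) = A + (j:ℤ) + 1 by ring] at hF2
    rw [show A + (j:ℤ) + 1 - 1 = A + (j:ℤ) by ring] at hmono
    rw [hF1, hF2] at hmono
    have hden1 : (0:ℚ) < (n:ℚ) + ((A:ℚ) + j) := by
      have := den_pos hn hA (d := A + j) (by omega)
      push_cast at this
      linarith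
    have hden2 : (0:ℚ) < (n:ℚ) + ((A:ℚ) + j) + 1 := by linarith
    rw [show (n:ℚ) + ((A:ℚ) + (↑j + 1)) = (n:ℚ) + ((A:ℚ) + j) + 1 by ring] at hmono
    rw [div_le_div_iff₀ hden2 hden1] at hmono
    have hcast1 : ((N + j - 1 : ℕ) : ℚ) = (n:ℚ) + ((A:ℚ) + (j:ℚ)) := by
      rw [cast_helper (N + j - 1) ((n:ℤ) + (A + j)) (by omega)]
      push_cast; ring
    have hcast2 : ((N + j + 1 - 1 : ℕ) : ℚ) = (n:ℚ) + ((A:ℚ) + (j:ℚ)) + 1 := by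
      rw [cast_helper (N + j + 1 - 1) ((n:ℤ) + (A + j) + 1) (by omega)]
      push_cast; ring
    have hfin : (rowTab n A B F (1, j + 1) : ℚ) * ((N + j - 1 : ℕ) : ℚ)
        ≤ (rowTab n A B F (1, j) : ℚ) * ((N + j + 1 - 1 : ℕ) : ℚ) := by
      rw [hcast1, hcast2]
      nlinarith [hmono, hden1]
    exact_mod_cast hfin
  · -- vertical : impossible
    intro i j hc1 hc2
    rw [mem_rowCells] at hc1 hc2
    omega
  · -- bound
    intro c hc
    rw [mem_rowCells] at hc
    obtain ⟨hc1, hc2, hc3⟩ := hc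
    have hc' : c = (1, c.2) := by
      cases c; simp only at hc1 ⊢; rw [hc1]
    have h1 := rowTab_real hn hsv hc2 (by omega : (c.2:ℤ) ≤ B - A)
    have hdenN : 0 < N + c.2 - c.1 := by omega
    rw [Nat.div_lt_iff_lt_mul hdenN]
    rw [hc'] at hc1 ⊢
    calc rowTab n A B F (1, c.2) < m * ((n:ℤ) + (A + c.2)).toNat := h1.2
      _ = m * (N + c.2 - (1, c.2).1) := by congr 1; simp only; omega

lemma stOf_valid (hn : e ≤ n) (hA : -(e:ℤ) ≤ A) (hB : B ≤ (Λ:ℤ)) (hAB : A ≤ B)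
    {T : ℕ × ℕ → ℕ}
    (hT : T ∈ LHTb ((n + 1 + A).toNat) m (skewCells (rowShape (B - A).toNat) (fun _ => 0) 1)) :
    SValid n m e Λ A B (stOf n m e Λ A B T) := by
  obtain ⟨hsupp, hhoriz, _, hbound⟩ := hT
  have hN : (((n + 1 + A).toNat : ℕ) : ℤ) = (n:ℤ) + 1 + A := by omega
  set N := (n + 1 + A).toNat with hNdef
  have hTbound : ∀ d : ℤ, A < d → d ≤ B → T (1, (d - A).toNat) < m * (n + d).toNat := by
    intro d h1 h2
    have hcell : ((1, (d - A).toNat) : ℕ × ℕ) ∈ skewCells (rowShape (B - A).toNat) (fun _ => 0) 1 := by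
      rw [mem_rowCells]; exact ⟨rfl, by omega, by omega⟩
    have hb := hbound _ hcell
    have hden' : 0 < N + (1, (d - A).toNat).2 - (1, (d - A).toNat).1 := by
      simp only; omega
    rw [Nat.div_lt_iff_lt_mul hden'] at hb
    calc T (1, (d - A).toNat) < m * (N + (1, (d - A).toNat).2 - (1, (d - A).toNat).1) := hb
      _ = m * ((n:ℤ) + d).toNat := by congr 1; simp only; omega
  have hstreal : ∀ d : ℤ, A < d → d ≤ B →
      stOf n m e Λ A B T d = (T (1, (d - A).toNat) : ℚ) / ((n:ℚ) + d) := by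
    intro d h1 h2
    unfold stOf
    rw [if_neg (not_le.2 h1), if_pos h2]
  have hreal : ∀ d : ℤ, A < d → d ≤ B →
      ∃ w : ℕ, w < m * (n + d).toNat ∧ stOf n m e Λ A B T d = (w : ℚ) / ((n:ℚ) + d) :=
    fun d h1 h2 => ⟨T (1, (d - A).toNat), hTbound d h1 h2, hstreal d h1 h2⟩
  refine ⟨hA, hAB, hB, ?_, ?_, hreal, ?_⟩
  · intro d h1; unfold stOf; rw [if_pos h1]
  · intro d h1; unfold stOf; rw [if_neg (by omega : ¬ d ≤ A), if_neg (not_le.2 h1)]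
  · -- monotone
    intro d
    rcases le_or_gt d A with h1 | h1
    · unfold stOf; rw [if_pos h1, if_pos (by omega : d - 1 ≤ A)]
    · rcases le_or_gt d B with h2 | h2
      · have hF := hstreal d h1 h2
        have hden := den_pos hn hA h1
        have hwm : (T (1, (d - A).toNat) : ℚ) / ((n:ℚ) + d) < m := by
          rw [div_lt_iff₀ hden]
          calc (T (1, (d - A).toNat) : ℚ) < ((m * (n + d).toNat : ℕ) : ℚ) := by
                exact_mod_cast hTbound d h1 h2
            _ = (m:ℚ) * ((n:ℚ) + d) := by push_cast [toNat_den_cast hn hA h1]; ring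
        rcases le_or_gt d (A + 1) with h3 | h3
        · have hd1 : d - 1 ≤ A := by omega
          rw [hF]
          unfold stOf
          rw [if_pos hd1]
          have := m_lt_hd m e Λ hA
          linarith
        · -- both real : use horizontal condition
          have h4 : A < d - 1 := by omega
          have hF' := hstreal (d - 1) h4 (by omega)
          rw [hF, hF']
          have hden' := den_pos hn hA h4
          set t := (d - A).toNat with ht
          have htt : (d - 1 - A).toNat = t - 1 := by omega
          have ht2 : 2 ≤ t := by omega
          have hcell1 : ((1, t - 1) : ℕ × ℕ) ∈ skewCells (rowShape (B - A).toNat) (fun _ => 0) 1 := by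
            rw [mem_rowCells]; exact ⟨rfl, by omega, by omega⟩
          have hcell2 : ((1, (t-1) + 1) : ℕ × ℕ) ∈ skewCells (rowShape (B - A).toNat) (fun _ => 0) 1 := by
            rw [mem_rowCells]; exact ⟨rfl, by omega, by omega⟩
          have hh := hhoriz 1 (t - 1) hcell1 hcell2
          rw [show (t - 1) + 1 = t by omega] at hh
          rw [htt]
          -- hh : T (1, t) * (N + (t-1) - 1) ≤ T (1, t-1) * (N + (t-1) + 1 - 1)
          have hhq : (T (1, t) : ℚ) * ((N + (t - 1) - 1 : ℕ) : ℚ)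
              ≤ (T (1, t - 1) : ℚ) * ((N + (t - 1) + 1 - 1 : ℕ) : ℚ) := by exact_mod_cast hh
          have hcast1 : ((N + (t - 1) - 1 : ℕ) : ℚ) = (n:ℚ) + (d:ℚ) - 1 := by
            rw [cast_helper (N + (t - 1) - 1) ((n:ℤ) + d - 1) (by omega)]
            push_cast; ring
          have hcast2 : ((N + (t - 1) + 1 - 1 : ℕ) : ℚ) = (n:ℚ) + (d:ℚ) := by
            rw [cast_helper (N + (t - 1) + 1 - 1) ((n:ℤ) + d) (by omega)]
            push_cast; ring
          rw [hcast1, hcast2] at hhq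
          rw [div_le_div_iff₀ hden hden']
          push_cast
          linarith
      · -- d > B : tail
        unfold stOf
        rw [if_neg (by omega : ¬ d ≤ A), if_neg (not_le.2 h2)]
        rcases le_or_gt (d - 1) A with h3 | h3
        · rw [if_pos h3]
          have h5 : tl e Λ B < 0 := tl_neg e Λ hB
          have h6 := m_lt_hd m e Λ hA
          have h7 : (0:ℚ) ≤ (m:ℚ) := by positivity
          linarith
        · rcases le_or_gt (d - 1) B with h4 | h4
          · rw [if_neg (not_le.2 h3), if_pos h4]
            have h5 : tl e Λ B < 0 := tl_neg e Λ hB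
            have hden := den_pos hn hA h3
            have hnn : (0:ℚ) ≤ (T (1, (d - 1 - A).toNat) : ℚ) / ((n:ℚ) + (d - 1 : ℤ)) :=
              div_nonneg (by positivity) (le_of_lt hden)
            push_cast at hnn ⊢
            linarith
          · rw [if_neg (not_le.2 h3), if_neg (not_le.2 h4)]

lemma rowTab_stOf (hn : e ≤ n) (hA : -(e:ℤ) ≤ A) (hAB : A ≤ B)
    {T : ℕ × ℕ → ℕ}
    (hT : T ∈ LHTb ((n + 1 + A).toNat) m (skewCells (rowShape (B - A).toNat) (fun _ => 0) 1)) :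
    rowTab n A B (stOf n m e Λ A B T) = T := by
  obtain ⟨hsupp, _, _, _⟩ := hT
  funext c
  by_cases hg : c.1 = 1 ∧ 1 ≤ c.2 ∧ (c.2 : ℤ) ≤ B - A
  · obtain ⟨hc1, hc2, hc3⟩ := hg
    have hc' : c = (1, c.2) := by cases c; simp only at hc1 ⊢; rw [hc1]
    have hst : stOf n m e Λ A B T (A + c.2)
        = (T (1, ((A + (c.2:ℤ)) - A).toNat) : ℚ) / ((n:ℚ) + ((A + (c.2:ℤ) : ℤ) : ℚ)) := by
      unfold stOf
      rw [if_neg (by omega : ¬ (A + (c.2:ℤ)) ≤ A), if_pos (by omega : A + (c.2:ℤ) ≤ B)]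
    have hden := den_pos hn hA (by omega : A < A + (c.2:ℤ))
    unfold rowTab
    rw [if_pos ⟨hc1, hc2, hc3⟩, hc']
    simp only
    rw [hst, div_mul_cancel₀ _ (ne_of_gt hden), Nat.floor_natCast]
    congr 2
    omega
  · unfold rowTab
    rw [if_neg hg]
    refine (hsupp c ?_).symm
    rw [mem_rowCells]
    intro ⟨g1, g2, g3⟩
    exact hg ⟨g1, g2, by omega⟩

lemma LHTb_row_eq_image (hn : e ≤ n) (hA : -(e:ℤ) ≤ A) (hB : B ≤ (Λ:ℤ)) (hAB : A ≤ B) :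
    LHTb ((n + 1 + A).toNat) m (skewCells (rowShape (B - A).toNat) (fun _ => 0) 1)
      = ↑((strandFinset n m e Λ A B).image (rowTab n A B)) := by
  ext T
  simp only [Finset.coe_image, Set.mem_image, Finset.mem_coe]
  constructor
  · intro hT
    refine ⟨stOf n m e Λ A B T, ?_, rowTab_stOf hn hA hAB hT⟩
    exact (mem_strandFinset hn).2 (stOf_valid hn hA hB hAB hT)
  · rintro ⟨F, hF, rfl⟩
    exact rowTab_mem_LHTb hn ((mem_strandFinset hn).1 hF)

lemma rowTab_injOn (hn : e ≤ n) :
    ∀ F1 ∈ strandFinset n m e Λ A B, ∀ F2 ∈ strandFinset n m e Λ A B,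
      rowTab n A B F1 = rowTab n A B F2 → F1 = F2 := by
  intro F1 h1 F2 h2 heq
  have sv1 := (mem_strandFinset hn).1 h1
  have sv2 := (mem_strandFinset hn).1 h2
  funext d
  rcases le_or_gt d A with hc | hc
  · rw [sv1.hhead d hc, sv2.hhead d hc]
  · rcases le_or_gt d B with hc2 | hc2
    · set t := (d - A).toNat with ht
      have ht1 : 1 ≤ t := by omega
      have ht2 : (t : ℤ) ≤ B - A := by omega
      have r1 := rowTab_real hn sv1 ht1 ht2
      have r2 := rowTab_real hn sv2 ht1 ht2
      have hAd : A + (t:ℤ) = d := by omega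
      rw [hAd] at r1 r2
      rw [r1.1, r2.1, heq]
    · rw [sv1.htail d hc2, sv2.htail d hc2]

lemma weight_rowTab (hn : e ≤ n) (sv : SValid n m e Λ A B F) :
    (∏ c ∈ skewCells (rowShape (B - A).toNat) (fun _ => 0) 1,
        (X (rowTab n A B F c / ((n + 1 + A).toNat + c.2 - c.1)) : MvPolynomial ℕ ℤ))
      = wtS n A B F := by
  have hA := sv.hAlow
  have hABv := sv.hAB
  have hBh := sv.hBhigh
  have hN : (((n + 1 + A).toNat : ℕ) : ℤ) = (n:ℤ) + 1 + A := by omega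
  set N := (n + 1 + A).toNat with hNdef
  unfold wtS
  refine Finset.prod_nbij' (fun c => A + c.2) (fun d => (1, (d - A).toNat)) ?_ ?_ ?_ ?_ ?_
  · intro c hc
    rw [mem_rowCells] at hc
    rw [Finset.mem_Icc]
    omega
  · intro d hdm
    rw [Finset.mem_Icc] at hdm
    rw [mem_rowCells]
    refine ⟨rfl, by dsimp only; omega, by dsimp only; omega⟩
  · intro c hc
    rw [mem_rowCells] at hc
    obtain ⟨hc1, hc2, hc3⟩ := hc
    have hcc : c = (1, c.2) := by cases c; simp only at hc1 ⊢; rw [hc1]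
    rw [hcc]
    dsimp only
    congr 1
    omega
  · intro d hdm
    rw [Finset.mem_Icc] at hdm
    dsimp only
    omega
  · intro c hc
    rw [mem_rowCells] at hc
    obtain ⟨hc1, hc2, hc3⟩ := hc
    have hc3' : (c.2 : ℤ) ≤ B - A := by omega
    obtain ⟨w, hw, hF, hfl⟩ := sv.num_spec hn (by omega : A < A + (c.2:ℤ)) (by omega)
    have hc' : c = (1, c.2) := by cases c; simp only at hc1 ⊢; rw [hc1]
    congr 1
    rw [hc']
    unfold rowTab
    rw [if_pos (show ((1:ℕ), c.2).1 = 1 ∧ 1 ≤ ((1:ℕ), c.2).2 ∧ (((1:ℕ), c.2).2 : ℤ) ≤ B - A from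
      ⟨rfl, hc2, hc3'⟩)]
    dsimp only
    rw [hfl, hF]
    rw [floor_real hn sv.hAlow (by omega : A < A + (c.2:ℤ))]
    congr 1
    omega

lemma rowGF_eq_strandSum (hn : e ≤ n) (hA : -(e:ℤ) ≤ A) (hB : B ≤ (Λ:ℤ)) :
    lhtRowGF ((n + 1 + A).toNat) m (B - A) (fun r => (X r : MvPolynomial ℕ ℤ))
      = ∑ F ∈ strandFinset n m e Λ A B, wtS n A B F := by
  rcases le_or_gt A B with hAB | hAB
  · unfold lhtRowGF
    rw [if_neg (by omega : ¬ (B - A) < 0)]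
    unfold lhtGF
    rw [LHTb_row_eq_image hn hA hB hAB, finsum_mem_coe_finset,
      Finset.sum_image (rowTab_injOn hn)]
    refine Finset.sum_congr rfl fun F hF => ?_
    exact weight_rowTab hn ((mem_strandFinset hn).1 hF)
  · unfold lhtRowGF
    rw [if_pos (by omega : (B - A) < 0)]
    have hempty : strandFinset n m e Λ A B = ∅ := by
      refine Finset.eq_empty_of_forall_notMem fun F hF => ?_
      have := ((mem_strandFinset hn).1 hF).hAB
      omega
    rw [hempty, Finset.sum_empty]

end JTLGV
namespace JTLGV
open Finset MvPolynomial
open scoped Classical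

variable {n m e Λ : ℕ} {l mu : ℕ → ℕ}

/-- source of strand `i` -/
def Ai (mu : ℕ → ℕ) {e : ℕ} (i : Fin e) : ℤ := (mu (i.1 + 1) : ℤ) - ((i.1 : ℤ) + 1)
/-- sink of strand `i` -/
def Bi (l : ℕ → ℕ) {e : ℕ} (i : Fin e) : ℤ := (l (i.1 + 1) : ℤ) - ((i.1 : ℤ) + 1)

lemma Ai_lt_Ai (hmu : ∀ i j, 1 ≤ i → i ≤ j → mu j ≤ mu i) {a b : Fin e} (h : a < b) :
    Ai mu b < Ai mu a := by
  have h3 : a.1 < b.1 := h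
  have h2 : mu (b.1 + 1) ≤ mu (a.1 + 1) := hmu _ _ (by omega) (by omega)
  unfold Ai; omega

lemma Bi_lt_Bi (hl : ∀ i j, 1 ≤ i → i ≤ j → l j ≤ l i) {a b : Fin e} (h : a < b) :
    Bi l b < Bi l a := by
  have h3 : a.1 < b.1 := h
  have h2 : l (b.1 + 1) ≤ l (a.1 + 1) := hl _ _ (by omega) (by omega)
  unfold Bi; omega

lemma Ai_ge (i : Fin e) : -(e:ℤ) ≤ Ai mu i := by
  have : i.1 < e := i.2
  unfold Ai; omega

lemma Bi_le (hl : ∀ i j, 1 ≤ i → i ≤ j → l j ≤ l i) (i : Fin e) : Bi l i ≤ ((l 1 : ℕ) : ℤ) := by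
  have h2 : l (i.1 + 1) ≤ l 1 := hl 1 (i.1 + 1) le_rfl (by omega)
  unfold Bi; omega

lemma Ai_le_Bi (hsub : ∀ i, 1 ≤ i → mu i ≤ l i) (i : Fin e) : Ai mu i ≤ Bi l i := by
  have h2 : mu (i.1 + 1) ≤ l (i.1 + 1) := hsub _ (by omega)
  unfold Ai Bi; omega

/-- the selection data for the tail-swap involution -/
def swapSel (t : Fin e → ℤ → ℚ) (D : ℤ) (a b : Fin e) : Prop :=
  ((∃ a' b' : Fin e, a' < b' ∧ t a' D ≤ t b' (D - 1)) ∧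
    (∀ d : ℤ, (∃ a' b' : Fin e, a' < b' ∧ t a' d ≤ t b' (d - 1)) → D ≤ d)) ∧
  ((∃ b', a < b' ∧ t a D ≤ t b' (D - 1)) ∧
    ∀ a', (∃ b', a' < b' ∧ t a' D ≤ t b' (D - 1)) → a ≤ a') ∧
  (a < b ∧ (∀ b', a < b' → t b' (D - 1) ≤ t b (D - 1)) ∧
    ∀ b'', a < b'' → (∀ b', a < b' → t b' (D - 1) ≤ t b'' (D - 1)) → b ≤ b'')

lemma swapSel_unique {t : Fin e → ℤ → ℚ} {D D' : ℤ} {a a' b b' : Fin e}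
    (h1 : swapSel t D a b) (h2 : swapSel t D' a' b') : D = D' ∧ a = a' ∧ b = b' := by
  obtain ⟨⟨hbad1, hmin1⟩, ⟨hex1, hamin1⟩, hab1, hmax1, hbmin1⟩ := h1
  obtain ⟨⟨hbad2, hmin2⟩, ⟨hex2, hamin2⟩, hab2, hmax2, hbmin2⟩ := h2
  have hDD : D = D' := le_antisymm (hmin1 _ hbad2) (hmin2 _ hbad1)
  subst hDD
  have haa : a = a' := le_antisymm (hamin1 _ hex2) (hamin2 _ hex1)
  subst haa
  exact ⟨rfl, rfl, le_antisymm (hbmin1 _ hab2 hmax2) (hbmin2 _ hab1 hmax1)⟩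

lemma bad_lb (hn : e ≤ n) (hmu : ∀ i j, 1 ≤ i → i ≤ j → mu j ≤ mu i)
    {σ : Equiv.Perm (Fin e)} {t : Fin e → ℤ → ℚ}
    (hval : ∀ i, SValid n m e Λ (Ai mu i) (Bi l (σ i)) (t i))
    {d : ℤ} {a b : Fin e} (hab : a < b) (hbad : t a d ≤ t b (d - 1)) :
    Ai mu b + 2 ≤ d := by
  by_contra hcon
  push_neg at hcon
  have hd1 : d - 1 ≤ Ai mu b := by omega
  have hAba : Ai mu b < Ai mu a := Ai_lt_Ai hmu hab
  have hd2 : d ≤ Ai mu a := by omega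
  have e1 : t b (d - 1) = hd m e Λ (Ai mu b) := (hval b).hhead _ hd1
  have e2 : t a d = hd m e Λ (Ai mu a) := (hval a).hhead _ hd2
  rw [e1, e2] at hbad
  exact absurd hbad (not_le.2 (hd_lt_hd m e Λ hAba))

lemma swapSel_exists (hn : e ≤ n) (hmu : ∀ i j, 1 ≤ i → i ≤ j → mu j ≤ mu i)
    {σ : Equiv.Perm (Fin e)} {t : Fin e → ℤ → ℚ}
    (hval : ∀ i, SValid n m e Λ (Ai mu i) (Bi l (σ i)) (t i))
    (hbad : ∃ d : ℤ, ∃ a b : Fin e, a < b ∧ t a d ≤ t b (d - 1)) :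
    ∃ D a b, swapSel t D a b := by
  obtain ⟨D, hDbad, hDmin⟩ := Int.exists_least_of_bdd
    (P := fun d => ∃ a b : Fin e, a < b ∧ t a d ≤ t b (d - 1))
    ⟨2 - (e:ℤ), fun z hz => by
      obtain ⟨a, b, hab, h⟩ := hz
      have := bad_lb hn hmu hval hab h
      have := Ai_ge (mu := mu) b
      omega⟩ hbad
  -- choose a
  have hane : (Finset.univ.filter fun a : Fin e =>
      ∃ b', a < b' ∧ t a D ≤ t b' (D - 1)).Nonempty := by
    obtain ⟨a, b, hab, h⟩ := hDbad
    exact ⟨a, Finset.mem_filter.2 ⟨Finset.mem_univ _, b, hab, h⟩⟩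
  set a := Finset.min' (Finset.univ.filter fun a : Fin e =>
      ∃ b', a < b' ∧ t a D ≤ t b' (D - 1)) hane with ha
  have haprop : ∃ b', a < b' ∧ t a D ≤ t b' (D - 1) :=
    (Finset.mem_filter.1 (Finset.min'_mem _ hane)).2
  have hamin : ∀ a', (∃ b', a' < b' ∧ t a' D ≤ t b' (D - 1)) → a ≤ a' := fun a' h => by
    rw [ha]
    apply Finset.min'_le
    simp only [Finset.mem_filter]
    exact ⟨Finset.mem_univ _, h⟩
  -- choose b : first find the argmax of t b' (D-1) over b' > a
  obtain ⟨b0, hb0a, hb0⟩ := haprop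
  obtain ⟨bm, hbm, hbmax⟩ := Finset.exists_max_image
    (Finset.univ.filter fun b' : Fin e => a < b') (fun b' => t b' (D - 1))
    ⟨b0, Finset.mem_filter.2 ⟨Finset.mem_univ _, hb0a⟩⟩
  have hbm2 : a < bm := (Finset.mem_filter.1 hbm).2
  have hbmax2 : ∀ b', a < b' → t b' (D - 1) ≤ t bm (D - 1) := fun b' h =>
    hbmax b' (Finset.mem_filter.2 ⟨Finset.mem_univ _, h⟩)
  have hbne : (Finset.univ.filter fun b'' : Fin e =>
      a < b'' ∧ ∀ b', a < b' → t b' (D - 1) ≤ t b'' (D - 1)).Nonempty :=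
    ⟨bm, Finset.mem_filter.2 ⟨Finset.mem_univ _, hbm2, hbmax2⟩⟩
  set b := Finset.min' (Finset.univ.filter fun b'' : Fin e =>
      a < b'' ∧ ∀ b', a < b' → t b' (D - 1) ≤ t b'' (D - 1)) hbne with hb
  have hbprop := (Finset.mem_filter.1 (Finset.min'_mem _ hbne)).2
  refine ⟨D, a, b, ⟨hDbad, hDmin⟩, ⟨?_, hamin⟩, hbprop.1, hbprop.2, ?_⟩
  · exact ⟨b, hbprop.1, le_trans hb0 (hbprop.2 _ hb0a)⟩
  · intro b'' h1 h2
    rw [hb]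
    apply Finset.min'_le
    simp only [Finset.mem_filter]
    exact ⟨Finset.mem_univ _, h1, h2⟩

lemma sel_bad {t : Fin e → ℤ → ℚ} {D : ℤ} {a b : Fin e} (hsel : swapSel t D a b) :
    a < b ∧ t a D ≤ t b (D - 1) := by
  obtain ⟨_, ⟨⟨b', hb'1, hb'2⟩, _⟩, hab, hmax, _⟩ := hsel
  exact ⟨hab, le_trans hb'2 (hmax _ hb'1)⟩

end JTLGV
namespace JTLGV
open Finset MvPolynomial
open scoped Classical

variable {n m e Λ : ℕ} {l mu : ℕ → ℕ}

lemma sel_not_bad_prev {t : Fin e → ℤ → ℚ} {D : ℤ} {a b : Fin e}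
    (hsel : swapSel t D a b) : t b (D - 2) < t a (D - 1) := by
  obtain ⟨hab, _⟩ := sel_bad hsel
  by_contra hc
  push_neg at hc
  have hbad : ∃ a' b' : Fin e, a' < b' ∧ t a' (D-1) ≤ t b' (D - 1 - 1) :=
    ⟨a, b, hab, by rw [show D - 1 - 1 = D - 2 by ring]; exact hc⟩
  have := hsel.1.2 (D - 1) hbad
  omega

lemma sel_D_props (hn : e ≤ n) (hmu : ∀ i j, 1 ≤ i → i ≤ j → mu j ≤ mu i)
    (hl : ∀ i j, 1 ≤ i → i ≤ j → l j ≤ l i)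
    {σ : Equiv.Perm (Fin e)} {t : Fin e → ℤ → ℚ}
    (hval : ∀ i, SValid n m e Λ (Ai mu i) (Bi l (σ i)) (t i))
    {D : ℤ} {a b : Fin e} (hsel : swapSel t D a b) :
    Ai mu a < D ∧ D ≤ Bi l (σ a) + 1 ∧ D ≤ Bi l (σ b) + 1 := by
  obtain ⟨hab, hbadab⟩ := sel_bad hsel
  have hDmin := hsel.1.2
  have hAba : Ai mu b < Ai mu a := Ai_lt_Ai hmu hab
  have h1 : Ai mu a < D := by
    by_contra hc
    push_neg at hc
    have e2 : t a D = hd m e Λ (Ai mu a) := (hval a).hhead _ hc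
    have e3 : t b (D - 1) ≤ hd m e Λ (Ai mu b) := (hval b).le_hd hn _
    have := hd_lt_hd m e Λ hAba
    rw [e2] at hbadab
    linarith
  refine ⟨h1, ?_, ?_⟩
  · by_contra hc
    push_neg at hc
    have hBa : Bi l (σ a) < D - 1 := by omega
    have e2 : t a D = tl e Λ (Bi l (σ a)) := (hval a).htail _ (by omega)
    have e3 : t a (D - 1) = tl e Λ (Bi l (σ a)) := (hval a).htail _ (by omega)
    have e4 : t b (D - 1) ≤ t b (D - 1 - 1) := (hval b).hmono _
    have hbad : ∃ a' b' : Fin e, a' < b' ∧ t a' (D-1) ≤ t b' (D - 1 - 1) :=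
      ⟨a, b, hab, by rw [e3, ← e2]; exact le_trans hbadab e4⟩
    have := hDmin (D - 1) hbad
    omega
  · by_contra hc
    push_neg at hc
    have hBb : Bi l (σ b) < D - 1 := by omega
    have e2 : t b (D - 1) = tl e Λ (Bi l (σ b)) := (hval b).htail _ (by omega)
    have htlneg : tl e Λ (Bi l (σ b)) < 0 := tl_neg e Λ (hval b).hBhigh
    have haD : t a D < 0 := by rw [e2] at hbadab; linarith
    -- t a D must be a tail value
    have hBa : Bi l (σ a) < D := by
      by_contra hc2
      push_neg at hc2
      rcases le_or_gt D (Ai mu a) with h3 | h3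
      · have := (hval a).hhead _ h3
        have h4 := m_lt_hd m e Λ (hval a).hAlow
        have h5 : (0:ℚ) ≤ (m:ℚ) := by positivity
        rw [this] at haD
        linarith
      · have := (hval a).nonneg hn h3 hc2
        linarith
    have e5 : t a D = tl e Λ (Bi l (σ a)) := (hval a).htail _ hBa
    have hBaBb : Bi l (σ a) < Bi l (σ b) := by
      have hle : Bi l (σ a) ≤ Bi l (σ b) := by
        by_contra hc3
        push_neg at hc3
        have := tl_lt_tl e Λ hc3
        rw [e5, e2] at hbadab
        linarith
      rcases lt_or_eq_of_le hle with h | h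
      · exact h
      · exfalso
        have hσ : σ a = σ b := by
          by_contra hne
          rcases lt_or_gt_of_ne hne with h2 | h2
          · exact absurd h (ne_of_gt (Bi_lt_Bi hl h2))
          · exact absurd h (ne_of_lt (Bi_lt_Bi hl h2))
        exact absurd (σ.injective hσ) (ne_of_lt hab)
    -- bad at D - 1
    have e6 : t a (D - 1) = tl e Λ (Bi l (σ a)) := (hval a).htail _ (by omega)
    have e7 : t b (D - 1 - 1) ≥ t b (D - 1) := by
      have := (hval b).hmono (D - 1)
      linarith
    have hbad : ∃ a' b' : Fin e, a' < b' ∧ t a' (D-1) ≤ t b' (D - 1 - 1) := by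
      refine ⟨a, b, hab, ?_⟩
      rw [e6]
      have := tl_lt_tl e Λ hBaBb
      rw [e2] at e7
      linarith
    have := hDmin (D - 1) hbad
    omega

/-- splice two strands at position `D` -/
def splice (D : ℤ) (F G : ℤ → ℚ) : ℤ → ℚ := fun d => if d < D then F d else G d

lemma splice_valid_a {Aa Ab Ba Bb : ℤ} {Fa Fb : ℤ → ℚ} {D : ℤ}
    (sva : SValid n m e Λ Aa Ba Fa) (svb : SValid n m e Λ Ab Bb Fb)
    (hAba : Ab < Aa) (hD1 : Aa < D) (hD2 : D ≤ Ba + 1) (hD3 : D ≤ Bb + 1)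
    (hjun2 : Fb (D - 2) < Fa (D - 1)) : SValid n m e Λ Aa Bb (splice D Fa Fb) := by
  refine ⟨sva.hAlow, by omega, svb.hBhigh, ?_, ?_, ?_, ?_⟩
  · intro d hd
    unfold splice
    rw [if_pos (by omega)]
    exact sva.hhead _ hd
  · intro d hd
    unfold splice
    rw [if_neg (by omega)]
    exact svb.htail _ hd
  · intro d hd1 hd2
    unfold splice
    rcases lt_or_ge d D with h | h
    · rw [if_pos h]
      exact sva.hreal d hd1 (by omega)
    · rw [if_neg (not_lt.2 h)]
      exact svb.hreal d (by omega) hd2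
  · intro d
    unfold splice
    rcases lt_or_ge d D with h | h
    · rw [if_pos h, if_pos (by omega)]
      exact sva.hmono d
    · rcases lt_or_ge (d - 1) D with h2 | h2
      · have hdD : d = D := by omega
        rw [if_neg (not_lt.2 h), if_pos h2, hdD]
        have m1 := svb.hmono D
        have m2 := svb.hmono (D - 1)
        rw [show D - 1 - 1 = D - 2 by ring] at m2
        linarith
      · rw [if_neg (not_lt.2 h), if_neg (not_lt.2 h2)]
        exact svb.hmono d

lemma splice_valid_b {Aa Ab Ba Bb : ℤ} {Fa Fb : ℤ → ℚ} {D : ℤ}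
    (sva : SValid n m e Λ Aa Ba Fa) (svb : SValid n m e Λ Ab Bb Fb)
    (hAba : Ab < Aa) (hD1 : Aa < D) (hD2 : D ≤ Ba + 1) (hD3 : D ≤ Bb + 1)
    (hjun : Fa D ≤ Fb (D - 1)) : SValid n m e Λ Ab Ba (splice D Fb Fa) := by
  refine ⟨svb.hAlow, by omega, sva.hBhigh, ?_, ?_, ?_, ?_⟩
  · intro d hd
    unfold splice
    rw [if_pos (by omega)]
    exact svb.hhead _ hd
  · intro d hd
    unfold splice
    rw [if_neg (by omega)]
    exact sva.htail _ hd
  · intro d hd1 hd2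
    unfold splice
    rcases lt_or_ge d D with h | h
    · rw [if_pos h]
      exact svb.hreal d hd1 (by omega)
    · rw [if_neg (not_lt.2 h)]
      exact sva.hreal d (by omega) hd2
  · intro d
    unfold splice
    rcases lt_or_ge d D with h | h
    · rw [if_pos h, if_pos (by omega)]
      exact svb.hmono d
    · rcases lt_or_ge (d - 1) D with h2 | h2
      · have hdD : d = D := by omega
        rw [if_neg (not_lt.2 h), if_pos h2, hdD]
        exact hjun
      · rw [if_neg (not_lt.2 h), if_neg (not_lt.2 h2)]
        exact sva.hmono d

lemma prod_Icc_cut {M : Type*} [CommMonoid M] (lo hi D : ℤ) (hlo : lo ≤ D) (hhi : D ≤ hi + 1)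
    (f : ℤ → M) : ∏ d ∈ Finset.Icc lo hi, f d
      = (∏ d ∈ Finset.Icc lo (D-1), f d) * ∏ d ∈ Finset.Icc D hi, f d := by
  rw [← Finset.prod_union ?disj]
  · congr 1
    ext d
    simp only [Finset.mem_union, Finset.mem_Icc]
    omega
  case disj =>
    rw [Finset.disjoint_left]
    intro d h1 h2
    rw [Finset.mem_Icc] at h1 h2
    omega

lemma wtS_splice {Aa Ab Ba Bb D : ℤ} (Fa Fb : ℤ → ℚ)
    (hAba : Ab < Aa) (hD1 : Aa < D) (hD2 : D ≤ Ba + 1) (hD3 : D ≤ Bb + 1) :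
    wtS n Aa Bb (splice D Fa Fb) * wtS n Ab Ba (splice D Fb Fa)
      = wtS n Aa Ba Fa * wtS n Ab Bb Fb := by
  unfold wtS
  rw [prod_Icc_cut (Aa+1) Bb D (by omega) (by omega),
      prod_Icc_cut (Ab+1) Ba D (by omega) (by omega),
      prod_Icc_cut (Aa+1) Ba D (by omega) (by omega),
      prod_Icc_cut (Ab+1) Bb D (by omega) (by omega)]
  have c1 : ∀ lo : ℤ, (∏ d ∈ Finset.Icc lo (D-1), (X (⌊splice D Fa Fb d⌋₊) : MvPolynomial ℕ ℤ))
      = ∏ d ∈ Finset.Icc lo (D-1), (X (⌊Fa d⌋₊) : MvPolynomial ℕ ℤ) := fun lo =>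
    Finset.prod_congr rfl fun d hdm => by
      rw [Finset.mem_Icc] at hdm
      unfold splice
      rw [if_pos (by omega)]
  have c2 : ∀ hi : ℤ, (∏ d ∈ Finset.Icc D hi, (X (⌊splice D Fa Fb d⌋₊) : MvPolynomial ℕ ℤ))
      = ∏ d ∈ Finset.Icc D hi, (X (⌊Fb d⌋₊) : MvPolynomial ℕ ℤ) := fun hi =>
    Finset.prod_congr rfl fun d hdm => by
      rw [Finset.mem_Icc] at hdm
      unfold splice
      rw [if_neg (by omega)]
  have c3 : ∀ lo : ℤ, (∏ d ∈ Finset.Icc lo (D-1), (X (⌊splice D Fb Fa d⌋₊) : MvPolynomial ℕ ℤ))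
      = ∏ d ∈ Finset.Icc lo (D-1), (X (⌊Fb d⌋₊) : MvPolynomial ℕ ℤ) := fun lo =>
    Finset.prod_congr rfl fun d hdm => by
      rw [Finset.mem_Icc] at hdm
      unfold splice
      rw [if_pos (by omega)]
  have c4 : ∀ hi : ℤ, (∏ d ∈ Finset.Icc D hi, (X (⌊splice D Fb Fa d⌋₊) : MvPolynomial ℕ ℤ))
      = ∏ d ∈ Finset.Icc D hi, (X (⌊Fa d⌋₊) : MvPolynomial ℕ ℤ) := fun hi =>
    Finset.prod_congr rfl fun d hdm => by
      rw [Finset.mem_Icc] at hdm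
      unfold splice
      rw [if_neg (by omega)]
  rw [c1, c2, c3, c4]
  ring

/-- the swapped tuple -/
def tupSwap (t : Fin e → ℤ → ℚ) (D : ℤ) (a b : Fin e) : Fin e → ℤ → ℚ :=
  Function.update (Function.update t a (splice D (t a) (t b))) b (splice D (t b) (t a))

lemma tupSwap_a {t : Fin e → ℤ → ℚ} {D : ℤ} {a b : Fin e} (hab : a ≠ b) :
    tupSwap t D a b a = splice D (t a) (t b) := by
  unfold tupSwap
  rw [Function.update_of_ne hab, Function.update_self]

lemma tupSwap_b {t : Fin e → ℤ → ℚ} {D : ℤ} {a b : Fin e} :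
    tupSwap t D a b b = splice D (t b) (t a) := by
  unfold tupSwap
  rw [Function.update_self]

lemma tupSwap_other {t : Fin e → ℤ → ℚ} {D : ℤ} {a b i : Fin e} (h1 : i ≠ a) (h2 : i ≠ b) :
    tupSwap t D a b i = t i := by
  unfold tupSwap
  rw [Function.update_of_ne h2, Function.update_of_ne h1]

lemma tupSwap_low {t : Fin e → ℤ → ℚ} {D : ℤ} {a b : Fin e} (hab : a ≠ b) (i : Fin e)
    {d : ℤ} (hd : d < D) : tupSwap t D a b i d = t i d := by
  by_cases h1 : i = a
  · subst h1; rw [tupSwap_a hab]; unfold splice; rw [if_pos hd]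
  · by_cases h2 : i = b
    · subst h2; rw [tupSwap_b]; unfold splice; rw [if_pos hd]
    · rw [tupSwap_other h1 h2]

lemma tupSwap_invol {t : Fin e → ℤ → ℚ} {D : ℤ} {a b : Fin e} (hab : a ≠ b) :
    tupSwap (tupSwap t D a b) D a b = t := by
  funext i d
  by_cases h1 : i = a
  · subst h1
    rw [tupSwap_a hab]
    unfold splice
    rcases lt_or_ge d D with h | h
    · rw [if_pos h, tupSwap_a hab]
      unfold splice; rw [if_pos h]
    · rw [if_neg (not_lt.2 h), tupSwap_b]
      unfold splice; rw [if_neg (not_lt.2 h)]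
  · by_cases h2 : i = b
    · subst h2
      rw [tupSwap_b]
      unfold splice
      rcases lt_or_ge d D with h | h
      · rw [if_pos h, tupSwap_b]
        unfold splice; rw [if_pos h]
      · rw [if_neg (not_lt.2 h), tupSwap_a hab]
        unfold splice; rw [if_neg (not_lt.2 h)]
    · rw [tupSwap_other h1 h2, tupSwap_other h1 h2]

lemma swapSel_tupSwap {t : Fin e → ℤ → ℚ} {D : ℤ} {a b : Fin e}
    (hsel : swapSel t D a b) (hmonoB : ∀ d, t b d ≤ t b (d - 1)) :
    swapSel (tupSwap t D a b) D a b := by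
  obtain ⟨hab, hbadab⟩ := sel_bad hsel
  have habne : a ≠ b := ne_of_lt hab
  obtain ⟨⟨_, hDmin⟩, ⟨_, hamin⟩, _, hbmax, hbmin⟩ := hsel
  have hlow : ∀ (i : Fin e) (d : ℤ), d < D → tupSwap t D a b i d = t i d :=
    fun i d hd => tupSwap_low (t := t) habne i hd
  have hprev : ∀ i, tupSwap t D a b i (D - 1) = t i (D - 1) := fun i =>
    hlow i (D - 1) (by omega)
  refine ⟨⟨⟨a, b, hab, ?_⟩, ?_⟩, ⟨⟨b, hab, ?_⟩, ?_⟩, hab, ?_, ?_⟩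
  · rw [tupSwap_a habne, hprev b]
    unfold splice
    rw [if_neg (by omega)]
    exact hmonoB D
  · intro d ⟨a', b', hab', hle⟩
    by_contra hc
    push_neg at hc
    rw [hlow a' d hc, hlow b' (d-1) (by omega)] at hle
    have := hDmin d ⟨a', b', hab', hle⟩
    omega
  · rw [tupSwap_a habne, hprev b]
    unfold splice
    rw [if_neg (by omega)]
    exact hmonoB D
  · intro a' ⟨b', hab', hle⟩
    rw [hprev b'] at hle
    by_cases h1 : a' = a
    · subst h1; exact le_refl _
    · by_cases h2 : a' = b
      · subst h2; exact le_of_lt hab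
      · rw [tupSwap_other h1 h2] at hle
        exact hamin a' ⟨b', hab', hle⟩
  · intro b' h
    rw [hprev b', hprev b]
    exact hbmax b' h
  · intro b'' h1 h2
    refine hbmin b'' h1 fun b' hb' => ?_
    have := h2 b' hb'
    rw [hprev b', hprev b''] at this
    exact this

end JTLGV
namespace JTLGV
open Finset MvPolynomial
open scoped Classical

variable {n m e Λ : ℕ} {l mu : ℕ → ℕ}

lemma SValid.nonneg_at_sink {A B : ℤ} {F : ℤ → ℚ} (hn : e ≤ n)
    (sv : SValid n m e Λ A B F) : 0 ≤ F B := by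
  rcases lt_or_eq_of_le sv.hAB with h | h
  · exact sv.nonneg hn h le_rfl
  · rw [sv.hhead B (le_of_eq h.symm)]
    have h1 := m_lt_hd m e Λ sv.hAlow
    have h2 : (0:ℚ) ≤ (m:ℚ) := by positivity
    linarith

lemma noBad_sigma_id (hn : e ≤ n) (hl : ∀ i j, 1 ≤ i → i ≤ j → l j ≤ l i)
    {σ : Equiv.Perm (Fin e)} {t : Fin e → ℤ → ℚ}
    (hval : ∀ i, SValid n m e Λ (Ai mu i) (Bi l (σ i)) (t i))
    (hnb : ¬ ∃ d : ℤ, ∃ a b : Fin e, a < b ∧ t a d ≤ t b (d - 1)) : σ = 1 := by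
  push_neg at hnb
  have hkey : ∀ a b : Fin e, a < b → Bi l (σ b) < Bi l (σ a) := by
    intro a b hab
    by_contra hc
    push_neg at hc
    have hne : σ a ≠ σ b := fun h => absurd (σ.injective h) (ne_of_lt hab)
    have hlt : Bi l (σ a) < Bi l (σ b) := by
      rcases lt_or_gt_of_ne hne with h | h
      · exact absurd (Bi_lt_Bi hl h) (by omega)
      · exact Bi_lt_Bi hl h
    set d := Bi l (σ b) + 1 with hd
    have e1 : t a d = tl e Λ (Bi l (σ a)) := (hval a).htail _ (by omega)
    have e2 : 0 ≤ t b (d - 1) := by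
      have : d - 1 = Bi l (σ b) := by omega
      rw [this]
      exact (hval b).nonneg_at_sink hn
    have e3 : tl e Λ (Bi l (σ a)) < 0 := tl_neg e Λ (hval a).hBhigh
    have := hnb d a b hab
    rw [e1] at this
    linarith
  have hmono : StrictMono σ := by
    intro a b hab
    have h1 := hkey a b hab
    by_contra hc
    push_neg at hc
    rcases lt_or_eq_of_le hc with h | h
    · exact absurd (Bi_lt_Bi hl h) (by omega)
    · rw [h] at h1; omega
  have hmono' : StrictMono (σ.symm) := by
    intro a b hab
    by_contra hc
    push_neg at hc
    rcases lt_or_eq_of_le hc with h | h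
    · have := hmono h
      rw [σ.apply_symm_apply, σ.apply_symm_apply] at this
      omega
    · have := σ.symm.injective h.symm
      omega
  have inst : WellFoundedLT (Fin e) := inferInstance
  refine Equiv.ext fun i => ?_
  have h1 : i ≤ σ i := @StrictMono.le_apply (Fin e) _ inst _ hmono i
  have h2 : i ≤ σ.symm i := @StrictMono.le_apply (Fin e) _ inst _ hmono' i
  have h3 : σ i ≤ i := by
    have := hmono.le_iff_le (a := i) (b := σ.symm i)
    rcases le_or_gt (σ i) i with h | h
    · exact h
    · exfalso
      have h4 : σ (σ.symm i) = i := σ.apply_symm_apply i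
      have h5 := hmono' h
      rw [σ.symm_apply_apply] at h5
      omega
  have : σ i = i := le_antisymm h3 h1
  simp [this]

lemma compare_strands {Aa Ab Ba Bb : ℤ} {Fa Fb : ℤ → ℚ} (hn : e ≤ n)
    (sva : SValid n m e Λ Aa Ba Fa) (svb : SValid n m e Λ Ab Bb Fb)
    (hA : Ab < Aa) (hB : Bb < Ba)
    (hreal : ∀ d : ℤ, Aa < d → d ≤ Ba → Ab < d - 1 → d - 1 ≤ Bb → Fb (d-1) < Fa d) :
    ∀ d : ℤ, Fb (d - 1) < Fa d := by
  intro d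
  rcases le_or_gt d Aa with h1 | h1
  · rw [sva.hhead d h1]
    calc Fb (d-1) ≤ hd m e Λ Ab := svb.le_hd hn _
      _ < hd m e Λ Aa := hd_lt_hd m e Λ hA
  · rcases le_or_gt d Ba with h2 | h2
    · rcases le_or_gt (d - 1) Ab with h3 | h3
      · omega
      · rcases le_or_gt (d-1) Bb with h4 | h4
        · exact hreal d h1 h2 h3 h4
        · rw [svb.htail _ h4]
          calc tl e Λ Bb < 0 := tl_neg e Λ svb.hBhigh
            _ ≤ Fa d := sva.nonneg hn h1 h2
    · rw [sva.htail _ h2, svb.htail _ (by omega)]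
      exact tl_lt_tl e Λ hB

lemma mem_skewCells (hl : ∀ i j, 1 ≤ i → i ≤ j → l j ≤ l i) {c : ℕ × ℕ} :
    c ∈ skewCells l mu e ↔ 1 ≤ c.1 ∧ c.1 ≤ e ∧ mu c.1 < c.2 ∧ c.2 ≤ l c.1 := by
  unfold skewCells
  simp only [Finset.mem_filter, Finset.mem_product, Finset.mem_Icc]
  constructor
  · rintro ⟨⟨⟨h1, h2⟩, _, _⟩, h5, h6⟩
    exact ⟨h1, h2, h5, h6⟩
  · rintro ⟨h1, h2, h3, h4⟩
    have h5 : l c.1 ≤ l 1 := hl 1 c.1 le_rfl h1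
    exact ⟨⟨⟨h1, h2⟩, by omega, by omega⟩, h3, h4⟩

/-- restriction of a skew tableau to row `i+1`, re-indexed as a one-row tableau -/
def rowRestrict (T : (ℕ×ℕ) → ℕ) (mu : ℕ → ℕ) (i : ℕ) (kk : ℤ) : (ℕ×ℕ) → ℕ :=
  fun c => if c.1 = 1 ∧ 1 ≤ c.2 ∧ (c.2:ℤ) ≤ kk then T (i + 1, mu (i + 1) + c.2) else 0

lemma rowRestrict_mem (hn : e ≤ n) (hl : ∀ i j, 1 ≤ i → i ≤ j → l j ≤ l i)
    {T : (ℕ×ℕ) → ℕ} (hT : T ∈ LHTb n m (skewCells l mu e)) (i : Fin e) :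
    rowRestrict T mu i.1 (Bi l i - Ai mu i) ∈
      LHTb ((n + 1 + Ai mu i).toNat) m
        (skewCells (rowShape (Bi l i - Ai mu i).toNat) (fun _ => 0) 1) := by
  obtain ⟨hsupp, hhoriz, hvert, hbound⟩ := hT
  have hie : i.1 < e := i.2
  have hA : -(e:ℤ) ≤ Ai mu i := Ai_ge i
  have hN : (((n + 1 + Ai mu i).toNat : ℕ) : ℤ) = (n:ℤ) + 1 + Ai mu i := by omega
  set N := (n + 1 + Ai mu i).toNat with hNdef
  have hAB : Ai mu i = (mu (i.1 + 1) : ℤ) - ((i.1:ℤ) + 1) := rfl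
  have hBB : Bi l i = (l (i.1 + 1) : ℤ) - ((i.1:ℤ) + 1) := rfl
  have hcellskew : ∀ j : ℕ, 1 ≤ j → (j:ℤ) ≤ Bi l i - Ai mu i →
      (i.1 + 1, mu (i.1 + 1) + j) ∈ skewCells l mu e := by
    intro j h1 h2
    rw [mem_skewCells hl]
    dsimp only
    refine ⟨by omega, by omega, by omega, by omega⟩
  refine ⟨?_, ?_, ?_, ?_⟩
  · intro c hc
    rw [mem_rowCells] at hc
    unfold rowRestrict
    rw [if_neg]
    intro ⟨g1, g2, g3⟩
    exact hc ⟨g1, g2, by omega⟩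
  · intro i' j hc1 hc2
    rw [mem_rowCells] at hc1 hc2
    obtain ⟨hi', hj1, hj2⟩ := hc1
    obtain ⟨_, _, hj3⟩ := hc2
    dsimp only at hi' hj1 hj2 hj3
    subst hi'
    have hg1 : (1:ℕ) = 1 ∧ 1 ≤ j ∧ (j:ℤ) ≤ Bi l i - Ai mu i := ⟨rfl, by omega, by omega⟩
    have hg2 : (1:ℕ) = 1 ∧ 1 ≤ j + 1 ∧ ((j+1:ℕ):ℤ) ≤ Bi l i - Ai mu i :=
      ⟨rfl, by omega, by push_cast; omega⟩
    unfold rowRestrict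
    rw [if_pos (show ((1:ℕ), j+1).1 = 1 ∧ 1 ≤ ((1:ℕ),j+1).2 ∧ (((1:ℕ),j+1).2:ℤ) ≤ Bi l i - Ai mu i from hg2),
        if_pos (show ((1:ℕ), j).1 = 1 ∧ 1 ≤ ((1:ℕ),j).2 ∧ (((1:ℕ),j).2:ℤ) ≤ Bi l i - Ai mu i from hg1)]
    dsimp only
    have hsk1 := hcellskew j (by omega) (by omega)
    have hsk2 := hcellskew (j+1) (by omega) (by push_cast; omega)
    have hh := hhoriz (i.1 + 1) (mu (i.1 + 1) + j) hsk1 (by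
      rw [show (i.1 + 1, mu (i.1 + 1) + j + 1) = (i.1 + 1, mu (i.1 + 1) + (j + 1)) by
        rw [Nat.add_assoc]]
      exact hsk2)
    rw [show mu (i.1 + 1) + (j + 1) = mu (i.1 + 1) + j + 1 by omega] at *
    calc T (i.1 + 1, mu (i.1 + 1) + j + 1) * (N + j - 1)
        = T (i.1 + 1, mu (i.1 + 1) + j + 1) * (n + (mu (i.1+1) + j) - (i.1+1)) := by
          congr 1; omega
      _ ≤ T (i.1 + 1, mu (i.1 + 1) + j) * (n + (mu (i.1+1) + j) + 1 - (i.1+1)) := hh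
      _ = T (i.1 + 1, mu (i.1 + 1) + j) * (N + j + 1 - 1) := by congr 1; omega
  · intro i' j hc1 hc2
    rw [mem_rowCells] at hc1 hc2
    omega
  · intro c hc
    rw [mem_rowCells] at hc
    obtain ⟨hc1, hc2, hc3⟩ := hc
    have hc' : c = (1, c.2) := by cases c; simp only at hc1 ⊢; rw [hc1]
    rw [hc']
    unfold rowRestrict
    rw [if_pos (show ((1:ℕ), c.2).1 = 1 ∧ 1 ≤ ((1:ℕ),c.2).2 ∧ (((1:ℕ),c.2).2:ℤ) ≤ Bi l i - Ai mu i from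
      ⟨rfl, hc2, by omega⟩)]
    dsimp only
    have hsk := hcellskew c.2 hc2 (by omega)
    have hb := hbound _ hsk
    dsimp only at hb
    have heq : n + (mu (i.1 + 1) + c.2) - (i.1 + 1) = N + c.2 - 1 := by omega
    rw [heq] at hb
    exact hb

/-- splitting a skew tableau into strands -/
def splitT (n m e Λ : ℕ) (l mu : ℕ → ℕ) (T : (ℕ×ℕ) → ℕ) (i : Fin e) : ℤ → ℚ :=
  stOf n m e Λ (Ai mu i) (Bi l i) (rowRestrict T mu i.1 (Bi l i - Ai mu i))

lemma splitT_valid (hn : e ≤ n) (hl : ∀ i j, 1 ≤ i → i ≤ j → l j ≤ l i)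
    (hsub : ∀ i, 1 ≤ i → mu i ≤ l i) (hΛ : Λ = l 1)
    {T : (ℕ×ℕ) → ℕ} (hT : T ∈ LHTb n m (skewCells l mu e)) (i : Fin e) :
    SValid n m e Λ (Ai mu i) (Bi l i) (splitT n m e Λ l mu T i) :=
  stOf_valid hn (Ai_ge i) (by rw [hΛ]; exact Bi_le hl i) (Ai_le_Bi hsub i)
    (rowRestrict_mem hn hl hT i)

lemma splitT_real (hn : e ≤ n)
    {T : (ℕ×ℕ) → ℕ} (i : Fin e) {d : ℤ} (h1 : Ai mu i < d) (h2 : d ≤ Bi l i) :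
    splitT n m e Λ l mu T i d
      = (T (i.1 + 1, mu (i.1 + 1) + (d - Ai mu i).toNat) : ℚ) / ((n:ℚ) + d) := by
  unfold splitT stOf
  rw [if_neg (not_le.2 h1), if_pos h2]
  unfold rowRestrict
  rw [if_pos (show ((1:ℕ), (d - Ai mu i).toNat).1 = 1 ∧ 1 ≤ ((1:ℕ), (d - Ai mu i).toNat).2 ∧
      ((((1:ℕ), (d - Ai mu i).toNat).2 : ℕ) : ℤ) ≤ Bi l i - Ai mu i from ⟨rfl, by omega, by omega⟩)]

lemma splitT_noBad (hn : e ≤ n) (hl : ∀ i j, 1 ≤ i → i ≤ j → l j ≤ l i)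
    (hmu : ∀ i j, 1 ≤ i → i ≤ j → mu j ≤ mu i)
    (hsub : ∀ i, 1 ≤ i → mu i ≤ l i) (hΛ : Λ = l 1)
    {T : (ℕ×ℕ) → ℕ} (hT : T ∈ LHTb n m (skewCells l mu e)) :
    ∀ (a b : Fin e), a < b → ∀ d : ℤ,
      splitT n m e Λ l mu T b (d - 1) < splitT n m e Λ l mu T a d := by
  have hval := fun i => splitT_valid hn hl hsub hΛ hT i
  have hadj : ∀ (a b : Fin e), b.1 = a.1 + 1 → ∀ d : ℤ,
      splitT n m e Λ l mu T b (d - 1) < splitT n m e Λ l mu T a d := by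
    intro a b hba
    refine compare_strands hn (hval a) (hval b) (Ai_lt_Ai hmu (by rw [Fin.lt_def]; omega))
      (Bi_lt_Bi hl (by rw [Fin.lt_def]; omega)) ?_
    intro d hd1 hd2 hd3 hd4
    obtain ⟨_, _, hvert, _⟩ := hT
    set j := (mu (a.1 + 1) + (d - Ai mu a).toNat) with hj
    have hAa : Ai mu a = (mu (a.1 + 1) : ℤ) - ((a.1:ℤ) + 1) := rfl
    have hBa : Bi l a = (l (a.1 + 1) : ℤ) - ((a.1:ℤ) + 1) := rfl
    have hAb : Ai mu b = (mu (b.1 + 1) : ℤ) - ((b.1:ℤ) + 1) := rfl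
    have hBb : Bi l b = (l (b.1 + 1) : ℤ) - ((b.1:ℤ) + 1) := rfl
    have hae : a.1 < e := a.2
    have hbe : b.1 < e := b.2
    have hmuba : mu (b.1 + 1) ≤ mu (a.1 + 1) := hmu _ _ (by omega) (by omega)
    have emu : mu (a.1 + 1 + 1) = mu (b.1 + 1) := by rw [hba]
    have el : l (a.1 + 1 + 1) = l (b.1 + 1) := by rw [hba]
    have hcell1 : (a.1 + 1, j) ∈ skewCells l mu e := by
      rw [mem_skewCells hl]
      dsimp only
      refine ⟨by omega, by omega, by omega, by omega⟩
    have hcell2 : (a.1 + 1 + 1, j) ∈ skewCells l mu e := by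
      rw [mem_skewCells hl]
      dsimp only
      refine ⟨by omega, by omega, by omega, by omega⟩
    have hv := hvert (a.1 + 1) j hcell1 hcell2
    -- translate to strand values
    rw [splitT_real hn a hd1 hd2, splitT_real hn b hd3 hd4]
    have hjb : mu (b.1 + 1) + (d - 1 - Ai mu b).toNat = j := by
      rw [hj]; omega
    rw [hjb]
    have hba' : b.1 + 1 = a.1 + 1 + 1 := by omega
    rw [hba']
    have hden1 : (0:ℚ) < (n:ℚ) + d := den_pos hn (Ai_ge a) hd1
    have hden2 : (0:ℚ) < (n:ℚ) + (d - 1 : ℤ) := den_pos hn (Ai_ge b) hd3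
    push_cast at hden2
    rw [div_lt_div_iff₀ (by push_cast; linarith) hden1]
    have hc1 : ((n + j - (a.1 + 1) : ℕ) : ℚ) = (n:ℚ) + d := by
      rw [cast_helper (n + j - (a.1+1)) ((n:ℤ) + d) (by omega)]
      push_cast; ring
    have hc2 : ((n + j - (a.1 + 1) - 1 : ℕ) : ℚ) = (n:ℚ) + d - 1 := by
      rw [cast_helper (n + j - (a.1+1) - 1) ((n:ℤ) + d - 1) (by omega)]
      push_cast; ring
    have hvq : (T (a.1 + 1 + 1, j) : ℚ) * ((n + j - (a.1+1) : ℕ) : ℚ)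
        < (T (a.1 + 1, j) : ℚ) * ((n + j - (a.1+1) - 1 : ℕ) : ℚ) := by exact_mod_cast hv
    rw [hc1, hc2] at hvq
    push_cast
    linarith
  -- chain
  have hchain : ∀ k : ℕ, ∀ (a b : Fin e), b.1 = a.1 + k + 1 → ∀ d : ℤ,
      splitT n m e Λ l mu T b (d - 1) < splitT n m e Λ l mu T a d := by
    intro k
    induction k with
    | zero => exact fun a b hba => hadj a b (by omega)
    | succ k ih =>
      intro a b hba d
      have hmide : a.1 + 1 < e := by have := b.2; omega
      set mid : Fin e := ⟨a.1 + 1, hmide⟩ with hmid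
      have hmidv : mid.1 = a.1 + 1 := rfl
      have h1 := hadj a mid hmidv d
      have h2 := ih mid b (by omega) (d - 1)
      have h3 : splitT n m e Λ l mu T b (d - 1) ≤ splitT n m e Λ l mu T b (d - 1 - 1) :=
        (hval b).hmono (d - 1)
      linarith
  intro a b hab d
  have : a.1 < b.1 := hab
  exact hchain (b.1 - a.1 - 1) a b (by omega) d

end JTLGV
namespace JTLGV
open Finset MvPolynomial
open scoped Classical

variable {n m e Λ : ℕ} {l mu : ℕ → ℕ}

/-- glue a tuple of strands into a skew tableau -/
def glue (n e : ℕ) (l mu : ℕ → ℕ) (t : Fin e → ℤ → ℚ) : (ℕ×ℕ) → ℕ :=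
  fun c => if h : c.1 - 1 < e ∧ c ∈ skewCells l mu e then
    ⌊t ⟨c.1 - 1, h.1⟩ ((c.2:ℤ) - (c.1:ℤ)) * ((n:ℚ) + (((c.2:ℤ) - (c.1:ℤ) : ℤ) : ℚ))⌋₊ else 0

lemma div_cancel_inj {a b q : ℚ} (hq : q ≠ 0) (h : a / q = b / q) : a = b := by
  have h2 := congrArg (· * q) h
  simpa [div_mul_cancel₀, hq] using h2

lemma Ai_eq {i : ℕ} (h1 : 1 ≤ i) (hie : i - 1 < e) :
    Ai mu (⟨i - 1, hie⟩ : Fin e) = (mu i : ℤ) - i := by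
  unfold Ai
  dsimp only
  rw [show i - 1 + 1 = i from by omega]
  omega

lemma Bi_eq {i : ℕ} (h1 : 1 ≤ i) (hie : i - 1 < e) :
    Bi l (⟨i - 1, hie⟩ : Fin e) = (l i : ℤ) - i := by
  unfold Bi
  dsimp only
  rw [show i - 1 + 1 = i from by omega]
  omega

lemma glue_spec (hn : e ≤ n) (hl : ∀ i j, 1 ≤ i → i ≤ j → l j ≤ l i)
    {t : Fin e → ℤ → ℚ} (hval : ∀ i : Fin e, SValid n m e Λ (Ai mu i) (Bi l i) (t i))
    {c : ℕ × ℕ} (hc : c ∈ skewCells l mu e) (hie : c.1 - 1 < e) :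
    ∃ w : ℕ, glue n e l mu t c = w ∧ w < m * ((n:ℤ) + ((c.2:ℤ) - c.1)).toNat ∧
      t ⟨c.1 - 1, hie⟩ ((c.2:ℤ) - c.1) = (w:ℚ) / ((n:ℚ) + (((c.2:ℤ) - (c.1:ℤ) : ℤ) : ℚ)) := by
  have hm := (mem_skewCells hl).1 hc
  obtain ⟨h1, h2, h3, h4⟩ := hm
  have hAd : Ai mu (⟨c.1 - 1, hie⟩ : Fin e) < (c.2:ℤ) - c.1 := by
    rw [Ai_eq h1 hie]; omega
  have hBd : (c.2:ℤ) - c.1 ≤ Bi l (⟨c.1 - 1, hie⟩ : Fin e) := by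
    rw [Bi_eq h1 hie]; omega
  obtain ⟨w, hw, hF, hfl⟩ := (hval ⟨c.1 - 1, hie⟩).num_spec hn hAd hBd
  refine ⟨w, ?_, hw, hF⟩
  unfold glue
  rw [dif_pos ⟨hie, hc⟩]
  exact hfl

lemma glue_mem (hn : e ≤ n) (hl : ∀ i j, 1 ≤ i → i ≤ j → l j ≤ l i)
    {t : Fin e → ℤ → ℚ} (hval : ∀ i : Fin e, SValid n m e Λ (Ai mu i) (Bi l i) (t i))
    (hnb : ∀ (a b : Fin e), a < b → ∀ d : ℤ, t b (d - 1) < t a d) :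
    glue n e l mu t ∈ LHTb n m (skewCells l mu e) := by
  refine ⟨?_, ?_, ?_, ?_⟩
  · intro c hc
    unfold glue
    rw [dif_neg]
    intro ⟨_, h2⟩
    exact hc h2
  · -- horizontal
    intro i j hc1 hc2
    have hm1 := (mem_skewCells hl).1 hc1
    obtain ⟨h1, h2, h3, h4⟩ := hm1
    dsimp only at h1 h2 h3 h4
    have hie : i - 1 < e := by omega
    obtain ⟨w1, hg1, hw1, hF1⟩ := glue_spec hn hl hval hc1 (by dsimp only; omega)
    obtain ⟨w2, hg2, hw2, hF2⟩ := glue_spec hn hl hval hc2 (by dsimp only; omega)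
    dsimp only at hg1 hg2 hw1 hw2 hF1 hF2
    set a : Fin e := ⟨i - 1, hie⟩ with hadef
    have hmono := (hval a).hmono ((j:ℤ) + 1 - i)
    rw [show ((j:ℤ) + 1 - i) - 1 = (j:ℤ) - i by ring] at hmono
    rw [show ((j + 1 : ℕ) : ℤ) - (i:ℤ) = (j:ℤ) + 1 - i by push_cast; ring] at hF2
    rw [hF1, hF2] at hmono
    have hden1 : (0:ℚ) < (n:ℚ) + (((j:ℤ) - i : ℤ) : ℚ) := by
      have h0 : (0:ℤ) < (n:ℤ) + ((j:ℤ) - i) := by omega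
      exact_mod_cast h0
    have hden2 : (0:ℚ) < (n:ℚ) + (((j:ℤ) + 1 - i : ℤ) : ℚ) := by
      have h0 : (0:ℤ) < (n:ℤ) + ((j:ℤ) + 1 - i) := by omega
      exact_mod_cast h0
    rw [div_le_div_iff₀ hden2 hden1] at hmono
    rw [hg1, hg2]
    have hc1' : ((n + j - i : ℕ) : ℚ) = (n:ℚ) + (((j:ℤ) - i : ℤ) : ℚ) := by
      rw [cast_helper (n + j - i) ((n:ℤ) + ((j:ℤ) - i)) (by omega)]
      push_cast; ring
    have hc2' : ((n + j + 1 - i : ℕ) : ℚ) = (n:ℚ) + (((j:ℤ) + 1 - i : ℤ) : ℚ) := by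
      rw [cast_helper (n + j + 1 - i) ((n:ℤ) + ((j:ℤ) + 1 - i)) (by omega)]
      push_cast; ring
    have hfin : (w2:ℚ) * ((n + j - i : ℕ) : ℚ) ≤ (w1:ℚ) * ((n + j + 1 - i : ℕ) : ℚ) := by
      rw [hc1', hc2']
      push_cast
      push_cast at hmono
      linarith
    exact_mod_cast hfin
  · -- vertical
    intro i j hc1 hc2
    have hm1 := (mem_skewCells hl).1 hc1
    have hm2 := (mem_skewCells hl).1 hc2
    obtain ⟨h1, h2, h3, h4⟩ := hm1
    obtain ⟨h1', h2', h3', h4'⟩ := hm2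
    dsimp only at h1 h2 h3 h4 h1' h2' h3' h4'
    have hie : i - 1 < e := by omega
    have hie2 : i + 1 - 1 < e := by omega
    obtain ⟨w1, hg1, hw1, hF1⟩ := glue_spec hn hl hval hc1 (by dsimp only; omega)
    obtain ⟨w2, hg2, hw2, hF2⟩ := glue_spec hn hl hval hc2 (by dsimp only; omega)
    dsimp only at hg1 hg2 hw1 hw2 hF1 hF2
    set a : Fin e := ⟨i - 1, hie⟩ with hadef
    set b : Fin e := ⟨i + 1 - 1, hie2⟩ with hbdef
    have hab : a < b := by
      rw [Fin.lt_def]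
      show i - 1 < i + 1 - 1
      omega
    have hstrict := hnb a b hab ((j:ℤ) - i)
    rw [show ((j:ℤ) - i) - 1 = (j:ℤ) - (i+1:ℕ) by push_cast; ring] at hstrict
    rw [hF1, hF2] at hstrict
    have hden1 : (0:ℚ) < (n:ℚ) + (((j:ℤ) - i : ℤ) : ℚ) := by
      have h0 : (0:ℤ) < (n:ℤ) + ((j:ℤ) - i) := by omega
      exact_mod_cast h0
    have hden2 : (0:ℚ) < (n:ℚ) + (((j:ℤ) - (i+1:ℕ) : ℤ) : ℚ) := by
      have h0 : (0:ℤ) < (n:ℤ) + ((j:ℤ) - (i+1:ℕ)) := by push_cast; omega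
      exact_mod_cast h0
    rw [div_lt_div_iff₀ hden2 hden1] at hstrict
    rw [hg1, hg2]
    have hc1' : ((n + j - i : ℕ) : ℚ) = (n:ℚ) + (((j:ℤ) - i : ℤ) : ℚ) := by
      rw [cast_helper (n + j - i) ((n:ℤ) + ((j:ℤ) - i)) (by omega)]
      push_cast; ring
    have hc2' : ((n + j - i - 1 : ℕ) : ℚ) = (n:ℚ) + (((j:ℤ) - (i+1:ℕ) : ℤ) : ℚ) := by
      rw [cast_helper (n + j - i - 1) ((n:ℤ) + ((j:ℤ) - (i+1:ℕ))) (by push_cast; omega)]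
      push_cast; ring
    have hfin : (w2:ℚ) * ((n + j - i : ℕ) : ℚ) < (w1:ℚ) * ((n + j - i - 1 : ℕ) : ℚ) := by
      rw [hc1', hc2']
      push_cast
      push_cast at hstrict
      linarith
    exact_mod_cast hfin
  · -- bound
    intro c hc
    have hm := (mem_skewCells hl).1 hc
    obtain ⟨h1, h2, h3, h4⟩ := hm
    obtain ⟨w, hg, hw, hF⟩ := glue_spec hn hl hval hc (by omega)
    rw [hg]
    have hden : 0 < n + c.2 - c.1 := by omega
    rw [Nat.div_lt_iff_lt_mul hden]
    calc w < m * ((n:ℤ) + ((c.2:ℤ) - c.1)).toNat := hw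
      _ = m * (n + c.2 - c.1) := by congr 1; omega

lemma split_glue (hn : e ≤ n) (hl : ∀ i j, 1 ≤ i → i ≤ j → l j ≤ l i)
    (hsub : ∀ i, 1 ≤ i → mu i ≤ l i) (hΛ : Λ = l 1)
    {T : (ℕ×ℕ) → ℕ} (hT : T ∈ LHTb n m (skewCells l mu e)) :
    glue n e l mu (splitT n m e Λ l mu T) = T := by
  funext c
  by_cases hc : c.1 - 1 < e ∧ c ∈ skewCells l mu e
  · obtain ⟨hie, hcm⟩ := hc
    have hm := (mem_skewCells hl).1 hcm
    obtain ⟨h1, h2, h3, h4⟩ := hm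
    have hval := fun i => splitT_valid hn hl hsub hΛ hT i
    obtain ⟨w, hg, hw, hF⟩ := glue_spec hn hl hval hcm hie
    rw [hg]
    have hAd : Ai mu (⟨c.1 - 1, hie⟩ : Fin e) < (c.2:ℤ) - c.1 := by
      rw [Ai_eq h1 hie]; omega
    have hBd : (c.2:ℤ) - c.1 ≤ Bi l (⟨c.1 - 1, hie⟩ : Fin e) := by
      rw [Bi_eq h1 hie]; omega
    have hreal := splitT_real (m := m) (Λ := Λ) (T := T) hn (⟨c.1 - 1, hie⟩ : Fin e) hAd hBd
    rw [hreal] at hF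
    have hden : (0:ℚ) < (n:ℚ) + ((c.2:ℤ) - (c.1:ℤ)) := by
      have h0 : (0:ℤ) < (n:ℤ) + ((c.2:ℤ) - c.1) := by omega
      exact_mod_cast h0
    have hcell : (⟨c.1 - 1, hie⟩ : Fin e).1 + 1 = c.1 := by dsimp only; omega
    rw [hcell] at hF
    have harg : mu c.1 + (((c.2:ℤ) - c.1) - Ai mu (⟨c.1 - 1, hie⟩ : Fin e)).toNat = c.2 := by
      rw [Ai_eq h1 hie]
      omega
    rw [harg] at hF
    have hne : (n:ℚ) + (((c.2:ℤ) - (c.1:ℤ) : ℤ) : ℚ) ≠ 0 := by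
      have h0 : (0:ℤ) < (n:ℤ) + ((c.2:ℤ) - c.1) := by omega
      have : (0:ℚ) < (n:ℚ) + (((c.2:ℤ) - (c.1:ℤ) : ℤ) : ℚ) := by exact_mod_cast h0
      linarith
    have heq : (T (c.1, c.2) : ℚ) = (w : ℚ) := div_cancel_inj hne hF
    have heq2 : T (c.1, c.2) = w := by exact_mod_cast heq
    rw [← heq2]
  · unfold glue
    rw [dif_neg hc]
    obtain ⟨hsupp, _, _, _⟩ := hT
    refine (hsupp c fun hcm => hc ⟨?_, hcm⟩).symm
    have := (mem_skewCells hl).1 hcm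
    omega

end JTLGV
namespace JTLGV
open Finset MvPolynomial
open scoped Classical

variable {n m e Λ : ℕ} {l mu : ℕ → ℕ}

lemma skew_biUnion (hl : ∀ i j, 1 ≤ i → i ≤ j → l j ≤ l i) :
    skewCells l mu e = Finset.univ.biUnion (fun i : Fin e =>
      (Finset.Icc (mu (i.1+1) + 1) (l (i.1+1))).image (fun j => (i.1 + 1, j))) := by
  ext c
  rw [mem_skewCells hl, Finset.mem_biUnion]
  constructor
  · rintro ⟨h1, h2, h3, h4⟩
    refine ⟨⟨c.1 - 1, by omega⟩, Finset.mem_univ _, ?_⟩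
    rw [Finset.mem_image]
    refine ⟨c.2, ?_, ?_⟩
    · rw [Finset.mem_Icc]
      dsimp only
      rw [show c.1 - 1 + 1 = c.1 from by omega]
      omega
    · dsimp only
      rw [show c.1 - 1 + 1 = c.1 from by omega]
  · rintro ⟨i, _, hmem⟩
    rw [Finset.mem_image] at hmem
    obtain ⟨j, hj, rfl⟩ := hmem
    rw [Finset.mem_Icc] at hj
    have hie : i.1 < e := i.2
    dsimp only
    exact ⟨by omega, by omega, by omega, by omega⟩

lemma glue_weight (hn : e ≤ n) (hl : ∀ i j, 1 ≤ i → i ≤ j → l j ≤ l i)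
    {t : Fin e → ℤ → ℚ} (hval : ∀ i : Fin e, SValid n m e Λ (Ai mu i) (Bi l i) (t i)) :
    ∏ c ∈ skewCells l mu e, (X (glue n e l mu t c / (n + c.2 - c.1)) : MvPolynomial ℕ ℤ)
      = ∏ i : Fin e, wtS n (Ai mu i) (Bi l i) (t i) := by
  rw [skew_biUnion (mu := mu) (e := e) hl, Finset.prod_biUnion]
  · refine Finset.prod_congr rfl fun i _ => ?_
    rw [Finset.prod_image (fun x _ y _ h => by
      have h2 : ((i.1 + 1, x) : ℕ × ℕ).2 = ((i.1 + 1, y) : ℕ × ℕ).2 := by rw [h]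
      exact h2)]
    unfold wtS
    have hAi : Ai mu i = (mu (i.1+1) : ℤ) - ((i.1:ℤ)+1) := rfl
    have hBi : Bi l i = (l (i.1+1) : ℤ) - ((i.1:ℤ)+1) := rfl
    have hie : i.1 < e := i.2
    refine Finset.prod_nbij' (fun j => (j:ℤ) - ((i.1:ℤ)+1)) (fun d => (d + i.1 + 1).toNat)
      ?_ ?_ ?_ ?_ ?_
    · intro j hj
      rw [Finset.mem_Icc] at hj ⊢
      omega
    · intro d hd
      rw [Finset.mem_Icc] at hd ⊢
      omega
    · intro j hj
      rw [Finset.mem_Icc] at hj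
      omega
    · intro d hd
      rw [Finset.mem_Icc] at hd
      omega
    · intro j hj
      rw [Finset.mem_Icc] at hj
      have hcm : ((i.1 + 1, j) : ℕ × ℕ) ∈ skewCells l mu e := by
        rw [mem_skewCells hl]
        dsimp only
        exact ⟨by omega, by omega, by omega, by omega⟩
      have hie2 : ((i.1 + 1, j) : ℕ × ℕ).1 - 1 < e := by dsimp only; omega
      obtain ⟨w, hg, hw, hF⟩ := glue_spec hn hl hval hcm hie2
      have hfineq : (⟨((i.1 + 1, j) : ℕ × ℕ).1 - 1, hie2⟩ : Fin e) = i := by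
        apply Fin.ext
        show (i.1 + 1) - 1 = i.1
        omega
      rw [hfineq] at hF
      dsimp only at hF hg ⊢
      have harg : ((j:ℤ) - ((i.1 + 1 : ℕ) : ℤ)) = (j:ℤ) - ((i.1:ℤ)+1) := by
        push_cast; ring
      rw [harg] at hF
      rw [hg]
      congr 1
      rw [hF, floor_real hn (hval i).hAlow (d := (j:ℤ) - ((i.1:ℤ)+1)) (by omega)]
      congr 1
      omega
  · intro i _ j _ hij
    simp only [Function.onFun]
    rw [Finset.disjoint_left]
    intro c hc1 hc2
    rw [Finset.mem_image] at hc1 hc2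
    obtain ⟨x, _, hx⟩ := hc1
    obtain ⟨y, _, hy⟩ := hc2
    apply hij
    apply Fin.ext
    have h1 : c.1 = i.1 + 1 := by rw [← hx]
    have h2 : c.1 = j.1 + 1 := by rw [← hy]
    omega

lemma glue_inj (hn : e ≤ n) (hl : ∀ i j, 1 ≤ i → i ≤ j → l j ≤ l i)
    {t t' : Fin e → ℤ → ℚ}
    (hval : ∀ i : Fin e, SValid n m e Λ (Ai mu i) (Bi l i) (t i))
    (hval' : ∀ i : Fin e, SValid n m e Λ (Ai mu i) (Bi l i) (t' i))
    (heq : glue n e l mu t = glue n e l mu t') : t = t' := by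
  funext i d
  have hAi : Ai mu i = (mu (i.1+1) : ℤ) - ((i.1:ℤ)+1) := rfl
  have hBi : Bi l i = (l (i.1+1) : ℤ) - ((i.1:ℤ)+1) := rfl
  have hie : i.1 < e := i.2
  rcases le_or_gt d (Ai mu i) with h1 | h1
  · rw [(hval i).hhead d h1, (hval' i).hhead d h1]
  · rcases le_or_gt d (Bi l i) with h2 | h2
    · set c : ℕ × ℕ := (i.1 + 1, (d + i.1 + 1).toNat) with hc
      have hc1 : c.1 = i.1 + 1 := rfl
      have hc2' : c.2 = (d + i.1 + 1).toNat := rfl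
      have hc2 : ((c.2 : ℕ) : ℤ) = d + i.1 + 1 := by rw [hc2']; omega
      have hcm : c ∈ skewCells l mu e := by
        rw [mem_skewCells hl, hc1, hc2']
        refine ⟨by omega, by omega, by omega, by omega⟩
      have hie2 : c.1 - 1 < e := by omega
      obtain ⟨w, hg, hw, hF⟩ := glue_spec hn hl hval hcm hie2
      obtain ⟨w', hg', hw', hF'⟩ := glue_spec hn hl hval' hcm hie2
      have hfineq : (⟨c.1 - 1, hie2⟩ : Fin e) = i := by
        apply Fin.ext
        show c.1 - 1 = i.1
        omega
      have hdq : ((c.2 : ℤ) - (c.1 : ℤ)) = d := by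
        rw [hc2, hc1]
        push_cast
        ring
      rw [hfineq, hdq] at hF hF'
      have hww : w = w' := by
        rw [← hg, ← hg', heq]
      rw [hF, hF', hww]
    · rw [(hval i).htail d h2, (hval' i).htail d h2]

end JTLGV
namespace JTLGV
open Finset MvPolynomial
open scoped Classical

variable {n m e Λ : ℕ} {l mu : ℕ → ℕ}

/-- the summation domain for the signed sum of strand families -/
noncomputable def DOM (n m e Λ : ℕ) (l mu : ℕ → ℕ) : Finset ((_ : Equiv.Perm (Fin e)) × (Fin e → ℤ → ℚ)) :=
  Finset.univ.sigma fun σ => Fintype.piFinset fun i => strandFinset n m e Λ (Ai mu i) (Bi l (σ i))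

lemma mem_DOM (hn : e ≤ n) {x : (_ : Equiv.Perm (Fin e)) × (Fin e → ℤ → ℚ)} :
    x ∈ DOM n m e Λ l mu ↔ ∀ i, SValid n m e Λ (Ai mu i) (Bi l (x.1 i)) (x.2 i) := by
  unfold DOM
  rw [Finset.mem_sigma]
  simp only [Finset.mem_univ, true_and, Fintype.mem_piFinset]
  exact forall_congr' fun i => mem_strandFinset hn

/-- the signed weight of a strand family -/
noncomputable def sgnwt (n m e Λ : ℕ) (l mu : ℕ → ℕ)
    (x : (_ : Equiv.Perm (Fin e)) × (Fin e → ℤ → ℚ)) : MvPolynomial ℕ ℤ :=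
  (((Equiv.Perm.sign x.1 : ℤ) : ℤ) : MvPolynomial ℕ ℤ)
    * ∏ i, wtS n (Ai mu i) (Bi l (x.1 i)) (x.2 i)

lemma det_eq (hn : e ≤ n) (hl : ∀ i j, 1 ≤ i → i ≤ j → l j ≤ l i) (hΛ : Λ = l 1) :
    Matrix.det (Matrix.of fun i j : Fin e =>
      lhtRowGF ((n + 1 + Ai mu j).toNat) m (Bi l i - Ai mu j)
        (fun r => (X r : MvPolynomial ℕ ℤ)))
      = ∑ x ∈ DOM n m e Λ l mu, sgnwt n m e Λ l mu x := by
  rw [Matrix.det_apply']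
  unfold DOM sgnwt
  rw [Finset.sum_sigma]
  refine Finset.sum_congr rfl fun σ _ => ?_
  have hstep : ∏ i : Fin e, (Matrix.of fun i j : Fin e =>
      lhtRowGF ((n + 1 + Ai mu j).toNat) m (Bi l i - Ai mu j)
        (fun r => (X r : MvPolynomial ℕ ℤ))) (σ i) i
      = ∏ i : Fin e, ∑ F ∈ strandFinset n m e Λ (Ai mu i) (Bi l (σ i)),
          wtS n (Ai mu i) (Bi l (σ i)) F := by
    refine Finset.prod_congr rfl fun i _ => ?_
    rw [Matrix.of_apply]
    refine rowGF_eq_strandSum hn (Ai_ge i) ?_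
    rw [hΛ]
    exact Bi_le hl (σ i)
  rw [hstep, Finset.prod_univ_sum, Finset.mul_sum]

lemma prod_split_two {M : Type*} [CommMonoid M] (f : Fin e → M) {a b : Fin e} (hab : a ≠ b) :
    ∏ i, f i = f a * f b * ∏ i ∈ (Finset.univ.erase a).erase b, f i := by
  calc ∏ i, f i = f a * ∏ i ∈ Finset.univ.erase a, f i :=
        (Finset.mul_prod_erase _ f (Finset.mem_univ a)).symm
    _ = f a * (f b * ∏ i ∈ (Finset.univ.erase a).erase b, f i) := by
        rw [← Finset.mul_prod_erase _ f
          (Finset.mem_erase.2 ⟨hab.symm, Finset.mem_univ b⟩)]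
    _ = f a * f b * ∏ i ∈ (Finset.univ.erase a).erase b, f i := (mul_assoc _ _ _).symm

lemma invol_all (hn : e ≤ n) (hl : ∀ i j, 1 ≤ i → i ≤ j → l j ≤ l i)
    (hmu : ∀ i j, 1 ≤ i → i ≤ j → mu j ≤ mu i)
    {σ : Equiv.Perm (Fin e)} {t : Fin e → ℤ → ℚ}
    (hval : ∀ i, SValid n m e Λ (Ai mu i) (Bi l (σ i)) (t i))
    {D : ℤ} {a b : Fin e} (hsel : swapSel t D a b) :
    (∀ i, SValid n m e Λ (Ai mu i) (Bi l ((σ * Equiv.swap a b) i)) (tupSwap t D a b i)) ∧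
    swapSel (tupSwap t D a b) D a b ∧
    ((((Equiv.Perm.sign (σ * Equiv.swap a b) : ℤ) : ℤ) : MvPolynomial ℕ ℤ)
        * ∏ i, wtS n (Ai mu i) (Bi l ((σ * Equiv.swap a b) i)) (tupSwap t D a b i))
      = - ((((Equiv.Perm.sign σ : ℤ) : ℤ) : MvPolynomial ℕ ℤ)
        * ∏ i, wtS n (Ai mu i) (Bi l (σ i)) (t i)) := by
  obtain ⟨hab, hbadab⟩ := sel_bad hsel
  have habne : a ≠ b := ne_of_lt hab
  obtain ⟨hD1, hD2, hD3⟩ := sel_D_props hn hmu hl hval hsel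
  have hjun2 := sel_not_bad_prev hsel
  have hσa : (σ * Equiv.swap a b) a = σ b := by
    rw [Equiv.Perm.mul_apply, Equiv.swap_apply_left]
  have hσb : (σ * Equiv.swap a b) b = σ a := by
    rw [Equiv.Perm.mul_apply, Equiv.swap_apply_right]
  have hσo : ∀ i, i ≠ a → i ≠ b → (σ * Equiv.swap a b) i = σ i := fun i h1 h2 => by
    rw [Equiv.Perm.mul_apply, Equiv.swap_apply_of_ne_of_ne h1 h2]
  have hAba : Ai mu b < Ai mu a := Ai_lt_Ai hmu hab
  have hvala : SValid n m e Λ (Ai mu a) (Bi l (σ b)) (tupSwap t D a b a) := by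
    rw [tupSwap_a habne]
    exact splice_valid_a (hval a) (hval b) hAba hD1 hD2 hD3 hjun2
  have hvalb : SValid n m e Λ (Ai mu b) (Bi l (σ a)) (tupSwap t D a b b) := by
    rw [tupSwap_b]
    exact splice_valid_b (hval a) (hval b) hAba hD1 hD2 hD3 hbadab
  refine ⟨?_, swapSel_tupSwap hsel (hval b).hmono, ?_⟩
  · intro i
    by_cases h1 : i = a
    · subst h1; rw [hσa]; exact hvala
    · by_cases h2 : i = b
      · subst h2; rw [hσb]; exact hvalb
      · rw [hσo i h1 h2, tupSwap_other h1 h2]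
        exact hval i
  · have hsign : ((Equiv.Perm.sign (σ * Equiv.swap a b) : ℤ) : ℤ)
        = - (Equiv.Perm.sign σ : ℤ) := by
      rw [Equiv.Perm.sign_mul, Equiv.Perm.sign_swap habne]
      simp
    have hwt : (∏ i, wtS n (Ai mu i) (Bi l ((σ * Equiv.swap a b) i)) (tupSwap t D a b i))
        = ∏ i, wtS n (Ai mu i) (Bi l (σ i)) (t i) := by
      rw [prod_split_two (f := fun i => wtS n (Ai mu i) (Bi l ((σ * Equiv.swap a b) i))
            (tupSwap t D a b i)) habne,
          prod_split_two (f := fun i => wtS n (Ai mu i) (Bi l (σ i)) (t i)) habne]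
      have hrest : ∏ i ∈ (Finset.univ.erase a).erase b,
          wtS n (Ai mu i) (Bi l ((σ * Equiv.swap a b) i)) (tupSwap t D a b i)
          = ∏ i ∈ (Finset.univ.erase a).erase b, wtS n (Ai mu i) (Bi l (σ i)) (t i) := by
        refine Finset.prod_congr rfl fun i hi => ?_
        rw [Finset.mem_erase, Finset.mem_erase] at hi
        obtain ⟨h2, h1, _⟩ := hi
        rw [hσo i h1 h2, tupSwap_other h1 h2]
      rw [hrest]
      have hpair : wtS n (Ai mu a) (Bi l ((σ * Equiv.swap a b) a)) (tupSwap t D a b a)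
            * wtS n (Ai mu b) (Bi l ((σ * Equiv.swap a b) b)) (tupSwap t D a b b)
          = wtS n (Ai mu a) (Bi l (σ a)) (t a) * wtS n (Ai mu b) (Bi l (σ b)) (t b) := by
        rw [hσa, hσb, tupSwap_a habne, tupSwap_b]
        exact wtS_splice (t a) (t b) hAba hD1 hD2 hD3
      rw [hpair]
    rw [hwt, hsign]
    push_cast
    ring

lemma swapSel_exists' (hn : e ≤ n) (hmu : ∀ i j, 1 ≤ i → i ≤ j → mu j ≤ mu i)
    {σ : Equiv.Perm (Fin e)} {t : Fin e → ℤ → ℚ}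
    (hval : ∀ i, SValid n m e Λ (Ai mu i) (Bi l (σ i)) (t i))
    (hbad : ∃ d : ℤ, ∃ a b : Fin e, a < b ∧ t a d ≤ t b (d - 1)) :
    ∃ p : ℤ × Fin e × Fin e, swapSel t p.1 p.2.1 p.2.2 := by
  obtain ⟨D, a, b, h⟩ := swapSel_exists hn hmu hval hbad
  exact ⟨(D, a, b), h⟩

lemma bad_sum_zero (hn : e ≤ n) (hl : ∀ i j, 1 ≤ i → i ≤ j → l j ≤ l i)
    (hmu : ∀ i j, 1 ≤ i → i ≤ j → mu j ≤ mu i) :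
    ∑ x ∈ (DOM n m e Λ l mu).filter
      (fun x => ∃ d : ℤ, ∃ a b : Fin e, a < b ∧ x.2 a d ≤ x.2 b (d-1)),
      sgnwt n m e Λ l mu x = 0 := by
  set P : ((_ : Equiv.Perm (Fin e)) × (Fin e → ℤ → ℚ)) → Prop :=
    fun x => ∃ d : ℤ, ∃ a b : Fin e, a < b ∧ x.2 a d ≤ x.2 b (d-1) with hP
  have hdata : ∀ (x : (_ : Equiv.Perm (Fin e)) × (Fin e → ℤ → ℚ))
      (hx : x ∈ (DOM n m e Λ l mu).filter P),
      ∃ p : ℤ × Fin e × Fin e, swapSel x.2 p.1 p.2.1 p.2.2 := by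
    intro x hx
    rw [Finset.mem_filter] at hx
    exact swapSel_exists' hn hmu ((mem_DOM hn).1 hx.1) hx.2
  refine Finset.sum_involution
    (fun x hx => ⟨x.1 * Equiv.swap (Classical.choose (hdata x hx)).2.1
        (Classical.choose (hdata x hx)).2.2,
      tupSwap x.2 (Classical.choose (hdata x hx)).1 (Classical.choose (hdata x hx)).2.1
        (Classical.choose (hdata x hx)).2.2⟩)
    ?_ ?_ ?_ ?_
  · intro x hx
    obtain ⟨hmem, hbadx⟩ := Finset.mem_filter.1 hx
    have hval := (mem_DOM hn).1 hmem
    have hspec := Classical.choose_spec (hdata x hx)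
    have hall := invol_all hn hl hmu hval hspec
    unfold sgnwt
    rw [hall.2.2]
    ring
  · intro x hx _
    intro hcon
    have h1 := congrArg Sigma.fst hcon
    dsimp only at h1
    have hspec := Classical.choose_spec (hdata x hx)
    have hab := (sel_bad hspec).1
    have h2 : Equiv.swap (Classical.choose (hdata x hx)).2.1
        (Classical.choose (hdata x hx)).2.2 = 1 := by
      have := mul_left_cancel (a := x.1)
        (b := Equiv.swap (Classical.choose (hdata x hx)).2.1 (Classical.choose (hdata x hx)).2.2)
        (c := 1) (by rw [mul_one]; exact h1)
      exact this
    rw [Equiv.swap_eq_one_iff] at h2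
    exact absurd h2 (ne_of_lt hab)
  · intro x hx
    obtain ⟨hmem, hbadx⟩ := Finset.mem_filter.1 hx
    have hval := (mem_DOM hn).1 hmem
    have hspec := Classical.choose_spec (hdata x hx)
    have hall := invol_all hn hl hmu hval hspec
    rw [Finset.mem_filter]
    constructor
    · exact (mem_DOM hn).2 hall.1
    · obtain ⟨⟨hb, _⟩, _, _⟩ := hall.2.1
      exact ⟨_, hb⟩
  · intro x hx
    obtain ⟨hmem, hbadx⟩ := Finset.mem_filter.1 hx
    have hval := (mem_DOM hn).1 hmem
    have hspec := Classical.choose_spec (hdata x hx)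
    have hall := invol_all hn hl hmu hval hspec
    set gx : (_ : Equiv.Perm (Fin e)) × (Fin e → ℤ → ℚ) :=
      ⟨x.1 * Equiv.swap (Classical.choose (hdata x hx)).2.1
        (Classical.choose (hdata x hx)).2.2,
      tupSwap x.2 (Classical.choose (hdata x hx)).1 (Classical.choose (hdata x hx)).2.1
        (Classical.choose (hdata x hx)).2.2⟩ with hgx
    have hgmem : gx ∈ (DOM n m e Λ l mu).filter P := by
      rw [Finset.mem_filter]
      exact ⟨(mem_DOM hn).2 hall.1, ⟨_, (hall.2.1).1.1⟩⟩
    have hspec2 := Classical.choose_spec (hdata gx hgmem)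
    have huniq := swapSel_unique hspec2 hall.2.1
    obtain ⟨hDeq, haeq, hbeq⟩ := huniq
    have hab := (sel_bad hspec).1
    have habne : (Classical.choose (hdata x hx)).2.1 ≠ (Classical.choose (hdata x hx)).2.2 :=
      ne_of_lt hab
    show (⟨gx.1 * Equiv.swap (Classical.choose (hdata gx hgmem)).2.1
        (Classical.choose (hdata gx hgmem)).2.2,
      tupSwap gx.2 (Classical.choose (hdata gx hgmem)).1 (Classical.choose (hdata gx hgmem)).2.1
        (Classical.choose (hdata gx hgmem)).2.2⟩ :
        (_ : Equiv.Perm (Fin e)) × (Fin e → ℤ → ℚ)) = x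
    rw [hDeq, haeq, hbeq]
    have hfst : gx.1 * Equiv.swap (Classical.choose (hdata x hx)).2.1
        (Classical.choose (hdata x hx)).2.2 = x.1 := by
      rw [hgx]
      dsimp only
      rw [mul_assoc, Equiv.swap_mul_self, mul_one]
    have hsnd : tupSwap gx.2 (Classical.choose (hdata x hx)).1
        (Classical.choose (hdata x hx)).2.1 (Classical.choose (hdata x hx)).2.2 = x.2 := by
      rw [hgx]
      dsimp only
      exact tupSwap_invol habne
    rw [hfst, hsnd]

end JTLGV
namespace JTLGV
open Finset MvPolynomial
open scoped Classical

variable {n m e Λ : ℕ} {l mu : ℕ → ℕ}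

lemma fixed_sum (hn : e ≤ n) (hl : ∀ i j, 1 ≤ i → i ≤ j → l j ≤ l i)
    (hmu : ∀ i j, 1 ≤ i → i ≤ j → mu j ≤ mu i)
    (hsub : ∀ i, 1 ≤ i → mu i ≤ l i) (hΛ : Λ = l 1) :
    ∑ x ∈ (DOM n m e Λ l mu).filter
      (fun x => ¬ ∃ d : ℤ, ∃ a b : Fin e, a < b ∧ x.2 a d ≤ x.2 b (d-1)),
      sgnwt n m e Λ l mu x
    = lhtGF n m (skewCells l mu e) (fun r => (X r : MvPolynomial ℕ ℤ)) := by
  set P : ((_ : Equiv.Perm (Fin e)) × (Fin e → ℤ → ℚ)) → Prop :=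
    fun x => ¬ ∃ d : ℤ, ∃ a b : Fin e, a < b ∧ x.2 a d ≤ x.2 b (d-1) with hPdef
  have hfix : ∀ x ∈ (DOM n m e Λ l mu).filter P, x.1 = 1 ∧
      (∀ i, SValid n m e Λ (Ai mu i) (Bi l i) (x.2 i)) ∧
      (∀ a b : Fin e, a < b → ∀ d : ℤ, x.2 b (d - 1) < x.2 a d) := by
    intro x hx
    obtain ⟨hmem, hnb⟩ := Finset.mem_filter.1 hx
    have hval := (mem_DOM hn).1 hmem
    have hσ : x.1 = 1 := noBad_sigma_id hn hl hval hnb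
    refine ⟨hσ, fun i => ?_, fun a b hab d => ?_⟩
    · have := hval i
      rwa [hσ, Equiv.Perm.one_apply] at this
    · by_contra hc
      push_neg at hc
      exact hnb ⟨d, a, b, hab, hc⟩
  have hset : LHTb n m (skewCells l mu e)
      = ↑(((DOM n m e Λ l mu).filter P).image (fun x => glue n e l mu x.2)) := by
    ext T
    simp only [Finset.coe_image, Set.mem_image, Finset.mem_coe]
    constructor
    · intro hT
      refine ⟨⟨1, splitT n m e Λ l mu T⟩, ?_, split_glue hn hl hsub hΛ hT⟩
      rw [Finset.mem_filter]
      constructor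
      · rw [mem_DOM hn]
        intro i
        have hval := splitT_valid hn hl hsub hΛ hT i
        show SValid n m e Λ (Ai mu i) (Bi l ((1 : Equiv.Perm (Fin e)) i)) _
        rwa [Equiv.Perm.one_apply]
      · rw [hPdef]
        intro ⟨d, a, b, hab, hle⟩
        exact absurd hle (not_le.2 (splitT_noBad hn hl hmu hsub hΛ hT a b hab d))
    · rintro ⟨x, hx, rfl⟩
      obtain ⟨hσ, hval', hnb'⟩ := hfix x hx
      exact glue_mem hn hl hval' hnb'
  unfold lhtGF
  rw [hset, finsum_mem_coe_finset, Finset.sum_image ?hinj]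
  case hinj =>
    intro x hx y hy hgeq
    obtain ⟨hσx, hvx, _⟩ := hfix x hx
    obtain ⟨hσy, hvy, _⟩ := hfix y hy
    have ht := glue_inj hn hl hvx hvy hgeq
    cases x with
    | mk x1 x2 =>
      cases y with
      | mk y1 y2 =>
        dsimp only at hσx hσy ht
        rw [hσx, hσy, ht]
  refine Finset.sum_congr rfl fun x hx => ?_
  obtain ⟨hσ, hval', _⟩ := hfix x hx
  unfold sgnwt
  rw [hσ]
  have hBs : ∀ i : Fin e, Bi l ((1 : Equiv.Perm (Fin e)) i) = Bi l i := fun i => by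
    rw [Equiv.Perm.one_apply]
  simp only [Equiv.Perm.sign_one, Equiv.Perm.one_apply]
  rw [← glue_weight hn hl hval']
  simp

end JTLGV
/-- **Jacobi–Trudi identity for lecture hall tableaux.**
`L^n_{λ/μ}(x_0,…,x_{m-1}) = det( L^{μ_j+n-j+1}_{(λ_i-μ_j-i+j)}(x_0,…,x_{m-1}) )_{1≤i,j≤ℓ}`,
where for a one-row shape `(k)` one sets `L^N_{(k)} = 1` if `k = 0` and `0` if `k < 0`.
Here `X r` denotes `x_r`. -/
theorem lht_jacobi_trudi (n m ℓ : ℕ) (l mu : ℕ → ℕ)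
    (hl : ∀ i j, 1 ≤ i → i ≤ j → l j ≤ l i)
    (hl0 : ∀ i, ℓ < i → l i = 0)
    (hlpos : ∀ i, 1 ≤ i → i ≤ ℓ → 0 < l i)
    (hmu : ∀ i j, 1 ≤ i → i ≤ j → mu j ≤ mu i)
    (hsub : ∀ i, 1 ≤ i → mu i ≤ l i)
    (hn : ℓ ≤ n) :
    lhtGF n m (skewCells l mu ℓ) (fun r => (MvPolynomial.X r : MvPolynomial ℕ ℤ)) =
      Matrix.det (Matrix.of fun i j : Fin ℓ =>
        lhtRowGF (mu (j.1 + 1) + n - (j.1 + 1) + 1) m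
          ((l (i.1 + 1) : ℤ) - (mu (j.1 + 1) : ℤ) - ((i.1 : ℤ) + 1) + ((j.1 : ℤ) + 1))
          (fun r => (MvPolynomial.X r : MvPolynomial ℕ ℤ))) := by
  classical
  have hMeq : (Matrix.of fun i j : Fin ℓ =>
      lhtRowGF (mu (j.1 + 1) + n - (j.1 + 1) + 1) m
        ((l (i.1 + 1) : ℤ) - (mu (j.1 + 1) : ℤ) - ((i.1 : ℤ) + 1) + ((j.1 : ℤ) + 1))
        (fun r => (MvPolynomial.X r : MvPolynomial ℕ ℤ)))
      = Matrix.of fun i j : Fin ℓ =>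
        lhtRowGF ((n + 1 + JTLGV.Ai mu j).toNat) m (JTLGV.Bi l i - JTLGV.Ai mu j)
          (fun r => (MvPolynomial.X r : MvPolynomial ℕ ℤ)) := by
    ext i j
    simp only [Matrix.of_apply]
    have hAj : JTLGV.Ai mu j = (mu (j.1+1) : ℤ) - ((j.1:ℤ)+1) := rfl
    have hBi : JTLGV.Bi l i = (l (i.1+1) : ℤ) - ((i.1:ℤ)+1) := rfl
    have hje : j.1 < ℓ := j.2
    rw [show mu (j.1 + 1) + n - (j.1 + 1) + 1 = (n + 1 + JTLGV.Ai mu j).toNat from by omega]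
    rw [show (l (i.1 + 1) : ℤ) - (mu (j.1 + 1) : ℤ) - ((i.1 : ℤ) + 1) + ((j.1 : ℤ) + 1)
        = JTLGV.Bi l i - JTLGV.Ai mu j from by rw [hAj, hBi]; ring]
  rw [hMeq, JTLGV.det_eq (Λ := l 1) hn hl rfl]
  rw [← Finset.sum_filter_add_sum_filter_not (JTLGV.DOM n m ℓ (l 1) l mu)
    (fun x => ∃ d : ℤ, ∃ a b : Fin ℓ, a < b ∧ x.2 a d ≤ x.2 b (d-1))
    (JTLGV.sgnwt n m ℓ (l 1) l mu)]
  rw [JTLGV.bad_sum_zero hn hl hmu, zero_add,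
    JTLGV.fixed_sum hn hl hmu hsub rfl]
end
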